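/- arXiv:2006.01616 — 2 statements merged into one kernel-verified Lean document; each statement's English description precedes it below -/
import Mathlib

section
/- Let G be a connected graph with minimum degree 1 and girth at least 15 in which all maximal open packings have the same cardinality. Then no two single star support vertices of G are at distance exactly 3, and no two single star support vertices are at distance exactly 4. -/
open SimpleGraph

/-- The open neighborhood graph of `G`: distinct vertices are adjacent iff they have a
common neighbor in `G`. -/
def ong {V : Type*} (G : SimpleGraph V) : SimpleGraph V where
  Adj u v := u ≠ v ∧ ∃ w, G.Adj u w ∧ G.Adj v w
  symm := ⟨by rintro u v ⟨h, w, h1, h2⟩; exact ⟨h.symm, w, h2, h1⟩⟩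
  loopless := ⟨by rintro u ⟨h, -⟩; exact h rfl⟩

/-- A set of vertices is an open packing if no two distinct members have a common neighbor. -/
def IsOpenPacking {V : Type*} (G : SimpleGraph V) (P : Set V) : Prop :=
  ∀ ⦃u⦄, u ∈ P → ∀ ⦃v⦄, v ∈ P → u ≠ v → ∀ w, ¬(G.Adj u w ∧ G.Adj v w)

/-- An independent set of vertices. -/
def IsIndep {V : Type*} (G : SimpleGraph V) (s : Set V) : Prop :=
  s.Pairwise fun u v => ¬ G.Adj u v

/-- All maximal open packings of `G` have the same cardinality. -/
def InU {V : Type*} (G : SimpleGraph V) : Prop :=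
  ∀ P Q : Set V, Maximal (IsOpenPacking G) P → Maximal (IsOpenPacking G) Q →
    P.ncard = Q.ncard

/-- All maximal independent sets of `G` have the same cardinality. -/
def WellCovered {V : Type*} (G : SimpleGraph V) : Prop :=
  ∀ P Q : Set V, Maximal (IsIndep G) P → Maximal (IsIndep G) Q → P.ncard = Q.ncard

/-- A leaf is a vertex with exactly one neighbor. -/
def IsLeaf {V : Type*} (G : SimpleGraph V) (v : V) : Prop :=
  ∃ u, G.neighborSet v = {u}

/-- A support vertex is one adjacent to a leaf. -/
def IsSupport {V : Type*} (G : SimpleGraph V) (s : V) : Prop :=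
  ∃ l, G.neighborSet l = {s}

/-- A single star support vertex: a support vertex adjacent to no other support vertex. -/
def IsSingleStarSupport {V : Type*} (G : SimpleGraph V) (s : V) : Prop :=
  IsSupport G s ∧ ∀ t, G.Adj s t → ¬ IsSupport G t



namespace OP
variable {V : Type*} {G : SimpleGraph V}

def chainWalk (x : ℕ → V) (hadj : ∀ i, G.Adj (x i) (x (i+1))) : ∀ (k m : ℕ), G.Walk (x k) (x (k+m))
  | _, 0 => Walk.nil
  | k, (m+1) =>
      (Walk.cons (hadj k) (chainWalk x hadj (k+1) m)).copy rfl (by congr 1; omega)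

lemma chainWalk_length (x : ℕ → V) (hadj : ∀ i, G.Adj (x i) (x (i+1))) :
    ∀ k m, (chainWalk x hadj k m).length = m := by
  intro k m
  induction m generalizing k with
  | zero => simp [chainWalk]
  | succ m ih => simp [chainWalk, ih (k+1)]

lemma mem_chainWalk_support (x : ℕ → V) (hadj : ∀ i, G.Adj (x i) (x (i+1))) :
    ∀ k m v, v ∈ (chainWalk x hadj k m).support → ∃ j ≤ m, v = x (k+j) := by
  intro k m
  induction m generalizing k with
  | zero =>
    intro v hv
    simp [chainWalk] at hv
    exact ⟨0, le_rfl, by simpa using hv⟩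
  | succ m ih =>
    intro v hv
    simp only [chainWalk, Walk.support_copy, Walk.support_cons, List.mem_cons] at hv
    rcases hv with rfl | hv
    · exact ⟨0, by omega, by simp⟩
    · obtain ⟨j, hj, rfl⟩ := ih (k+1) v hv
      exact ⟨j+1, by omega, by congr 1; omega⟩

lemma mem_chainWalk_edges (x : ℕ → V) (hadj : ∀ i, G.Adj (x i) (x (i+1))) :
    ∀ k m e, e ∈ (chainWalk x hadj k m).edges → ∃ j < m, e = s(x (k+j), x (k+j+1)) := by
  intro k m
  induction m generalizing k with
  | zero => intro e he; simp [chainWalk] at he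
  | succ m ih =>
    intro e he
    simp only [chainWalk, Walk.edges_copy, Walk.edges_cons, List.mem_cons] at he
    rcases he with rfl | he
    · exact ⟨0, by omega, by simp⟩
    · obtain ⟨j, hj, rfl⟩ := ih (k+1) e he
      refine ⟨j+1, by omega, ?_⟩
      rw [show k+(j+1) = k+1+j from by omega, show (k+1+j)+1 = k+1+j+1 from by omega]

lemma chainWalk_isPath (x : ℕ → V) (hadj : ∀ i, G.Adj (x i) (x (i+1))) :
    ∀ k m, (∀ i j, j < i → i ≤ m → x (k+j) ≠ x (k+i)) → (chainWalk x hadj k m).IsPath := by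
  intro k m
  induction m generalizing k with
  | zero => intro _; simp [chainWalk]
  | succ m ih =>
    intro hd
    have hp : (chainWalk x hadj (k+1) m).IsPath := by
      apply ih (k+1)
      intro i j hji hi h
      refine hd (i+1) (j+1) (by omega) (by omega) ?_
      rw [show k+(j+1) = k+1+j from by omega, show k+(i+1) = k+1+i from by omega]
      exact h
    simp only [chainWalk, Walk.isPath_copy]
    apply hp.cons
    intro hmem
    obtain ⟨j, hj, hv⟩ := mem_chainWalk_support x hadj (k+1) m (x k) hmem
    refine hd (j+1) 0 (by omega) (by omega) ?_
    rw [show k+0 = k from by omega, show k+(j+1) = k+1+j from by omega]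
    exact hv

lemma cw_gen (hg : 15 ≤ G.egirth) {n : ℕ} (hn : n ≤ 14) (hpos : 0 < n)
    (x : ℕ → V) (hadj : ∀ i, G.Adj (x i) (x (i+1)))
    (hper : ∀ i, x (i+n) = x i) (hd2 : ∀ i, x i ≠ x (i+2)) : False := by
  classical
  have hD : ∃ d, 0 < d ∧ ∃ i, x i = x (i+d) := ⟨n, hpos, 0, (hper 0).symm⟩
  obtain ⟨hd0, i₀, hi₀⟩ := Nat.find_spec hD
  set d := Nat.find hD with hdd
  have hdle : d ≤ n := Nat.find_le ⟨hpos, 0, (hper 0).symm⟩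
  have hmin : ∀ d', d' < d → ¬(0 < d' ∧ ∃ i, x i = x (i+d')) := fun d' h => Nat.find_min hD h
  have hd3 : 3 ≤ d := by
    by_contra h
    interval_cases d
    · exact absurd hi₀ (by simpa using (hadj i₀).ne)
    · exact hd2 i₀ hi₀
  have hdist : ∀ i j, j < i → i ≤ d - 1 → x ((i₀+1)+j) ≠ x ((i₀+1)+i) := by
    intro i j hji hi h
    exact hmin (i - j) (by omega) ⟨by omega, (i₀+1)+j, by rw [h]; congr 1; omega⟩
  have hp : (chainWalk x hadj (i₀+1) (d-1)).IsPath :=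
    chainWalk_isPath x hadj (i₀+1) (d-1) (fun i j hji hi => hdist i j hji hi)
  have hend : x ((i₀+1)+(d-1)) = x i₀ := by
    rw [show (i₀+1)+(d-1) = i₀+d by omega]; exact hi₀.symm
  set p : G.Walk (x (i₀+1)) (x i₀) := (chainWalk x hadj (i₀+1) (d-1)).copy rfl hend with hpdef
  have hp' : p.IsPath := by rw [hpdef, Walk.isPath_copy]; exact hp
  have he : s(x i₀, x (i₀+1)) ∉ p.edges := by
    intro hmem
    rw [hpdef, Walk.edges_copy] at hmem
    obtain ⟨j, hj, hej⟩ := mem_chainWalk_edges x hadj (i₀+1) (d-1) _ hmem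
    rw [Sym2.eq_iff] at hej
    rcases hej with ⟨h1, h2⟩ | ⟨h1, h2⟩
    · exact hmin (j+1) (by omega)
        ⟨by omega, i₀, by rw [show i₀+(j+1) = i₀+1+j from by omega]; exact h1⟩
    · rcases Nat.eq_zero_or_pos j with rfl | hj0
      · exact hd2 i₀ (by rw [show i₀+2 = i₀+1+0+1 from by omega]; exact h1)
      · exact hmin j (by omega) ⟨by omega, i₀+1, h2⟩
  have hc : (Walk.cons (hadj i₀) p).IsCycle := by
    rw [Walk.cons_isCycle_iff]
    exact ⟨hp', he⟩
  have hlen : (Walk.cons (hadj i₀) p).length = d := by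
    simp [hpdef, chainWalk_length]
    omega
  have := le_egirth.mp hg _ _ hc
  rw [hlen] at this
  have : (15 : ℕ) ≤ d := by exact_mod_cast this
  omega


lemma cw3 (hg : 15 ≤ G.egirth) {x0 x1 x2 : V}
    (a0 : G.Adj x0 x1) (a1 : G.Adj x1 x2) (a2 : G.Adj x2 x0)
    (d0 : x0 ≠ x2) (d1 : x1 ≠ x0) (d2 : x2 ≠ x1) : False := by
  apply cw_gen hg (n := 3) (by norm_num) (by norm_num)
      (fun i => [x0,x1,x2].getD (i % 3) x0)
  · intro i
    rw [show (i+1) % 3 = (i % 3 + 1) % 3 from by omega]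
    have h : i % 3 < 3 := Nat.mod_lt _ (by omega)
    set r := i % 3 with hr
    clear_value r
    interval_cases r <;> norm_num [List.getD] <;> assumption
  · intro i
    rw [show (i+3) % 3 = i % 3 from by omega]
  · intro i
    rw [show (i+2) % 3 = (i % 3 + 2) % 3 from by omega]
    have h : i % 3 < 3 := Nat.mod_lt _ (by omega)
    set r := i % 3 with hr
    clear_value r
    interval_cases r <;> norm_num [List.getD] <;> assumption

lemma cw4 (hg : 15 ≤ G.egirth) {x0 x1 x2 x3 : V}
    (a0 : G.Adj x0 x1) (a1 : G.Adj x1 x2) (a2 : G.Adj x2 x3) (a3 : G.Adj x3 x0)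
    (d0 : x0 ≠ x2) (d1 : x1 ≠ x3) (d2 : x2 ≠ x0) (d3 : x3 ≠ x1) : False := by
  apply cw_gen hg (n := 4) (by norm_num) (by norm_num)
      (fun i => [x0,x1,x2,x3].getD (i % 4) x0)
  · intro i
    rw [show (i+1) % 4 = (i % 4 + 1) % 4 from by omega]
    have h : i % 4 < 4 := Nat.mod_lt _ (by omega)
    set r := i % 4 with hr
    clear_value r
    interval_cases r <;> norm_num [List.getD] <;> assumption
  · intro i
    rw [show (i+4) % 4 = i % 4 from by omega]
  · intro i
    rw [show (i+2) % 4 = (i % 4 + 2) % 4 from by omega]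
    have h : i % 4 < 4 := Nat.mod_lt _ (by omega)
    set r := i % 4 with hr
    clear_value r
    interval_cases r <;> norm_num [List.getD] <;> assumption

lemma cw5 (hg : 15 ≤ G.egirth) {x0 x1 x2 x3 x4 : V}
    (a0 : G.Adj x0 x1) (a1 : G.Adj x1 x2) (a2 : G.Adj x2 x3) (a3 : G.Adj x3 x4) (a4 : G.Adj x4 x0)
    (d0 : x0 ≠ x2) (d1 : x1 ≠ x3) (d2 : x2 ≠ x4) (d3 : x3 ≠ x0) (d4 : x4 ≠ x1) : False := by
  apply cw_gen hg (n := 5) (by norm_num) (by norm_num)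
      (fun i => [x0,x1,x2,x3,x4].getD (i % 5) x0)
  · intro i
    rw [show (i+1) % 5 = (i % 5 + 1) % 5 from by omega]
    have h : i % 5 < 5 := Nat.mod_lt _ (by omega)
    set r := i % 5 with hr
    clear_value r
    interval_cases r <;> norm_num [List.getD] <;> assumption
  · intro i
    rw [show (i+5) % 5 = i % 5 from by omega]
  · intro i
    rw [show (i+2) % 5 = (i % 5 + 2) % 5 from by omega]
    have h : i % 5 < 5 := Nat.mod_lt _ (by omega)
    set r := i % 5 with hr
    clear_value r
    interval_cases r <;> norm_num [List.getD] <;> assumption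

lemma cw6 (hg : 15 ≤ G.egirth) {x0 x1 x2 x3 x4 x5 : V}
    (a0 : G.Adj x0 x1) (a1 : G.Adj x1 x2) (a2 : G.Adj x2 x3) (a3 : G.Adj x3 x4) (a4 : G.Adj x4 x5) (a5 : G.Adj x5 x0)
    (d0 : x0 ≠ x2) (d1 : x1 ≠ x3) (d2 : x2 ≠ x4) (d3 : x3 ≠ x5) (d4 : x4 ≠ x0) (d5 : x5 ≠ x1) : False := by
  apply cw_gen hg (n := 6) (by norm_num) (by norm_num)
      (fun i => [x0,x1,x2,x3,x4,x5].getD (i % 6) x0)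
  · intro i
    rw [show (i+1) % 6 = (i % 6 + 1) % 6 from by omega]
    have h : i % 6 < 6 := Nat.mod_lt _ (by omega)
    set r := i % 6 with hr
    clear_value r
    interval_cases r <;> norm_num [List.getD] <;> assumption
  · intro i
    rw [show (i+6) % 6 = i % 6 from by omega]
  · intro i
    rw [show (i+2) % 6 = (i % 6 + 2) % 6 from by omega]
    have h : i % 6 < 6 := Nat.mod_lt _ (by omega)
    set r := i % 6 with hr
    clear_value r
    interval_cases r <;> norm_num [List.getD] <;> assumption

lemma cw7 (hg : 15 ≤ G.egirth) {x0 x1 x2 x3 x4 x5 x6 : V}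
    (a0 : G.Adj x0 x1) (a1 : G.Adj x1 x2) (a2 : G.Adj x2 x3) (a3 : G.Adj x3 x4) (a4 : G.Adj x4 x5) (a5 : G.Adj x5 x6) (a6 : G.Adj x6 x0)
    (d0 : x0 ≠ x2) (d1 : x1 ≠ x3) (d2 : x2 ≠ x4) (d3 : x3 ≠ x5) (d4 : x4 ≠ x6) (d5 : x5 ≠ x0) (d6 : x6 ≠ x1) : False := by
  apply cw_gen hg (n := 7) (by norm_num) (by norm_num)
      (fun i => [x0,x1,x2,x3,x4,x5,x6].getD (i % 7) x0)
  · intro i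
    rw [show (i+1) % 7 = (i % 7 + 1) % 7 from by omega]
    have h : i % 7 < 7 := Nat.mod_lt _ (by omega)
    set r := i % 7 with hr
    clear_value r
    interval_cases r <;> norm_num [List.getD] <;> assumption
  · intro i
    rw [show (i+7) % 7 = i % 7 from by omega]
  · intro i
    rw [show (i+2) % 7 = (i % 7 + 2) % 7 from by omega]
    have h : i % 7 < 7 := Nat.mod_lt _ (by omega)
    set r := i % 7 with hr
    clear_value r
    interval_cases r <;> norm_num [List.getD] <;> assumption

lemma cw8 (hg : 15 ≤ G.egirth) {x0 x1 x2 x3 x4 x5 x6 x7 : V}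
    (a0 : G.Adj x0 x1) (a1 : G.Adj x1 x2) (a2 : G.Adj x2 x3) (a3 : G.Adj x3 x4) (a4 : G.Adj x4 x5) (a5 : G.Adj x5 x6) (a6 : G.Adj x6 x7) (a7 : G.Adj x7 x0)
    (d0 : x0 ≠ x2) (d1 : x1 ≠ x3) (d2 : x2 ≠ x4) (d3 : x3 ≠ x5) (d4 : x4 ≠ x6) (d5 : x5 ≠ x7) (d6 : x6 ≠ x0) (d7 : x7 ≠ x1) : False := by
  apply cw_gen hg (n := 8) (by norm_num) (by norm_num)
      (fun i => [x0,x1,x2,x3,x4,x5,x6,x7].getD (i % 8) x0)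
  · intro i
    rw [show (i+1) % 8 = (i % 8 + 1) % 8 from by omega]
    have h : i % 8 < 8 := Nat.mod_lt _ (by omega)
    set r := i % 8 with hr
    clear_value r
    interval_cases r <;> norm_num [List.getD] <;> assumption
  · intro i
    rw [show (i+8) % 8 = i % 8 from by omega]
  · intro i
    rw [show (i+2) % 8 = (i % 8 + 2) % 8 from by omega]
    have h : i % 8 < 8 := Nat.mod_lt _ (by omega)
    set r := i % 8 with hr
    clear_value r
    interval_cases r <;> norm_num [List.getD] <;> assumption

lemma cw9 (hg : 15 ≤ G.egirth) {x0 x1 x2 x3 x4 x5 x6 x7 x8 : V}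
    (a0 : G.Adj x0 x1) (a1 : G.Adj x1 x2) (a2 : G.Adj x2 x3) (a3 : G.Adj x3 x4) (a4 : G.Adj x4 x5) (a5 : G.Adj x5 x6) (a6 : G.Adj x6 x7) (a7 : G.Adj x7 x8) (a8 : G.Adj x8 x0)
    (d0 : x0 ≠ x2) (d1 : x1 ≠ x3) (d2 : x2 ≠ x4) (d3 : x3 ≠ x5) (d4 : x4 ≠ x6) (d5 : x5 ≠ x7) (d6 : x6 ≠ x8) (d7 : x7 ≠ x0) (d8 : x8 ≠ x1) : False := by
  apply cw_gen hg (n := 9) (by norm_num) (by norm_num)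
      (fun i => [x0,x1,x2,x3,x4,x5,x6,x7,x8].getD (i % 9) x0)
  · intro i
    rw [show (i+1) % 9 = (i % 9 + 1) % 9 from by omega]
    have h : i % 9 < 9 := Nat.mod_lt _ (by omega)
    set r := i % 9 with hr
    clear_value r
    interval_cases r <;> norm_num [List.getD] <;> assumption
  · intro i
    rw [show (i+9) % 9 = i % 9 from by omega]
  · intro i
    rw [show (i+2) % 9 = (i % 9 + 2) % 9 from by omega]
    have h : i % 9 < 9 := Nat.mod_lt _ (by omega)
    set r := i % 9 with hr
    clear_value r
    interval_cases r <;> norm_num [List.getD] <;> assumption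

lemma cw10 (hg : 15 ≤ G.egirth) {x0 x1 x2 x3 x4 x5 x6 x7 x8 x9 : V}
    (a0 : G.Adj x0 x1) (a1 : G.Adj x1 x2) (a2 : G.Adj x2 x3) (a3 : G.Adj x3 x4) (a4 : G.Adj x4 x5) (a5 : G.Adj x5 x6) (a6 : G.Adj x6 x7) (a7 : G.Adj x7 x8) (a8 : G.Adj x8 x9) (a9 : G.Adj x9 x0)
    (d0 : x0 ≠ x2) (d1 : x1 ≠ x3) (d2 : x2 ≠ x4) (d3 : x3 ≠ x5) (d4 : x4 ≠ x6) (d5 : x5 ≠ x7) (d6 : x6 ≠ x8) (d7 : x7 ≠ x9) (d8 : x8 ≠ x0) (d9 : x9 ≠ x1) : False := by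
  apply cw_gen hg (n := 10) (by norm_num) (by norm_num)
      (fun i => [x0,x1,x2,x3,x4,x5,x6,x7,x8,x9].getD (i % 10) x0)
  · intro i
    rw [show (i+1) % 10 = (i % 10 + 1) % 10 from by omega]
    have h : i % 10 < 10 := Nat.mod_lt _ (by omega)
    set r := i % 10 with hr
    clear_value r
    interval_cases r <;> norm_num [List.getD] <;> assumption
  · intro i
    rw [show (i+10) % 10 = i % 10 from by omega]
  · intro i
    rw [show (i+2) % 10 = (i % 10 + 2) % 10 from by omega]
    have h : i % 10 < 10 := Nat.mod_lt _ (by omega)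
    set r := i % 10 with hr
    clear_value r
    interval_cases r <;> norm_num [List.getD] <;> assumption

lemma cw11 (hg : 15 ≤ G.egirth) {x0 x1 x2 x3 x4 x5 x6 x7 x8 x9 x10 : V}
    (a0 : G.Adj x0 x1) (a1 : G.Adj x1 x2) (a2 : G.Adj x2 x3) (a3 : G.Adj x3 x4) (a4 : G.Adj x4 x5) (a5 : G.Adj x5 x6) (a6 : G.Adj x6 x7) (a7 : G.Adj x7 x8) (a8 : G.Adj x8 x9) (a9 : G.Adj x9 x10) (a10 : G.Adj x10 x0)
    (d0 : x0 ≠ x2) (d1 : x1 ≠ x3) (d2 : x2 ≠ x4) (d3 : x3 ≠ x5) (d4 : x4 ≠ x6) (d5 : x5 ≠ x7) (d6 : x6 ≠ x8) (d7 : x7 ≠ x9) (d8 : x8 ≠ x10) (d9 : x9 ≠ x0) (d10 : x10 ≠ x1) : False := by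
  apply cw_gen hg (n := 11) (by norm_num) (by norm_num)
      (fun i => [x0,x1,x2,x3,x4,x5,x6,x7,x8,x9,x10].getD (i % 11) x0)
  · intro i
    rw [show (i+1) % 11 = (i % 11 + 1) % 11 from by omega]
    have h : i % 11 < 11 := Nat.mod_lt _ (by omega)
    set r := i % 11 with hr
    clear_value r
    interval_cases r <;> norm_num [List.getD] <;> assumption
  · intro i
    rw [show (i+11) % 11 = i % 11 from by omega]
  · intro i
    rw [show (i+2) % 11 = (i % 11 + 2) % 11 from by omega]
    have h : i % 11 < 11 := Nat.mod_lt _ (by omega)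
    set r := i % 11 with hr
    clear_value r
    interval_cases r <;> norm_num [List.getD] <;> assumption

lemma cw12 (hg : 15 ≤ G.egirth) {x0 x1 x2 x3 x4 x5 x6 x7 x8 x9 x10 x11 : V}
    (a0 : G.Adj x0 x1) (a1 : G.Adj x1 x2) (a2 : G.Adj x2 x3) (a3 : G.Adj x3 x4) (a4 : G.Adj x4 x5) (a5 : G.Adj x5 x6) (a6 : G.Adj x6 x7) (a7 : G.Adj x7 x8) (a8 : G.Adj x8 x9) (a9 : G.Adj x9 x10) (a10 : G.Adj x10 x11) (a11 : G.Adj x11 x0)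
    (d0 : x0 ≠ x2) (d1 : x1 ≠ x3) (d2 : x2 ≠ x4) (d3 : x3 ≠ x5) (d4 : x4 ≠ x6) (d5 : x5 ≠ x7) (d6 : x6 ≠ x8) (d7 : x7 ≠ x9) (d8 : x8 ≠ x10) (d9 : x9 ≠ x11) (d10 : x10 ≠ x0) (d11 : x11 ≠ x1) : False := by
  apply cw_gen hg (n := 12) (by norm_num) (by norm_num)
      (fun i => [x0,x1,x2,x3,x4,x5,x6,x7,x8,x9,x10,x11].getD (i % 12) x0)
  · intro i
    rw [show (i+1) % 12 = (i % 12 + 1) % 12 from by omega]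
    have h : i % 12 < 12 := Nat.mod_lt _ (by omega)
    set r := i % 12 with hr
    clear_value r
    interval_cases r <;> norm_num [List.getD] <;> assumption
  · intro i
    rw [show (i+12) % 12 = i % 12 from by omega]
  · intro i
    rw [show (i+2) % 12 = (i % 12 + 2) % 12 from by omega]
    have h : i % 12 < 12 := Nat.mod_lt _ (by omega)
    set r := i % 12 with hr
    clear_value r
    interval_cases r <;> norm_num [List.getD] <;> assumption

lemma cw13 (hg : 15 ≤ G.egirth) {x0 x1 x2 x3 x4 x5 x6 x7 x8 x9 x10 x11 x12 : V}
    (a0 : G.Adj x0 x1) (a1 : G.Adj x1 x2) (a2 : G.Adj x2 x3) (a3 : G.Adj x3 x4) (a4 : G.Adj x4 x5) (a5 : G.Adj x5 x6) (a6 : G.Adj x6 x7) (a7 : G.Adj x7 x8) (a8 : G.Adj x8 x9) (a9 : G.Adj x9 x10) (a10 : G.Adj x10 x11) (a11 : G.Adj x11 x12) (a12 : G.Adj x12 x0)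
    (d0 : x0 ≠ x2) (d1 : x1 ≠ x3) (d2 : x2 ≠ x4) (d3 : x3 ≠ x5) (d4 : x4 ≠ x6) (d5 : x5 ≠ x7) (d6 : x6 ≠ x8) (d7 : x7 ≠ x9) (d8 : x8 ≠ x10) (d9 : x9 ≠ x11) (d10 : x10 ≠ x12) (d11 : x11 ≠ x0) (d12 : x12 ≠ x1) : False := by
  apply cw_gen hg (n := 13) (by norm_num) (by norm_num)
      (fun i => [x0,x1,x2,x3,x4,x5,x6,x7,x8,x9,x10,x11,x12].getD (i % 13) x0)
  · intro i
    rw [show (i+1) % 13 = (i % 13 + 1) % 13 from by omega]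
    have h : i % 13 < 13 := Nat.mod_lt _ (by omega)
    set r := i % 13 with hr
    clear_value r
    interval_cases r <;> norm_num [List.getD] <;> assumption
  · intro i
    rw [show (i+13) % 13 = i % 13 from by omega]
  · intro i
    rw [show (i+2) % 13 = (i % 13 + 2) % 13 from by omega]
    have h : i % 13 < 13 := Nat.mod_lt _ (by omega)
    set r := i % 13 with hr
    clear_value r
    interval_cases r <;> norm_num [List.getD] <;> assumption

lemma cw14 (hg : 15 ≤ G.egirth) {x0 x1 x2 x3 x4 x5 x6 x7 x8 x9 x10 x11 x12 x13 : V}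
    (a0 : G.Adj x0 x1) (a1 : G.Adj x1 x2) (a2 : G.Adj x2 x3) (a3 : G.Adj x3 x4) (a4 : G.Adj x4 x5) (a5 : G.Adj x5 x6) (a6 : G.Adj x6 x7) (a7 : G.Adj x7 x8) (a8 : G.Adj x8 x9) (a9 : G.Adj x9 x10) (a10 : G.Adj x10 x11) (a11 : G.Adj x11 x12) (a12 : G.Adj x12 x13) (a13 : G.Adj x13 x0)
    (d0 : x0 ≠ x2) (d1 : x1 ≠ x3) (d2 : x2 ≠ x4) (d3 : x3 ≠ x5) (d4 : x4 ≠ x6) (d5 : x5 ≠ x7) (d6 : x6 ≠ x8) (d7 : x7 ≠ x9) (d8 : x8 ≠ x10) (d9 : x9 ≠ x11) (d10 : x10 ≠ x12) (d11 : x11 ≠ x13) (d12 : x12 ≠ x0) (d13 : x13 ≠ x1) : False := by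
  apply cw_gen hg (n := 14) (by norm_num) (by norm_num)
      (fun i => [x0,x1,x2,x3,x4,x5,x6,x7,x8,x9,x10,x11,x12,x13].getD (i % 14) x0)
  · intro i
    rw [show (i+1) % 14 = (i % 14 + 1) % 14 from by omega]
    have h : i % 14 < 14 := Nat.mod_lt _ (by omega)
    set r := i % 14 with hr
    clear_value r
    interval_cases r <;> norm_num [List.getD] <;> assumption
  · intro i
    rw [show (i+14) % 14 = i % 14 from by omega]
  · intro i
    rw [show (i+2) % 14 = (i % 14 + 2) % 14 from by omega]
    have h : i % 14 < 14 := Nat.mod_lt _ (by omega)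
    set r := i % 14 with hr
    clear_value r
    interval_cases r <;> norm_num [List.getD] <;> assumption




lemma exists_maximal_packing (P : Set V) (hP : IsOpenPacking G P) :
    ∃ M, P ⊆ M ∧ Maximal (IsOpenPacking G) M := by
  have hch : ∀ c ⊆ {Q | IsOpenPacking G Q}, IsChain (· ⊆ ·) c → c.Nonempty →
      ∃ ub ∈ {Q | IsOpenPacking G Q}, ∀ s ∈ c, s ⊆ ub := by
    intro c hc hchain hne
    refine ⟨⋃₀ c, ?_, fun s hs => Set.subset_sUnion_of_mem hs⟩
    intro u hu v hv huv w hw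
    obtain ⟨Su, hSu, hu⟩ := hu
    obtain ⟨Sv, hSv, hv⟩ := hv
    rcases eq_or_ne Su Sv with rfl | hne'
    · exact hc hSu hu hv huv w hw
    · rcases hchain hSu hSv hne' with h | h
      · exact hc hSv (h hu) hv huv w hw
      · exact hc hSu hu (h hv) huv w hw
  obtain ⟨M, hM1, hM2⟩ := zorn_subset_nonempty {Q | IsOpenPacking G Q} hch P hP
  exact ⟨M, hM1, hM2⟩

lemma lemA [Fintype V] (hU : InU G) (S T : Set V)
    (hS : IsOpenPacking G S) (hT : IsOpenPacking G T)
    (hcov : ∀ v, (v ∈ S ∨ ∃ s ∈ S, v ≠ s ∧ ∃ z, G.Adj v z ∧ G.Adj s z) →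
                 (v ∈ T ∨ ∃ t ∈ T, v ≠ t ∧ ∃ z, G.Adj v z ∧ G.Adj t z))
    (hcard : T.ncard < S.ncard) : False := by
  obtain ⟨M, hTM, hMmax⟩ := exists_maximal_packing T hT
  have hMP : IsOpenPacking G M := hMmax.prop
  set R := M \ T with hR
  have hRS : ∀ r ∈ R, r ∉ S := by
    intro r hr hrS
    rcases hcov r (Or.inl hrS) with h | ⟨t, ht, rne, z, hz1, hz2⟩
    · exact hr.2 h
    · exact hMP hr.1 (hTM ht) rne z ⟨hz1, hz2⟩
  have hSR : ∀ s ∈ S, ∀ r ∈ R, s ≠ r → ∀ z, ¬(G.Adj s z ∧ G.Adj r z) := by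
    intro s hs r hr hsr z hz
    rcases hcov r (Or.inr ⟨s, hs, hsr.symm, z, hz.2, hz.1⟩) with h | ⟨t, ht, rne, z', hz1, hz2⟩
    · exact hr.2 h
    · exact hMP hr.1 (hTM ht) rne z' ⟨hz1, hz2⟩
  have hSRP : IsOpenPacking G (S ∪ R) := by
    intro u hu v hv huv z hz
    rcases hu with hu | hu <;> rcases hv with hv | hv
    · exact hS hu hv huv z hz
    · exact hSR u hu v hv huv z hz
    · exact hSR v hv u hu huv.symm z ⟨hz.2, hz.1⟩
    · exact hMP hu.1 hv.1 huv z hz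
  obtain ⟨M', hM'1, hM'max⟩ := exists_maximal_packing _ hSRP
  have hdisj1 : Disjoint S R := Set.disjoint_left.mpr (fun v hv hv' => hRS v hv' hv)
  have hdisj2 : Disjoint T R := Set.disjoint_left.mpr (fun v hv hv' => hv'.2 hv)
  have hMeq : M = T ∪ R := by
    ext v
    constructor
    · intro hv
      by_cases h : v ∈ T
      · exact Or.inl h
      · exact Or.inr ⟨hv, h⟩
    · rintro (hv | hv)
      · exact hTM hv
      · exact hv.1
  have h1 : (S ∪ R).ncard = S.ncard + R.ncard := Set.ncard_union_eq hdisj1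
  have h2 : M.ncard = T.ncard + R.ncard := by rw [hMeq]; exact Set.ncard_union_eq hdisj2
  have h3 : (S ∪ R).ncard ≤ M'.ncard := Set.ncard_le_ncard hM'1
  have h4 : M'.ncard = M.ncard := hU M' M hM'max hMmax
  omega

lemma adj_of_nbr {l s : V} (h : G.neighborSet l = {s}) : G.Adj l s := by
  have : s ∈ G.neighborSet l := by rw [h]; rfl
  exact this

lemma eq_of_nbr {l s z : V} (h : G.neighborSet l = {s}) (hz : G.Adj l z) : z = s := by
  have : z ∈ G.neighborSet l := hz
  rwa [h] at this


lemma lem2 [Fintype V] (hU : InU G) (hg : 15 ≤ G.egirth)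
    {p q w lp lq : V} (hp : G.neighborSet lp = {p}) (hq : G.neighborSet lq = {q})
    (hpw : G.Adj p w) (hqw : G.Adj q w) (hpq : ¬ G.Adj p q) (hne : p ≠ q) : False := by
  have hlp : G.Adj lp p := adj_of_nbr hp
  have hlq : G.Adj lq q := adj_of_nbr hq
  have hlpp : lp ≠ p := hlp.ne
  have hlqq : lq ≠ q := hlq.ne
  have hlplq : lp ≠ lq := by
    rintro rfl
    rw [hp] at hq
    exact hne (Set.singleton_eq_singleton_iff.mp hq)
  have hplq : p ≠ lq := by
    intro h
    have hwq : w = q := eq_of_nbr hq (h ▸ hpw)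
    rw [hwq] at hqw
    exact hqw.ne rfl
  have hlpw : lp ≠ w := by
    intro h
    exact hne (eq_of_nbr hp (h ▸ hqw.symm : G.Adj lp q)).symm
  have hlqw : lq ≠ w := by
    intro h
    exact hne (eq_of_nbr hq (h ▸ hpw.symm : G.Adj lq p))
  have hpwne : p ≠ w := hpw.ne
  set S : Set V := {lp, p, lq} with hSdef
  set T : Set V := {p, w} with hTdef
  have hS : IsOpenPacking G S := by
    intro u hu v hv huv z hz
    simp only [hSdef, Set.mem_insert_iff, Set.mem_singleton_iff] at hu hv
    rcases hu with rfl | rfl | rfl <;> rcases hv with rfl | rfl | rfl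
    · exact huv rfl
    · have := eq_of_nbr hp hz.1; subst this; exact hz.2.ne' rfl
    · have := eq_of_nbr hp hz.1
      have h2 := eq_of_nbr hq hz.2
      rw [this] at h2; exact hne h2
    · have := eq_of_nbr hp hz.2; subst this; exact hz.1.ne' rfl
    · exact huv rfl
    · have := eq_of_nbr hq hz.2; subst this; exact hpq hz.1
    · have := eq_of_nbr hq hz.1
      have h2 := eq_of_nbr hp hz.2
      rw [this] at h2; exact hne h2.symm
    · have := eq_of_nbr hq hz.1; subst this; exact hpq hz.2
    · exact huv rfl
  have hT : IsOpenPacking G T := by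
    intro u hu v hv huv z hz
    simp only [hTdef, Set.mem_insert_iff, Set.mem_singleton_iff] at hu hv
    rcases hu with rfl | rfl <;> rcases hv with rfl | rfl
    · exact huv rfl
    · exact cw3 hg hpw hz.2 hz.1.symm hz.1.ne hpw.ne' hz.2.ne'
    · exact cw3 hg hpw hz.1 hz.2.symm hz.2.ne hpw.ne' hz.1.ne'
    · exact huv rfl
  have hcov : ∀ v, (v ∈ S ∨ ∃ s ∈ S, v ≠ s ∧ ∃ z, G.Adj v z ∧ G.Adj s z) →
                 (v ∈ T ∨ ∃ t ∈ T, v ≠ t ∧ ∃ z, G.Adj v z ∧ G.Adj t z) := by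
    intro v hv
    have hwT : w ∈ T := by simp [hTdef]
    have hpT : p ∈ T := by simp [hTdef]
    rcases hv with hv | ⟨s, hs, hvs, z, h1, h2⟩
    · simp only [hSdef, Set.mem_insert_iff, Set.mem_singleton_iff] at hv
      rcases hv with h | h | h <;> rw [h]
      · exact Or.inr ⟨w, hwT, hlpw, p, hlp, hpw.symm⟩
      · exact Or.inl hpT
      · exact Or.inr ⟨w, hwT, hlqw, q, hlq, hqw.symm⟩
    · simp only [hSdef, Set.mem_insert_iff, Set.mem_singleton_iff] at hs
      obtain ⟨h1, h2⟩ : G.Adj v z ∧ G.Adj s z := ⟨h1, h2⟩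
      rcases hs with h | h | h <;> rw [h] at h2 hvs
      · have hzp := eq_of_nbr hp h2
        rw [hzp] at h1
        by_cases hvw : v = w
        · exact Or.inl (hvw ▸ hwT)
        · exact Or.inr ⟨w, hwT, hvw, p, h1, hpw.symm⟩
      · exact Or.inr ⟨p, hpT, hvs, z, h1, h2⟩
      · have hzq := eq_of_nbr hq h2
        rw [hzq] at h1
        by_cases hvw : v = w
        · exact Or.inl (hvw ▸ hwT)
        · exact Or.inr ⟨w, hwT, hvw, q, h1, hqw.symm⟩
  have hcard : T.ncard < S.ncard := by
    have hTcard : T.ncard = 2 := Set.ncard_pair hpwne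
    have hScard : S.ncard = 3 := by
      rw [hSdef]
      rw [Set.ncard_insert_of_notMem (by simp [hlpp, hlplq]),
        Set.ncard_insert_of_notMem (by simp [hplq]), Set.ncard_singleton]
    omega
  exact lemA hU S T hS hT hcov hcard


variable {V : Type*} {G : SimpleGraph V}

lemma pw_same (hg : 15 ≤ G.egirth) {s t₁ w₁ y₁ f₁ t₂ w₂ y₂ f₂ : V}
    (htw1 : G.Adj t₁ w₁) (hsw1 : G.Adj s w₁) (hty1 : G.Adj t₁ y₁) (hyw1 : y₁ ≠ w₁)
    (hyf1 : G.Adj y₁ f₁) (hft1 : f₁ ≠ t₁) (hts1 : t₁ ≠ s)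
    (htw2 : G.Adj t₂ w₂) (hsw2 : G.Adj s w₂) (hty2 : G.Adj t₂ y₂) (hyw2 : y₂ ≠ w₂)
    (hyf2 : G.Adj y₂ f₂) (hft2 : f₂ ≠ t₂) (hts2 : t₂ ≠ s)
    (hne_t : t₁ ≠ t₂) (hff : f₁ ≠ f₂) (z : V)
    (hz1 : G.Adj f₁ z) (hz2 : G.Adj f₂ z) : False := by
  by_cases hww : w₁ = w₂
  · have htw2' : G.Adj t₂ w₁ := by rw [hww]; exact htw2
    have hyw2' : y₂ ≠ w₁ := by rw [hww]; exact hyw2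
    by_cases hzy2 : z = y₂
    · rw [hzy2] at hz1
      by_cases hf1t2 : f₁ = t₂
      · have h5 : G.Adj y₁ t₂ := by rw [← hf1t2]; exact hyf1
        exact cw4 hg hty1.symm htw1 htw2'.symm h5.symm hyw1 hne_t hyw1.symm hne_t.symm
      by_cases hyy : y₁ = y₂
      · have h5 : G.Adj t₂ y₁ := by rw [hyy]; exact hty2
        exact cw4 hg hty1.symm htw1 htw2'.symm h5 hyw1 hne_t hyw1.symm hne_t.symm
      · exact cw6 hg hyf1.symm hty1.symm htw1 htw2'.symm hty2 hz1.symm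
          hft1 hyw1 hne_t hyw2'.symm (fun he => hf1t2 he.symm) (fun he => hyy he.symm)
    by_cases hzy1 : z = y₁
    · rw [hzy1] at hz2
      by_cases hf2t1 : f₂ = t₁
      · have h5 : G.Adj y₂ t₁ := by rw [← hf2t1]; exact hyf2
        exact cw4 hg hty2.symm htw2' htw1.symm h5.symm hyw2' hne_t.symm hyw2'.symm hne_t
      by_cases hyy : y₁ = y₂
      · have h5 : G.Adj t₁ y₂ := by rw [← hyy]; exact hty1
        exact cw4 hg hty2.symm htw2' htw1.symm h5 hyw2' hne_t.symm hyw2'.symm hne_t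
      · exact cw6 hg hyf2.symm hty2.symm htw2' htw1.symm hty1 hz2.symm
          hft2 hyw2' hne_t.symm hyw1.symm (fun he => hf2t1 he.symm) hyy
    · exact cw8 hg hyf1.symm hty1.symm htw1 htw2'.symm hty2 hyf2 hz2 hz1.symm
        hft1 hyw1 hne_t hyw2'.symm hft2.symm (fun he => hzy2 he.symm) hff.symm hzy1
  · have hww' : w₂ ≠ w₁ := fun he => hww he.symm
    by_cases hzy2 : z = y₂
    · rw [hzy2] at hz1
      by_cases hf1t2 : f₁ = t₂
      · have h5 : G.Adj t₂ y₁ := by rw [← hf1t2]; exact hyf1.symm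
        by_cases hyw12 : y₁ = w₂
        · have h6 : G.Adj s y₁ := by rw [hyw12]; exact hsw2
          exact cw4 hg hty1.symm htw1 hsw1.symm h6 hyw1 hts1 hyw1.symm hts1.symm
        · exact cw6 hg hty1.symm htw1 hsw1.symm hsw2 htw2.symm h5
            hyw1 hts1 hww hts2.symm (fun he => hyw12 he.symm) hne_t.symm
      by_cases hyy : y₁ = y₂
      · have h5 : G.Adj t₂ y₁ := by rw [hyy]; exact hty2
        have h7 : y₁ ≠ w₂ := by rw [hyy]; exact hyw2
        exact cw6 hg hty1.symm htw1 hsw1.symm hsw2 htw2.symm h5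
          hyw1 hts1 hww hts2.symm (fun he => h7 he.symm) hne_t.symm
      · exact cw8 hg hyf1.symm hty1.symm htw1 hsw1.symm hsw2 htw2.symm hty2 hz1.symm
          hft1 hyw1 hts1 hww hts2.symm hyw2.symm (fun he => hf1t2 he.symm)
          (fun he => hyy he.symm)
    by_cases hzy1 : z = y₁
    · rw [hzy1] at hz2
      by_cases hf2t1 : f₂ = t₁
      · have h5 : G.Adj t₁ y₂ := by rw [← hf2t1]; exact hyf2.symm
        by_cases hyw21 : y₂ = w₁
        · have h6 : G.Adj s y₂ := by rw [hyw21]; exact hsw1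
          exact cw4 hg hty2.symm htw2 hsw2.symm h6 hyw2 hts2 hyw2.symm hts2.symm
        · exact cw6 hg hty2.symm htw2 hsw2.symm hsw1 htw1.symm h5
            hyw2 hts2 hww' hts1.symm (fun he => hyw21 he.symm) hne_t
      by_cases hyy : y₁ = y₂
      · have h5 : G.Adj t₁ y₂ := by rw [← hyy]; exact hty1
        have h7 : y₂ ≠ w₁ := by rw [← hyy]; exact hyw1
        exact cw6 hg hty2.symm htw2 hsw2.symm hsw1 htw1.symm h5
          hyw2 hts2 hww' hts1.symm (fun he => h7 he.symm) hne_t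
      · exact cw8 hg hyf2.symm hty2.symm htw2 hsw2.symm hsw1 htw1.symm hty1 hz2.symm
          hft2 hyw2 hts2 hww' hts1.symm hyw1.symm (fun he => hf2t1 he.symm) hyy
    · exact cw10 hg hyf1.symm hty1.symm htw1 hsw1.symm hsw2 htw2.symm hty2 hyf2 hz2 hz1.symm
        hft1 hyw1 hts1 hww hts2.symm hyw2.symm hft2.symm (fun he => hzy2 he.symm) hff.symm hzy1

variable [Fintype V]

lemma dist3 (hU : InU G) (hg : 15 ≤ G.egirth)
    {s₁ s₂ a b l₁ l₂ : V}
    (hl₁ : G.neighborSet l₁ = {s₁}) (hl₂ : G.neighborSet l₂ = {s₂})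
    (hns₂ : ∀ u, G.Adj s₂ u → ¬ IsSupport G u)
    (A1 : G.Adj s₁ a) (A2 : G.Adj a b) (A3 : G.Adj b s₂)
    (hd : G.dist s₁ s₂ = 3) : False := by
  classical
  have hL1 : G.Adj l₁ s₁ := adj_of_nbr hl₁
  have hL2 : G.Adj l₂ s₂ := adj_of_nbr hl₂
  have nadj12 : ¬ G.Adj s₁ s₂ := by
    intro h
    have h2 := SimpleGraph.dist_le (Walk.cons h Walk.nil)
    rw [hd] at h2; simp at h2
  have ncom12 : ∀ z, ¬(G.Adj s₁ z ∧ G.Adj s₂ z) := by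
    rintro z ⟨h1, h2⟩
    have h3 := SimpleGraph.dist_le (Walk.cons h1 (Walk.cons h2.symm Walk.nil))
    rw [hd] at h3; simp at h3
  have nadj_as2 : ¬ G.Adj a s₂ := by
    intro h
    have h3 := SimpleGraph.dist_le (Walk.cons A1 (Walk.cons h Walk.nil))
    rw [hd] at h3; simp at h3
  have nadj_s1b : ¬ G.Adj s₁ b := by
    intro h
    have h3 := SimpleGraph.dist_le (Walk.cons h (Walk.cons A3 Walk.nil))
    rw [hd] at h3; simp at h3
  have ne_s1a : s₁ ≠ a := A1.ne
  have ne_ab : a ≠ b := A2.ne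
  have ne_bs2 : b ≠ s₂ := A3.ne
  have ne_s1b : s₁ ≠ b := by intro h; exact nadj12 (h ▸ A3)
  have ne_as2 : a ≠ s₂ := by intro h; exact nadj12 (h ▸ A1)
  have ne_s1s2 : s₁ ≠ s₂ := by
    intro h; rw [h, SimpleGraph.dist_self] at hd; omega
  have ne_l1s1 : l₁ ≠ s₁ := hL1.ne
  have ne_l2s2 : l₂ ≠ s₂ := hL2.ne
  have ne_l1l2 : l₁ ≠ l₂ := by
    intro h
    have h2 : ({s₁} : Set V) = {s₂} := by rw [← hl₁, h, hl₂]
    exact ne_s1s2 (Set.singleton_eq_singleton_iff.mp h2)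
  have ne_l1s2 : l₁ ≠ s₂ := by intro h; exact nadj12 (h ▸ hL1).symm
  have ne_l1a : l₁ ≠ a := by intro h; exact ne_s1b (eq_of_nbr hl₁ (h ▸ A2)).symm
  have ne_l2s1 : l₂ ≠ s₁ := by intro h; exact nadj12 (h ▸ hL2)
  have ne_l2a : l₂ ≠ a := by intro h; exact ne_bs2 (eq_of_nbr hl₂ (h ▸ A2))
  have ne_s1l2 : s₁ ≠ l₂ := fun h => ne_l2s1 h.symm
  have ne_al2 : a ≠ l₂ := fun h => ne_l2a h.symm
  -- basic non-conflicts among the core vertices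
  have ncl1s1 : ∀ z, ¬(G.Adj l₁ z ∧ G.Adj s₁ z) := by
    rintro z ⟨u1, u2⟩
    rw [eq_of_nbr hl₁ u1] at u2
    exact G.loopless.irrefl _ u2
  have ncl1l2 : ∀ z, ¬(G.Adj l₁ z ∧ G.Adj l₂ z) := by
    rintro z ⟨u1, u2⟩
    have e1 := eq_of_nbr hl₁ u1
    have e2 := eq_of_nbr hl₂ u2
    rw [e1] at e2
    exact ne_s1s2 e2
  have ncl1s2 : ∀ z, ¬(G.Adj l₁ z ∧ G.Adj s₂ z) := by
    rintro z ⟨u1, u2⟩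
    rw [eq_of_nbr hl₁ u1] at u2
    exact nadj12 u2.symm
  have ncs1l2 : ∀ z, ¬(G.Adj s₁ z ∧ G.Adj l₂ z) := by
    rintro z ⟨u1, u2⟩
    rw [eq_of_nbr hl₂ u2] at u1
    exact nadj12 u1
  have ncl2s2 : ∀ z, ¬(G.Adj l₂ z ∧ G.Adj s₂ z) := by
    rintro z ⟨u1, u2⟩
    rw [eq_of_nbr hl₂ u1] at u2
    exact G.loopless.irrefl _ u2
  have ncs1a : ∀ z, ¬(G.Adj s₁ z ∧ G.Adj a z) := by
    rintro z ⟨u1, u2⟩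
    exact cw3 hg A1 u2 u1.symm u1.ne ne_s1a.symm u2.ne'
  have ncal2 : ∀ z, ¬(G.Adj a z ∧ G.Adj l₂ z) := by
    rintro z ⟨u1, u2⟩
    rw [eq_of_nbr hl₂ u2] at u1
    exact nadj_as2 u1
  -- the target set
  set TS : Set V := {t | t ≠ s₂ ∧ t ≠ s₁ ∧ t ≠ a ∧ t ≠ l₂ ∧
      (∃ w, G.Adj t w ∧ G.Adj s₂ w) ∧
      (∀ z, ¬(G.Adj t z ∧ G.Adj s₁ z)) ∧ (∀ z, ¬(G.Adj t z ∧ G.Adj a z)) ∧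
      (∀ z, ¬(G.Adj t z ∧ G.Adj l₂ z))} with hTSdef
  have TSne2 : ∀ t, t ∈ TS → t ≠ s₂ := fun t ht => ht.1
  have TSne1 : ∀ t, t ∈ TS → t ≠ s₁ := fun t ht => ht.2.1
  have TSnea : ∀ t, t ∈ TS → t ≠ a := fun t ht => ht.2.2.1
  have TSnel2 : ∀ t, t ∈ TS → t ≠ l₂ := fun t ht => ht.2.2.2.1
  have TSnc1 : ∀ t, t ∈ TS → ∀ z, ¬(G.Adj t z ∧ G.Adj s₁ z) := fun t ht => ht.2.2.2.2.2.1
  have TSnca : ∀ t, t ∈ TS → ∀ z, ¬(G.Adj t z ∧ G.Adj a z) := fun t ht => ht.2.2.2.2.2.2.1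
  have TSncl2 : ∀ t, t ∈ TS → ∀ z, ¬(G.Adj t z ∧ G.Adj l₂ z) := fun t ht => ht.2.2.2.2.2.2.2
  -- witnesses
  have h_wit : ∀ t, t ∈ TS → ∃ w y f, G.Adj t w ∧ G.Adj s₂ w ∧ w ≠ b ∧
      G.Adj t y ∧ y ≠ w ∧ G.Adj y f ∧ f ≠ t := by
    intro t ht
    obtain ⟨w, htw, hsw⟩ := ht.2.2.2.2.1
    have hwb : w ≠ b := by
      intro h
      exact TSnca t ht b ⟨h ▸ htw, A2⟩
    by_cases hy : ∃ y, G.Adj t y ∧ y ≠ w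
    · obtain ⟨y, hty, hyw⟩ := hy
      by_cases hf : ∃ f, G.Adj y f ∧ f ≠ t
      · obtain ⟨f, hyf, hft⟩ := hf
        exact ⟨w, y, f, htw, hsw, hwb, hty, hyw, hyf, hft⟩
      · push_neg at hf
        have hNy : G.neighborSet y = {t} := by
          ext z
          simp only [mem_neighborSet, Set.mem_singleton_iff]
          exact ⟨fun hz => hf z hz, fun hz => hz ▸ hty.symm⟩
        have hnadj : ¬ G.Adj t s₂ := by
          intro h
          exact cw3 hg htw hsw.symm h.symm (TSne2 t ht) htw.ne' hsw.ne
        exact (lem2 hU hg hNy hl₂ htw hsw hnadj (TSne2 t ht)).elim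
    · push_neg at hy
      have hNt : G.neighborSet t = {w} := by
        ext z
        simp only [mem_neighborSet, Set.mem_singleton_iff]
        exact ⟨fun hz => hy z hz, fun hz => hz ▸ htw⟩
      exact ((hns₂ w hsw) ⟨t, hNt⟩).elim
  choose wf yf ff hP using h_wit
  have htw : ∀ t (ht : t ∈ TS), G.Adj t (wf t ht) := fun t ht => (hP t ht).1
  have hsw : ∀ t (ht : t ∈ TS), G.Adj s₂ (wf t ht) := fun t ht => (hP t ht).2.1
  have hwb : ∀ t (ht : t ∈ TS), wf t ht ≠ b := fun t ht => (hP t ht).2.2.1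
  have hty : ∀ t (ht : t ∈ TS), G.Adj t (yf t ht) := fun t ht => (hP t ht).2.2.2.1
  have hyw : ∀ t (ht : t ∈ TS), yf t ht ≠ wf t ht := fun t ht => (hP t ht).2.2.2.2.1
  have hyf : ∀ t (ht : t ∈ TS), G.Adj (yf t ht) (ff t ht) := fun t ht => (hP t ht).2.2.2.2.2.1
  have hft : ∀ t (ht : t ∈ TS), ff t ht ≠ t := fun t ht => (hP t ht).2.2.2.2.2.2
  -- derived facts about the witnesses
  have tb : ∀ t (ht : t ∈ TS), t ≠ b := by
    intro t ht h
    obtain ⟨w', htw', hsw'⟩ := ht.2.2.2.2.1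
    rw [h] at htw'
    exact cw3 hg A3 hsw' htw'.symm htw'.ne A3.ne' hsw'.ne'
  have ws1 : ∀ t (ht : t ∈ TS), wf t ht ≠ s₁ := by
    intro t ht h
    exact nadj12 (h ▸ (hsw t ht)).symm
  have wa : ∀ t (ht : t ∈ TS), wf t ht ≠ a := by
    intro t ht h
    exact nadj_as2 (h ▸ (hsw t ht)).symm
  have wl2 : ∀ t (ht : t ∈ TS), wf t ht ≠ l₂ := by
    intro t ht h
    exact TSne2 t ht (eq_of_nbr hl₂ (h ▸ (htw t ht)).symm)
  have ys2 : ∀ t (ht : t ∈ TS), yf t ht ≠ s₂ := by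
    intro t ht h
    have hty' := hty t ht
    rw [h] at hty'
    exact cw3 hg (htw t ht) (hsw t ht).symm hty'.symm (TSne2 t ht) (htw t ht).ne' (hsw t ht).ne
  have ys1 : ∀ t (ht : t ∈ TS), yf t ht ≠ s₁ := by
    intro t ht h
    exact TSnca t ht s₁ ⟨h ▸ (hty t ht), A1.symm⟩
  have ya : ∀ t (ht : t ∈ TS), yf t ht ≠ a := by
    intro t ht h
    exact cw5 hg (h ▸ (hty t ht)) A2 A3 (hsw t ht) (htw t ht).symm
      (tb t ht) ne_as2 (hwb t ht).symm (TSne2 t ht).symm (wa t ht)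
  have yb : ∀ t (ht : t ∈ TS), yf t ht ≠ b := by
    intro t ht h
    exact TSnca t ht b ⟨h ▸ (hty t ht), A2⟩
  have yl2 : ∀ t (ht : t ∈ TS), yf t ht ≠ l₂ := by
    intro t ht h
    exact TSne2 t ht (eq_of_nbr hl₂ (h ▸ (hty t ht)).symm)
  have yl1 : ∀ t (ht : t ∈ TS), yf t ht ≠ l₁ := by
    intro t ht h
    exact TSne1 t ht (eq_of_nbr hl₁ (h ▸ (hty t ht)).symm)
  have fw : ∀ t (ht : t ∈ TS), ff t ht ≠ wf t ht := by
    intro t ht h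
    exact cw3 hg (hty t ht) (h ▸ (hyf t ht)) (htw t ht).symm
      (htw t ht).ne (hty t ht).ne' (hyw t ht).symm
  have fs2 : ∀ t (ht : t ∈ TS), ff t ht ≠ s₂ := by
    intro t ht h
    exact cw4 hg (h ▸ (hyf t ht)).symm (hty t ht).symm (htw t ht) (hsw t ht).symm
      (TSne2 t ht).symm (hyw t ht) (TSne2 t ht) (hyw t ht).symm
  have fb : ∀ t (ht : t ∈ TS), ff t ht ≠ b := by
    intro t ht h
    exact cw5 hg (h ▸ (hyf t ht)).symm (hty t ht).symm (htw t ht) (hsw t ht).symm A3.symm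
      (tb t ht).symm (hyw t ht) (TSne2 t ht) (hwb t ht) (ys2 t ht).symm
  have fa : ∀ t (ht : t ∈ TS), ff t ht ≠ a := by
    intro t ht h
    exact cw6 hg (h ▸ (hyf t ht)).symm (hty t ht).symm (htw t ht) (hsw t ht).symm A3.symm A2.symm
      (TSnea t ht).symm (hyw t ht) (TSne2 t ht) (hwb t ht) ne_as2.symm (yb t ht).symm
  have fs1 : ∀ t (ht : t ∈ TS), ff t ht ≠ s₁ := by
    intro t ht h
    exact cw7 hg (h ▸ (hyf t ht)).symm (hty t ht).symm (htw t ht) (hsw t ht).symm A3.symm A2.symm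
      A1.symm (TSne1 t ht).symm (hyw t ht) (TSne2 t ht) (hwb t ht) ne_as2.symm ne_s1b.symm
      (ya t ht).symm
  have fl1 : ∀ t (ht : t ∈ TS), ff t ht ≠ l₁ := by
    intro t ht h
    exact ys1 t ht (eq_of_nbr hl₁ (h ▸ (hyf t ht)).symm)
  have fl2 : ∀ t (ht : t ∈ TS), ff t ht ≠ l₂ := by
    intro t ht h
    exact ys2 t ht (eq_of_nbr hl₂ (h ▸ (hyf t ht)).symm)
  -- main exclusions
  have X2 : ∀ t (ht : t ∈ TS), ¬ G.Adj (ff t ht) s₁ := by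
    intro t ht h
    exact cw8 hg (hyf t ht).symm (hty t ht).symm (htw t ht) (hsw t ht).symm A3.symm A2.symm
      A1.symm h.symm (hft t ht) (hyw t ht) (TSne2 t ht) (hwb t ht) ne_as2.symm ne_s1b.symm
      (fa t ht).symm (ys1 t ht).symm
  have X1 : ∀ t (ht : t ∈ TS), ∀ z, ¬(G.Adj (ff t ht) z ∧ G.Adj s₁ z) := by
    rintro t ht z ⟨h1, h2⟩
    by_cases hza : z = a
    · rw [hza] at h1
      exact cw7 hg (hyf t ht).symm (hty t ht).symm (htw t ht) (hsw t ht).symm A3.symm A2.symm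
        h1.symm (hft t ht) (hyw t ht) (TSne2 t ht) (hwb t ht) ne_as2.symm (fb t ht).symm
        (ya t ht).symm
    by_cases hzy : z = yf t ht
    · rw [hzy] at h2
      exact cw7 hg (hty t ht).symm (htw t ht) (hsw t ht).symm A3.symm A2.symm A1.symm h2
        (hyw t ht) (TSne2 t ht) (hwb t ht) ne_as2.symm ne_s1b.symm (ya t ht).symm
        (TSne1 t ht).symm
    exact cw9 hg (hyf t ht).symm (hty t ht).symm (htw t ht) (hsw t ht).symm A3.symm A2.symm
      A1.symm h2 h1.symm (hft t ht) (hyw t ht) (TSne2 t ht) (hwb t ht) ne_as2.symm ne_s1b.symm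
      (fun he => hza he.symm) (fs1 t ht).symm hzy
  have X4 : ∀ t (ht : t ∈ TS), ¬ G.Adj (ff t ht) s₂ := by
    intro t ht h
    exact cw5 hg (hyf t ht).symm (hty t ht).symm (htw t ht) (hsw t ht).symm h.symm
      (hft t ht) (hyw t ht) (TSne2 t ht) (fw t ht).symm (ys2 t ht).symm
  have X5 : ∀ t (ht : t ∈ TS), ∀ z, ¬(G.Adj (ff t ht) z ∧ G.Adj s₂ z) := by
    rintro t ht z ⟨h1, h2⟩
    by_cases hzw : z = wf t ht
    · rw [hzw] at h1
      exact cw4 hg (hyf t ht).symm (hty t ht).symm (htw t ht) h1.symm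
        (hft t ht) (hyw t ht) (hft t ht).symm (hyw t ht).symm
    by_cases hzy : z = yf t ht
    · rw [hzy] at h2
      exact cw4 hg (hty t ht).symm (htw t ht) (hsw t ht).symm h2
        (hyw t ht) (TSne2 t ht) (hyw t ht).symm (TSne2 t ht).symm
    exact cw6 hg (hyf t ht).symm (hty t ht).symm (htw t ht) (hsw t ht).symm h2 h1.symm
      (hft t ht) (hyw t ht) (TSne2 t ht) (fun he => hzw he.symm) (fs2 t ht).symm hzy
  have X3 : ∀ t (ht : t ∈ TS), ∀ z, ¬(G.Adj (ff t ht) z ∧ G.Adj a z) := by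
    rintro t ht z ⟨h1, h2⟩
    by_cases hzb : z = b
    · rw [hzb] at h1
      exact cw6 hg (hyf t ht).symm (hty t ht).symm (htw t ht) (hsw t ht).symm A3.symm h1.symm
        (hft t ht) (hyw t ht) (TSne2 t ht) (hwb t ht) (fs2 t ht).symm (yb t ht).symm
    by_cases hzy : z = yf t ht
    · rw [hzy] at h2
      exact TSnca t ht (yf t ht) ⟨hty t ht, h2⟩
    exact cw8 hg (hyf t ht).symm (hty t ht).symm (htw t ht) (hsw t ht).symm A3.symm A2.symm
      h2 h1.symm (hft t ht) (hyw t ht) (TSne2 t ht) (hwb t ht) ne_as2.symm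
      (fun he => hzb he.symm) (fa t ht).symm hzy
  -- pairwise exclusion among chosen vertices
  have PW : ∀ t₁ (h₁ : t₁ ∈ TS), ∀ t₂ (h₂ : t₂ ∈ TS), ff t₁ h₁ ≠ ff t₂ h₂ →
      ∀ z, ¬(G.Adj (ff t₁ h₁) z ∧ G.Adj (ff t₂ h₂) z) := by
    rintro t₁ h₁ t₂ h₂ hff z ⟨hz1, hz2⟩
    have hne_t : t₁ ≠ t₂ := by rintro rfl; exact hff rfl
    by_cases hww : wf t₁ h₁ = wf t₂ h₂
    · -- common middle vertex
      have htw2' : G.Adj t₂ (wf t₁ h₁) := by rw [hww]; exact htw t₂ h₂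
      have hyw2' : yf t₂ h₂ ≠ wf t₁ h₁ := by rw [hww]; exact hyw t₂ h₂
      by_cases hzy2 : z = yf t₂ h₂
      · rw [hzy2] at hz1
        by_cases hft2 : ff t₁ h₁ = t₂
        · have h5 : G.Adj (yf t₁ h₁) t₂ := by rw [← hft2]; exact hyf t₁ h₁
          exact cw4 hg (hty t₁ h₁).symm (htw t₁ h₁) htw2'.symm h5.symm
            (hyw t₁ h₁) hne_t (hyw t₁ h₁).symm hne_t.symm
        by_cases hyy : yf t₁ h₁ = yf t₂ h₂
        · have h5 : G.Adj t₂ (yf t₁ h₁) := by rw [hyy]; exact hty t₂ h₂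
          exact cw4 hg (hty t₁ h₁).symm (htw t₁ h₁) htw2'.symm h5
            (hyw t₁ h₁) hne_t (hyw t₁ h₁).symm hne_t.symm
        · exact cw6 hg (hyf t₁ h₁).symm (hty t₁ h₁).symm (htw t₁ h₁) htw2'.symm (hty t₂ h₂)
            hz1.symm (hft t₁ h₁) (hyw t₁ h₁) hne_t hyw2'.symm
            (fun he => hft2 he.symm) (fun he => hyy he.symm)
      by_cases hzy1 : z = yf t₁ h₁
      · rw [hzy1] at hz2
        by_cases hft1 : ff t₂ h₂ = t₁
        · have h5 : G.Adj (yf t₂ h₂) t₁ := by rw [← hft1]; exact hyf t₂ h₂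
          exact cw4 hg (hty t₂ h₂).symm htw2' (htw t₁ h₁).symm h5.symm
            hyw2' hne_t.symm hyw2'.symm hne_t
        by_cases hyy : yf t₁ h₁ = yf t₂ h₂
        · have h5 : G.Adj t₁ (yf t₂ h₂) := by rw [← hyy]; exact hty t₁ h₁
          exact cw4 hg (hty t₂ h₂).symm htw2' (htw t₁ h₁).symm h5
            hyw2' hne_t.symm hyw2'.symm hne_t
        · exact cw6 hg (hyf t₂ h₂).symm (hty t₂ h₂).symm htw2' (htw t₁ h₁).symm (hty t₁ h₁)
            hz2.symm (hft t₂ h₂) hyw2' hne_t.symm (hyw t₁ h₁).symm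
            (fun he => hft1 he.symm) hyy
      · exact cw8 hg (hyf t₁ h₁).symm (hty t₁ h₁).symm (htw t₁ h₁) htw2'.symm (hty t₂ h₂)
          (hyf t₂ h₂) hz2 hz1.symm (hft t₁ h₁) (hyw t₁ h₁) hne_t hyw2'.symm
          (hft t₂ h₂).symm (fun he => hzy2 he.symm) hff.symm hzy1
    · -- distinct middle vertices
      have hww' : wf t₂ h₂ ≠ wf t₁ h₁ := fun he => hww he.symm
      by_cases hzy2 : z = yf t₂ h₂
      · rw [hzy2] at hz1
        by_cases hft2 : ff t₁ h₁ = t₂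
        · have h5 : G.Adj t₂ (yf t₁ h₁) := by rw [← hft2]; exact (hyf t₁ h₁).symm
          by_cases hyw12 : yf t₁ h₁ = wf t₂ h₂
          · have h6 : G.Adj s₂ (yf t₁ h₁) := by rw [hyw12]; exact hsw t₂ h₂
            exact cw4 hg (hty t₁ h₁).symm (htw t₁ h₁) (hsw t₁ h₁).symm h6
              (hyw t₁ h₁) (TSne2 t₁ h₁) (hyw t₁ h₁).symm (TSne2 t₁ h₁).symm
          · exact cw6 hg (hty t₁ h₁).symm (htw t₁ h₁) (hsw t₁ h₁).symm (hsw t₂ h₂)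
              (htw t₂ h₂).symm h5 (hyw t₁ h₁) (TSne2 t₁ h₁) hww (TSne2 t₂ h₂).symm
              (fun he => hyw12 he.symm) hne_t.symm
        by_cases hyy : yf t₁ h₁ = yf t₂ h₂
        · have h5 : G.Adj t₂ (yf t₁ h₁) := by rw [hyy]; exact hty t₂ h₂
          have h7 : yf t₁ h₁ ≠ wf t₂ h₂ := by rw [hyy]; exact hyw t₂ h₂
          exact cw6 hg (hty t₁ h₁).symm (htw t₁ h₁) (hsw t₁ h₁).symm (hsw t₂ h₂)
            (htw t₂ h₂).symm h5 (hyw t₁ h₁) (TSne2 t₁ h₁) hww (TSne2 t₂ h₂).symm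
            (fun he => h7 he.symm) hne_t.symm
        · exact cw8 hg (hyf t₁ h₁).symm (hty t₁ h₁).symm (htw t₁ h₁) (hsw t₁ h₁).symm
            (hsw t₂ h₂) (htw t₂ h₂).symm (hty t₂ h₂) hz1.symm (hft t₁ h₁) (hyw t₁ h₁)
            (TSne2 t₁ h₁) hww (TSne2 t₂ h₂).symm (hyw t₂ h₂).symm
            (fun he => hft2 he.symm) (fun he => hyy he.symm)
      by_cases hzy1 : z = yf t₁ h₁
      · rw [hzy1] at hz2
        by_cases hft1 : ff t₂ h₂ = t₁
        · have h5 : G.Adj t₁ (yf t₂ h₂) := by rw [← hft1]; exact (hyf t₂ h₂).symm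
          by_cases hyw21 : yf t₂ h₂ = wf t₁ h₁
          · have h6 : G.Adj s₂ (yf t₂ h₂) := by rw [hyw21]; exact hsw t₁ h₁
            exact cw4 hg (hty t₂ h₂).symm (htw t₂ h₂) (hsw t₂ h₂).symm h6
              (hyw t₂ h₂) (TSne2 t₂ h₂) (hyw t₂ h₂).symm (TSne2 t₂ h₂).symm
          · exact cw6 hg (hty t₂ h₂).symm (htw t₂ h₂) (hsw t₂ h₂).symm (hsw t₁ h₁)
              (htw t₁ h₁).symm h5 (hyw t₂ h₂) (TSne2 t₂ h₂) hww' (TSne2 t₁ h₁).symm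
              (fun he => hyw21 he.symm) hne_t
        by_cases hyy : yf t₁ h₁ = yf t₂ h₂
        · have h5 : G.Adj t₁ (yf t₂ h₂) := by rw [← hyy]; exact hty t₁ h₁
          have h7 : yf t₂ h₂ ≠ wf t₁ h₁ := by rw [← hyy]; exact hyw t₁ h₁
          exact cw6 hg (hty t₂ h₂).symm (htw t₂ h₂) (hsw t₂ h₂).symm (hsw t₁ h₁)
            (htw t₁ h₁).symm h5 (hyw t₂ h₂) (TSne2 t₂ h₂) hww' (TSne2 t₁ h₁).symm
            (fun he => h7 he.symm) hne_t
        · exact cw8 hg (hyf t₂ h₂).symm (hty t₂ h₂).symm (htw t₂ h₂) (hsw t₂ h₂).symm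
            (hsw t₁ h₁) (htw t₁ h₁).symm (hty t₁ h₁) hz2.symm (hft t₂ h₂) (hyw t₂ h₂)
            (TSne2 t₂ h₂) hww' (TSne2 t₁ h₁).symm (hyw t₁ h₁).symm
            (fun he => hft1 he.symm) hyy
      · exact cw10 hg (hyf t₁ h₁).symm (hty t₁ h₁).symm (htw t₁ h₁) (hsw t₁ h₁).symm
          (hsw t₂ h₂) (htw t₂ h₂).symm (hty t₂ h₂) (hyf t₂ h₂) hz2 hz1.symm
          (hft t₁ h₁) (hyw t₁ h₁) (TSne2 t₁ h₁) hww (TSne2 t₂ h₂).symm (hyw t₂ h₂).symm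
          (hft t₂ h₂).symm (fun he => hzy2 he.symm) hff.symm hzy1
  -- conflict with the leaves, via their supports
  have Xl1 : ∀ t (ht : t ∈ TS), ∀ z, ¬(G.Adj (ff t ht) z ∧ G.Adj l₁ z) := by
    rintro t ht z ⟨u1, u2⟩
    rw [eq_of_nbr hl₁ u2] at u1
    exact X2 t ht u1
  have Xl2 : ∀ t (ht : t ∈ TS), ∀ z, ¬(G.Adj (ff t ht) z ∧ G.Adj l₂ z) := by
    rintro t ht z ⟨u1, u2⟩
    rw [eq_of_nbr hl₂ u2] at u1
    exact X4 t ht u1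
  -- the two sets
  set F : Set V := {v | ∃ t, ∃ ht : t ∈ TS, ff t ht = v} with hFdef
  set SS : Set V := insert l₁ (insert s₁ (insert l₂ (insert s₂ F))) with hSdef
  set TT : Set V := insert s₁ (insert a (insert l₂ F)) with hTdef
  have memS : ∀ u, u ∈ SS ↔ u = l₁ ∨ u = s₁ ∨ u = l₂ ∨ u = s₂ ∨ u ∈ F := by
    intro u; simp [hSdef, Set.mem_insert_iff]
  have memT : ∀ u, u ∈ TT ↔ u = s₁ ∨ u = a ∨ u = l₂ ∨ u ∈ F := by
    intro u; simp [hTdef, Set.mem_insert_iff]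
  have hSpack : IsOpenPacking G SS := by
    intro u hu v hv huv z hz
    rw [memS] at hu hv
    rcases hu with rfl | rfl | rfl | rfl | hu <;> rcases hv with rfl | rfl | rfl | rfl | hv
    · exact huv rfl
    · exact ncl1s1 z hz
    · exact ncl1l2 z hz
    · exact ncl1s2 z hz
    · obtain ⟨t, ht, rfl⟩ := hv; exact Xl1 t ht z ⟨hz.2, hz.1⟩
    · exact ncl1s1 z ⟨hz.2, hz.1⟩
    · exact huv rfl
    · exact ncs1l2 z hz
    · exact ncom12 z hz
    · obtain ⟨t, ht, rfl⟩ := hv; exact X1 t ht z ⟨hz.2, hz.1⟩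
    · exact ncl1l2 z ⟨hz.2, hz.1⟩
    · exact ncs1l2 z ⟨hz.2, hz.1⟩
    · exact huv rfl
    · exact ncl2s2 z hz
    · obtain ⟨t, ht, rfl⟩ := hv; exact Xl2 t ht z ⟨hz.2, hz.1⟩
    · exact ncl1s2 z ⟨hz.2, hz.1⟩
    · exact ncom12 z ⟨hz.2, hz.1⟩
    · exact ncl2s2 z ⟨hz.2, hz.1⟩
    · exact huv rfl
    · obtain ⟨t, ht, rfl⟩ := hv; exact X5 t ht z ⟨hz.2, hz.1⟩
    · obtain ⟨t, ht, rfl⟩ := hu; exact Xl1 t ht z hz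
    · obtain ⟨t, ht, rfl⟩ := hu; exact X1 t ht z hz
    · obtain ⟨t, ht, rfl⟩ := hu; exact Xl2 t ht z hz
    · obtain ⟨t, ht, rfl⟩ := hu; exact X5 t ht z hz
    · obtain ⟨t, ht, rfl⟩ := hu; obtain ⟨t', ht', rfl⟩ := hv; exact PW t ht t' ht' huv z hz
  have hTpack : IsOpenPacking G TT := by
    intro u hu v hv huv z hz
    rw [memT] at hu hv
    rcases hu with rfl | rfl | rfl | hu <;> rcases hv with rfl | rfl | rfl | hv
    · exact huv rfl
    · exact ncs1a z hz
    · exact ncs1l2 z hz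
    · obtain ⟨t, ht, rfl⟩ := hv; exact X1 t ht z ⟨hz.2, hz.1⟩
    · exact ncs1a z ⟨hz.2, hz.1⟩
    · exact huv rfl
    · exact ncal2 z hz
    · obtain ⟨t, ht, rfl⟩ := hv; exact X3 t ht z ⟨hz.2, hz.1⟩
    · exact ncs1l2 z ⟨hz.2, hz.1⟩
    · exact ncal2 z ⟨hz.2, hz.1⟩
    · exact huv rfl
    · obtain ⟨t, ht, rfl⟩ := hv; exact Xl2 t ht z ⟨hz.2, hz.1⟩
    · obtain ⟨t, ht, rfl⟩ := hu; exact X1 t ht z hz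
    · obtain ⟨t, ht, rfl⟩ := hu; exact X3 t ht z hz
    · obtain ⟨t, ht, rfl⟩ := hu; exact Xl2 t ht z hz
    · obtain ⟨t, ht, rfl⟩ := hu; obtain ⟨t', ht', rfl⟩ := hv; exact PW t ht t' ht' huv z hz
  have hs₁T : s₁ ∈ TT := by rw [memT]; exact Or.inl rfl
  have haT : a ∈ TT := by rw [memT]; exact Or.inr (Or.inl rfl)
  have hl₂T : l₂ ∈ TT := by rw [memT]; exact Or.inr (Or.inr (Or.inl rfl))
  have hFT : ∀ u ∈ F, u ∈ TT := by intro u hu; rw [memT]; exact Or.inr (Or.inr (Or.inr hu))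
  have hcov : ∀ v, (v ∈ SS ∨ ∃ s ∈ SS, v ≠ s ∧ ∃ z, G.Adj v z ∧ G.Adj s z) →
      (v ∈ TT ∨ ∃ t ∈ TT, v ≠ t ∧ ∃ z, G.Adj v z ∧ G.Adj t z) := by
    intro v hv
    rcases hv with hv | ⟨s, hs, hvs, z, u1, u2⟩
    · rw [memS] at hv
      rcases hv with h | h | h | h | hv
      · rw [h]
        exact Or.inr ⟨a, haT, ne_l1a, s₁, hL1, A1.symm⟩
      · rw [h]; exact Or.inl hs₁T
      · rw [h]; exact Or.inl hl₂T
      · rw [h]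
        exact Or.inr ⟨a, haT, ne_as2.symm, b, A3.symm, A2⟩
      · exact Or.inl (hFT _ hv)
    · rw [memS] at hs
      rcases hs with h | h | h | h | hs
      · rw [h] at u2
        have hz1 : z = s₁ := eq_of_nbr hl₁ u2
        rw [hz1] at u1
        by_cases hva : v = a
        · exact Or.inl (by rw [hva]; exact haT)
        · exact Or.inr ⟨a, haT, hva, s₁, u1, A1.symm⟩
      · rw [h] at u2 hvs
        exact Or.inr ⟨s₁, hs₁T, hvs, z, u1, u2⟩
      · rw [h] at u2 hvs
        exact Or.inr ⟨l₂, hl₂T, hvs, z, u1, u2⟩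
      · rw [h] at u2 hvs
        by_contra hcon
        have hvT : v ∉ TT := fun hx => hcon (Or.inl hx)
        have hcon2 : ∀ t, t ∈ TT → v ≠ t → ∀ z', ¬(G.Adj v z' ∧ G.Adj t z') :=
          fun t ht hvt z' hz' => hcon (Or.inr ⟨t, ht, hvt, z', hz'⟩)
        have hvTS : v ∈ TS := by
          rw [hTSdef]
          refine ⟨hvs, ?_, ?_, ?_, ⟨z, u1, u2⟩, ?_, ?_, ?_⟩
          · intro h'; exact hvT (by rw [h']; exact hs₁T)
          · intro h'; exact hvT (by rw [h']; exact haT)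
          · intro h'; exact hvT (by rw [h']; exact hl₂T)
          · intro z' hz'
            by_cases hv1 : v = s₁
            · exact hvT (by rw [hv1]; exact hs₁T)
            · exact hcon2 s₁ hs₁T hv1 z' hz'
          · intro z' hz'
            by_cases hv1 : v = a
            · exact hvT (by rw [hv1]; exact haT)
            · exact hcon2 a haT hv1 z' hz'
          · intro z' hz'
            by_cases hv1 : v = l₂
            · exact hvT (by rw [hv1]; exact hl₂T)
            · exact hcon2 l₂ hl₂T hv1 z' hz'
        exact hcon2 (ff v hvTS) (hFT _ ⟨v, hvTS, rfl⟩) (hft v hvTS).symm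
          (yf v hvTS) ⟨hty v hvTS, (hyf v hvTS).symm⟩
      · exact Or.inr ⟨s, hFT _ hs, hvs, z, u1, u2⟩
  -- cardinalities
  have hs₂F : s₂ ∉ F := by rintro ⟨t, ht, h⟩; exact fs2 t ht h
  have hl₂F : l₂ ∉ F := by rintro ⟨t, ht, h⟩; exact fl2 t ht h
  have hs₁F : s₁ ∉ F := by rintro ⟨t, ht, h⟩; exact fs1 t ht h
  have hl₁F : l₁ ∉ F := by rintro ⟨t, ht, h⟩; exact fl1 t ht h
  have haF : a ∉ F := by rintro ⟨t, ht, h⟩; exact fa t ht h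
  have c1 : (insert s₂ F).ncard = F.ncard + 1 := Set.ncard_insert_of_notMem hs₂F
  have c2 : (insert l₂ (insert s₂ F)).ncard = F.ncard + 2 := by
    rw [Set.ncard_insert_of_notMem (by simp [ne_l2s2, hl₂F]), c1]
  have c3 : (insert s₁ (insert l₂ (insert s₂ F))).ncard = F.ncard + 3 := by
    rw [Set.ncard_insert_of_notMem (by simp [ne_s1s2, hs₁F, ne_s1l2]), c2]
  have c4 : SS.ncard = F.ncard + 4 := by
    rw [hSdef, Set.ncard_insert_of_notMem (by simp [ne_l1s1, ne_l1l2, ne_l1s2, hl₁F]), c3]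
  have c5 : (insert l₂ F).ncard = F.ncard + 1 := Set.ncard_insert_of_notMem hl₂F
  have c6 : (insert a (insert l₂ F)).ncard = F.ncard + 2 := by
    rw [Set.ncard_insert_of_notMem (by simp [ne_al2, haF]), c5]
  have c7 : TT.ncard = F.ncard + 3 := by
    rw [hTdef, Set.ncard_insert_of_notMem
      (by simp [ne_s1a, hs₁F, ne_s1l2]), c6]
  exact lemA hU SS TT hSpack hTpack hcov (by omega)



lemma dist4 (hU : InU G) (hg : 15 ≤ G.egirth)
    {s₁ s₂ a b c l₁ l₂ : V}
    (hl₁ : G.neighborSet l₁ = {s₁}) (hl₂ : G.neighborSet l₂ = {s₂})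
    (hns₁ : ∀ u, G.Adj s₁ u → ¬ IsSupport G u)
    (hns₂ : ∀ u, G.Adj s₂ u → ¬ IsSupport G u)
    (A1 : G.Adj s₁ a) (A2 : G.Adj a b) (A3 : G.Adj b c) (A4 : G.Adj c s₂)
    (hd : G.dist s₁ s₂ = 4) : False := by
  classical
  have hL1 : G.Adj l₁ s₁ := adj_of_nbr hl₁
  have hL2 : G.Adj l₂ s₂ := adj_of_nbr hl₂
  have nadj12 : ¬ G.Adj s₁ s₂ := by
    intro h
    have h2 := SimpleGraph.dist_le (Walk.cons h Walk.nil)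
    rw [hd] at h2; simp at h2
  have ncom12 : ∀ z, ¬(G.Adj s₁ z ∧ G.Adj s₂ z) := by
    rintro z ⟨h1, h2⟩
    have h3 := SimpleGraph.dist_le (Walk.cons h1 (Walk.cons h2.symm Walk.nil))
    rw [hd] at h3; simp at h3
  have nadj_s1b : ¬ G.Adj s₁ b := by
    intro h
    have h3 := SimpleGraph.dist_le (Walk.cons h (Walk.cons A3 (Walk.cons A4 Walk.nil)))
    rw [hd] at h3; simp at h3
  have nadj_s1c : ¬ G.Adj s₁ c := by
    intro h
    have h3 := SimpleGraph.dist_le (Walk.cons h (Walk.cons A4 Walk.nil))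
    rw [hd] at h3; simp at h3
  have nadj_as2 : ¬ G.Adj a s₂ := by
    intro h
    have h3 := SimpleGraph.dist_le (Walk.cons A1 (Walk.cons h Walk.nil))
    rw [hd] at h3; simp at h3
  have nadj_bs2 : ¬ G.Adj b s₂ := by
    intro h
    have h3 := SimpleGraph.dist_le (Walk.cons A1 (Walk.cons A2 (Walk.cons h Walk.nil)))
    rw [hd] at h3; simp at h3
  have nadj_ac : ¬ G.Adj a c := by
    intro h
    have h3 := SimpleGraph.dist_le (Walk.cons A1 (Walk.cons h (Walk.cons A4 Walk.nil)))
    rw [hd] at h3; simp at h3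
  have ne_s1a : s₁ ≠ a := A1.ne
  have ne_ab : a ≠ b := A2.ne
  have ne_bc : b ≠ c := A3.ne
  have ne_cs2 : c ≠ s₂ := A4.ne
  have ne_s1b : s₁ ≠ b := by intro h; exact nadj_s1c (h ▸ A3)
  have ne_s1c : s₁ ≠ c := by intro h; exact nadj12 (h ▸ A4)
  have ne_s1s2 : s₁ ≠ s₂ := by
    intro h; rw [h, SimpleGraph.dist_self] at hd; omega
  have ne_ac : a ≠ c := by intro h; exact nadj_as2 (h ▸ A4)
  have ne_as2 : a ≠ s₂ := by intro h; exact nadj12 (h ▸ A1)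
  have ne_bs2 : b ≠ s₂ := by intro h; exact nadj_as2 (h ▸ A2)
  have ne_l1s1 : l₁ ≠ s₁ := hL1.ne
  have ne_l2s2 : l₂ ≠ s₂ := hL2.ne
  have ne_l1l2 : l₁ ≠ l₂ := by
    intro h
    have h2 : ({s₁} : Set V) = {s₂} := by rw [← hl₁, h, hl₂]
    exact ne_s1s2 (Set.singleton_eq_singleton_iff.mp h2)
  have ne_l1s2 : l₁ ≠ s₂ := by intro h; exact nadj12 (h ▸ hL1).symm
  have ne_l1a : l₁ ≠ a := by intro h; exact ne_s1b (eq_of_nbr hl₁ (h ▸ A2)).symm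
  have ne_l2s1 : l₂ ≠ s₁ := by intro h; exact nadj12 (h ▸ hL2)
  have ne_l2a : l₂ ≠ a := by intro h; exact ne_bs2 (eq_of_nbr hl₂ (h ▸ A2))
  have ne_l2b : l₂ ≠ b := by intro h; exact ne_cs2 (eq_of_nbr hl₂ (h ▸ A3))
  have ne_l1b : l₁ ≠ b := by intro h; exact ne_s1c (eq_of_nbr hl₁ (h ▸ A3)).symm
  have ne_s1l2 : s₁ ≠ l₂ := fun h => ne_l2s1 h.symm
  have ne_al2 : a ≠ l₂ := fun h => ne_l2a h.symm
  have ne_bl2 : b ≠ l₂ := fun h => ne_l2b h.symm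
  -- core non-conflicts
  have ncl1s1 : ∀ z, ¬(G.Adj l₁ z ∧ G.Adj s₁ z) := by
    rintro z ⟨u1, u2⟩
    rw [eq_of_nbr hl₁ u1] at u2
    exact G.loopless.irrefl _ u2
  have ncl1l2 : ∀ z, ¬(G.Adj l₁ z ∧ G.Adj l₂ z) := by
    rintro z ⟨u1, u2⟩
    have e1 := eq_of_nbr hl₁ u1
    have e2 := eq_of_nbr hl₂ u2
    rw [e1] at e2
    exact ne_s1s2 e2
  have ncl1s2 : ∀ z, ¬(G.Adj l₁ z ∧ G.Adj s₂ z) := by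
    rintro z ⟨u1, u2⟩
    rw [eq_of_nbr hl₁ u1] at u2
    exact nadj12 u2.symm
  have ncs1l2 : ∀ z, ¬(G.Adj s₁ z ∧ G.Adj l₂ z) := by
    rintro z ⟨u1, u2⟩
    rw [eq_of_nbr hl₂ u2] at u1
    exact nadj12 u1
  have ncl2s2 : ∀ z, ¬(G.Adj l₂ z ∧ G.Adj s₂ z) := by
    rintro z ⟨u1, u2⟩
    rw [eq_of_nbr hl₂ u1] at u2
    exact G.loopless.irrefl _ u2
  have ncab : ∀ z, ¬(G.Adj a z ∧ G.Adj b z) := by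
    rintro z ⟨u1, u2⟩
    exact cw3 hg A2 u2 u1.symm u1.ne ne_ab.symm u2.ne'
  have ncal2 : ∀ z, ¬(G.Adj a z ∧ G.Adj l₂ z) := by
    rintro z ⟨u1, u2⟩
    rw [eq_of_nbr hl₂ u2] at u1
    exact nadj_as2 u1
  have ncbl2 : ∀ z, ¬(G.Adj b z ∧ G.Adj l₂ z) := by
    rintro z ⟨u1, u2⟩
    rw [eq_of_nbr hl₂ u2] at u1
    exact nadj_bs2 u1
  -- target sets
  set TS₁ : Set V := {t | t ≠ s₁ ∧ t ≠ a ∧ t ≠ b ∧ t ≠ l₂ ∧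
      (∃ w, G.Adj t w ∧ G.Adj s₁ w) ∧
      (∀ z, ¬(G.Adj t z ∧ G.Adj a z)) ∧ (∀ z, ¬(G.Adj t z ∧ G.Adj b z)) ∧
      (∀ z, ¬(G.Adj t z ∧ G.Adj l₂ z))} with hTS1def
  set TS₂ : Set V := {t | t ≠ s₂ ∧ t ≠ a ∧ t ≠ b ∧ t ≠ l₂ ∧
      (∃ w, G.Adj t w ∧ G.Adj s₂ w) ∧
      (∀ z, ¬(G.Adj t z ∧ G.Adj a z)) ∧ (∀ z, ¬(G.Adj t z ∧ G.Adj b z)) ∧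
      (∀ z, ¬(G.Adj t z ∧ G.Adj l₂ z))} with hTS2def
  have T1e1 : ∀ t, t ∈ TS₁ → t ≠ s₁ := fun t ht => ht.1
  have T1ea : ∀ t, t ∈ TS₁ → t ≠ a := fun t ht => ht.2.1
  have T1eb : ∀ t, t ∈ TS₁ → t ≠ b := fun t ht => ht.2.2.1
  have T1el2 : ∀ t, t ∈ TS₁ → t ≠ l₂ := fun t ht => ht.2.2.2.1
  have T1nca : ∀ t, t ∈ TS₁ → ∀ z, ¬(G.Adj t z ∧ G.Adj a z) := fun t ht => ht.2.2.2.2.2.1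
  have T1ncb : ∀ t, t ∈ TS₁ → ∀ z, ¬(G.Adj t z ∧ G.Adj b z) := fun t ht => ht.2.2.2.2.2.2.1
  have T1ncl2 : ∀ t, t ∈ TS₁ → ∀ z, ¬(G.Adj t z ∧ G.Adj l₂ z) := fun t ht => ht.2.2.2.2.2.2.2
  have T2e2 : ∀ t, t ∈ TS₂ → t ≠ s₂ := fun t ht => ht.1
  have T2ea : ∀ t, t ∈ TS₂ → t ≠ a := fun t ht => ht.2.1
  have T2eb : ∀ t, t ∈ TS₂ → t ≠ b := fun t ht => ht.2.2.1
  have T2el2 : ∀ t, t ∈ TS₂ → t ≠ l₂ := fun t ht => ht.2.2.2.1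
  have T2nca : ∀ t, t ∈ TS₂ → ∀ z, ¬(G.Adj t z ∧ G.Adj a z) := fun t ht => ht.2.2.2.2.2.1
  have T2ncb : ∀ t, t ∈ TS₂ → ∀ z, ¬(G.Adj t z ∧ G.Adj b z) := fun t ht => ht.2.2.2.2.2.2.1
  have T2ncl2 : ∀ t, t ∈ TS₂ → ∀ z, ¬(G.Adj t z ∧ G.Adj l₂ z) := fun t ht => ht.2.2.2.2.2.2.2
  -- witnesses for family 1
  have h_wit1 : ∀ t, t ∈ TS₁ → ∃ w y f, G.Adj t w ∧ G.Adj s₁ w ∧ w ≠ a ∧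
      G.Adj t y ∧ y ≠ w ∧ G.Adj y f ∧ f ≠ t := by
    intro t ht
    obtain ⟨w, htw, hsw⟩ := ht.2.2.2.2.1
    have hwa : w ≠ a := by
      intro h
      rw [h] at htw
      exact T1ncb t ht a ⟨htw, A2.symm⟩
    by_cases hy : ∃ y, G.Adj t y ∧ y ≠ w
    · obtain ⟨y, hty, hyw⟩ := hy
      by_cases hf : ∃ f, G.Adj y f ∧ f ≠ t
      · obtain ⟨f, hyf, hft⟩ := hf
        exact ⟨w, y, f, htw, hsw, hwa, hty, hyw, hyf, hft⟩
      · push_neg at hf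
        have hNy : G.neighborSet y = {t} := by
          ext z
          simp only [mem_neighborSet, Set.mem_singleton_iff]
          exact ⟨fun hz => hf z hz, fun hz => hz ▸ hty.symm⟩
        have hnadj : ¬ G.Adj t s₁ := by
          intro h
          exact cw3 hg htw hsw.symm h.symm (T1e1 t ht) htw.ne' hsw.ne
        exact (lem2 hU hg hNy hl₁ htw hsw hnadj (T1e1 t ht)).elim
    · push_neg at hy
      have hNt : G.neighborSet t = {w} := by
        ext z
        simp only [mem_neighborSet, Set.mem_singleton_iff]
        exact ⟨fun hz => hy z hz, fun hz => hz ▸ htw⟩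
      exact ((hns₁ w hsw) ⟨t, hNt⟩).elim
  have h_wit2 : ∀ t, t ∈ TS₂ → ∃ w y f, G.Adj t w ∧ G.Adj s₂ w ∧ w ≠ c ∧
      G.Adj t y ∧ y ≠ w ∧ G.Adj y f ∧ f ≠ t := by
    intro t ht
    obtain ⟨w, htw, hsw⟩ := ht.2.2.2.2.1
    have hwc : w ≠ c := by
      intro h
      exact T2ncb t ht c ⟨h ▸ htw, A3⟩
    by_cases hy : ∃ y, G.Adj t y ∧ y ≠ w
    · obtain ⟨y, hty, hyw⟩ := hy
      by_cases hf : ∃ f, G.Adj y f ∧ f ≠ t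
      · obtain ⟨f, hyf, hft⟩ := hf
        exact ⟨w, y, f, htw, hsw, hwc, hty, hyw, hyf, hft⟩
      · push_neg at hf
        have hNy : G.neighborSet y = {t} := by
          ext z
          simp only [mem_neighborSet, Set.mem_singleton_iff]
          exact ⟨fun hz => hf z hz, fun hz => hz ▸ hty.symm⟩
        have hnadj : ¬ G.Adj t s₂ := by
          intro h
          exact cw3 hg htw hsw.symm h.symm (T2e2 t ht) htw.ne' hsw.ne
        exact (lem2 hU hg hNy hl₂ htw hsw hnadj (T2e2 t ht)).elim
    · push_neg at hy
      have hNt : G.neighborSet t = {w} := by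
        ext z
        simp only [mem_neighborSet, Set.mem_singleton_iff]
        exact ⟨fun hz => hy z hz, fun hz => hz ▸ htw⟩
      exact ((hns₂ w hsw) ⟨t, hNt⟩).elim
  choose w1 y1 f1 hP1 using h_wit1
  choose w2 y2 f2 hP2 using h_wit2
  have htw1 : ∀ t (ht : t ∈ TS₁), G.Adj t (w1 t ht) := fun t ht => (hP1 t ht).1
  have hsw1 : ∀ t (ht : t ∈ TS₁), G.Adj s₁ (w1 t ht) := fun t ht => (hP1 t ht).2.1
  have hwa1 : ∀ t (ht : t ∈ TS₁), w1 t ht ≠ a := fun t ht => (hP1 t ht).2.2.1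
  have hty1 : ∀ t (ht : t ∈ TS₁), G.Adj t (y1 t ht) := fun t ht => (hP1 t ht).2.2.2.1
  have hyw1 : ∀ t (ht : t ∈ TS₁), y1 t ht ≠ w1 t ht := fun t ht => (hP1 t ht).2.2.2.2.1
  have hyf1 : ∀ t (ht : t ∈ TS₁), G.Adj (y1 t ht) (f1 t ht) := fun t ht => (hP1 t ht).2.2.2.2.2.1
  have hft1 : ∀ t (ht : t ∈ TS₁), f1 t ht ≠ t := fun t ht => (hP1 t ht).2.2.2.2.2.2
  have htw2 : ∀ t (ht : t ∈ TS₂), G.Adj t (w2 t ht) := fun t ht => (hP2 t ht).1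
  have hsw2 : ∀ t (ht : t ∈ TS₂), G.Adj s₂ (w2 t ht) := fun t ht => (hP2 t ht).2.1
  have hwc2 : ∀ t (ht : t ∈ TS₂), w2 t ht ≠ c := fun t ht => (hP2 t ht).2.2.1
  have hty2 : ∀ t (ht : t ∈ TS₂), G.Adj t (y2 t ht) := fun t ht => (hP2 t ht).2.2.2.1
  have hyw2 : ∀ t (ht : t ∈ TS₂), y2 t ht ≠ w2 t ht := fun t ht => (hP2 t ht).2.2.2.2.1
  have hyf2 : ∀ t (ht : t ∈ TS₂), G.Adj (y2 t ht) (f2 t ht) := fun t ht => (hP2 t ht).2.2.2.2.2.1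
  have hft2 : ∀ t (ht : t ∈ TS₂), f2 t ht ≠ t := fun t ht => (hP2 t ht).2.2.2.2.2.2
  -- family 1 derived facts
  have t1c : ∀ t (ht : t ∈ TS₁), t ≠ c := by
    intro t ht h
    obtain ⟨w, htw, hsw⟩ := ht.2.2.2.2.1
    rw [h] at htw
    by_cases hwa : w = a
    · rw [hwa] at htw; exact nadj_ac htw.symm
    by_cases hwb : w = b
    · rw [hwb] at hsw; exact nadj_s1b hsw
    exact cw5 hg htw.symm A3.symm A2.symm A1.symm hsw hwb ne_ac.symm ne_s1b.symm
      (fun he => hwa he.symm) ne_s1c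
  have t1s2 : ∀ t (ht : t ∈ TS₁), t ≠ s₂ := by
    intro t ht h
    obtain ⟨w, htw, hsw⟩ := ht.2.2.2.2.1
    rw [h] at htw
    exact ncom12 w ⟨hsw, htw⟩
  have t1l1 : ∀ t (ht : t ∈ TS₁), t ≠ l₁ := by
    intro t ht h
    obtain ⟨w, htw, hsw⟩ := ht.2.2.2.2.1
    rw [h] at htw
    rw [eq_of_nbr hl₁ htw] at hsw
    exact G.loopless.irrefl _ hsw
  have w1b : ∀ t (ht : t ∈ TS₁), w1 t ht ≠ b := fun t ht h => nadj_s1b (h ▸ hsw1 t ht)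
  have w1c : ∀ t (ht : t ∈ TS₁), w1 t ht ≠ c := fun t ht h => nadj_s1c (h ▸ hsw1 t ht)
  have w1s2 : ∀ t (ht : t ∈ TS₁), w1 t ht ≠ s₂ := fun t ht h => nadj12 (h ▸ hsw1 t ht)
  have w1l2 : ∀ t (ht : t ∈ TS₁), w1 t ht ≠ l₂ := fun t ht h =>
    ne_s1s2 (eq_of_nbr hl₂ (h ▸ hsw1 t ht).symm)
  have w1l1 : ∀ t (ht : t ∈ TS₁), w1 t ht ≠ l₁ := fun t ht h =>
    T1e1 t ht (eq_of_nbr hl₁ (h ▸ htw1 t ht).symm)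
  have y1s1 : ∀ t (ht : t ∈ TS₁), y1 t ht ≠ s₁ := by
    intro t ht h
    exact cw3 hg (htw1 t ht) (hsw1 t ht).symm (h ▸ hty1 t ht).symm (T1e1 t ht)
      (htw1 t ht).ne' (hsw1 t ht).ne
  have y1a : ∀ t (ht : t ∈ TS₁), y1 t ht ≠ a := fun t ht h =>
    T1ncb t ht a ⟨h ▸ hty1 t ht, A2.symm⟩
  have y1b : ∀ t (ht : t ∈ TS₁), y1 t ht ≠ b := fun t ht h =>
    T1nca t ht b ⟨h ▸ hty1 t ht, A2⟩
  have y1c : ∀ t (ht : t ∈ TS₁), y1 t ht ≠ c := fun t ht h =>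
    T1ncb t ht c ⟨h ▸ hty1 t ht, A3⟩
  have y1s2 : ∀ t (ht : t ∈ TS₁), y1 t ht ≠ s₂ := fun t ht h =>
    T1ncl2 t ht s₂ ⟨h ▸ hty1 t ht, hL2⟩
  have y1l1 : ∀ t (ht : t ∈ TS₁), y1 t ht ≠ l₁ := fun t ht h =>
    T1e1 t ht (eq_of_nbr hl₁ (h ▸ hty1 t ht).symm)
  have y1l2 : ∀ t (ht : t ∈ TS₁), y1 t ht ≠ l₂ := fun t ht h =>
    t1s2 t ht (eq_of_nbr hl₂ (h ▸ hty1 t ht).symm)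
  have f1w : ∀ t (ht : t ∈ TS₁), f1 t ht ≠ w1 t ht := by
    intro t ht h
    have h5 : G.Adj (y1 t ht) (w1 t ht) := by rw [← h]; exact hyf1 t ht
    exact cw3 hg (hty1 t ht) h5 (htw1 t ht).symm (htw1 t ht).ne
      (hty1 t ht).ne' (hyw1 t ht).symm
  have f1s1 : ∀ t (ht : t ∈ TS₁), f1 t ht ≠ s₁ := by
    intro t ht h
    have h5 : G.Adj (y1 t ht) s₁ := by rw [← h]; exact hyf1 t ht
    exact cw4 hg h5.symm (hty1 t ht).symm (htw1 t ht) (hsw1 t ht).symm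
      (T1e1 t ht).symm (hyw1 t ht) (T1e1 t ht) (hyw1 t ht).symm
  have f1a : ∀ t (ht : t ∈ TS₁), f1 t ht ≠ a := by
    intro t ht h
    have h5 : G.Adj (y1 t ht) a := by rw [← h]; exact hyf1 t ht
    exact cw5 hg h5.symm (hty1 t ht).symm (htw1 t ht) (hsw1 t ht).symm A1
      (T1ea t ht).symm (hyw1 t ht) (T1e1 t ht) (hwa1 t ht) (y1s1 t ht).symm
  have f1b : ∀ t (ht : t ∈ TS₁), f1 t ht ≠ b := by
    intro t ht h
    have h5 : G.Adj b (y1 t ht) := by rw [← h]; exact (hyf1 t ht).symm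
    exact T1ncb t ht (y1 t ht) ⟨hty1 t ht, h5⟩
  have f1c : ∀ t (ht : t ∈ TS₁), f1 t ht ≠ c := by
    intro t ht h
    have h5 : G.Adj (y1 t ht) c := by rw [← h]; exact hyf1 t ht
    exact cw7 hg h5.symm (hty1 t ht).symm (htw1 t ht) (hsw1 t ht).symm A1 A2 A3
      (t1c t ht).symm (hyw1 t ht) (T1e1 t ht) (hwa1 t ht) ne_s1b ne_ac (y1b t ht).symm
  have f1s2 : ∀ t (ht : t ∈ TS₁), f1 t ht ≠ s₂ := by
    intro t ht h
    have h5 : G.Adj (y1 t ht) s₂ := by rw [← h]; exact hyf1 t ht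
    exact cw8 hg h5.symm (hty1 t ht).symm (htw1 t ht) (hsw1 t ht).symm A1 A2 A3 A4
      (t1s2 t ht).symm (hyw1 t ht) (T1e1 t ht) (hwa1 t ht) ne_s1b ne_ac ne_bs2 (y1c t ht).symm
  have f1l1 : ∀ t (ht : t ∈ TS₁), f1 t ht ≠ l₁ := fun t ht h =>
    y1s1 t ht (eq_of_nbr hl₁ (h ▸ hyf1 t ht).symm)
  have f1l2 : ∀ t (ht : t ∈ TS₁), f1 t ht ≠ l₂ := fun t ht h =>
    y1s2 t ht (eq_of_nbr hl₂ (h ▸ hyf1 t ht).symm)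
  -- family 1 exclusions
  have X1adj : ∀ t (ht : t ∈ TS₁), ¬ G.Adj (f1 t ht) s₁ := by
    intro t ht h
    exact cw5 hg (hyf1 t ht).symm (hty1 t ht).symm (htw1 t ht) (hsw1 t ht).symm h.symm
      (hft1 t ht) (hyw1 t ht) (T1e1 t ht) (f1w t ht).symm (y1s1 t ht).symm
  have X1c : ∀ t (ht : t ∈ TS₁), ∀ z, ¬(G.Adj (f1 t ht) z ∧ G.Adj s₁ z) := by
    rintro t ht z ⟨h1, h2⟩
    by_cases hzw : z = w1 t ht
    · rw [hzw] at h1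
      exact cw4 hg (hyf1 t ht).symm (hty1 t ht).symm (htw1 t ht) h1.symm
        (hft1 t ht) (hyw1 t ht) (hft1 t ht).symm (hyw1 t ht).symm
    by_cases hzy : z = y1 t ht
    · rw [hzy] at h2
      exact cw4 hg (hty1 t ht).symm (htw1 t ht) (hsw1 t ht).symm h2
        (hyw1 t ht) (T1e1 t ht) (hyw1 t ht).symm (T1e1 t ht).symm
    exact cw6 hg (hyf1 t ht).symm (hty1 t ht).symm (htw1 t ht) (hsw1 t ht).symm h2 h1.symm
      (hft1 t ht) (hyw1 t ht) (T1e1 t ht) (fun he => hzw he.symm) (f1s1 t ht).symm hzy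
  have X2a : ∀ t (ht : t ∈ TS₁), ∀ z, ¬(G.Adj (f1 t ht) z ∧ G.Adj a z) := by
    rintro t ht z ⟨h1, h2⟩
    by_cases hzs : z = s₁
    · rw [hzs] at h1; exact X1adj t ht h1
    by_cases hzy : z = y1 t ht
    · rw [hzy] at h2
      exact T1nca t ht (y1 t ht) ⟨hty1 t ht, h2⟩
    exact cw7 hg (hyf1 t ht).symm (hty1 t ht).symm (htw1 t ht) (hsw1 t ht).symm A1 h2 h1.symm
      (hft1 t ht) (hyw1 t ht) (T1e1 t ht) (hwa1 t ht) (fun he => hzs he.symm)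
      (f1a t ht).symm hzy
  have X2b : ∀ t (ht : t ∈ TS₁), ∀ z, ¬(G.Adj (f1 t ht) z ∧ G.Adj b z) := by
    rintro t ht z ⟨h1, h2⟩
    by_cases hza : z = a
    · rw [hza] at h1
      exact cw6 hg (hyf1 t ht).symm (hty1 t ht).symm (htw1 t ht) (hsw1 t ht).symm A1 h1.symm
        (hft1 t ht) (hyw1 t ht) (T1e1 t ht) (hwa1 t ht) (f1s1 t ht).symm (y1a t ht).symm
    by_cases hzy : z = y1 t ht
    · rw [hzy] at h2
      exact T1ncb t ht (y1 t ht) ⟨hty1 t ht, h2⟩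
    exact cw8 hg (hyf1 t ht).symm (hty1 t ht).symm (htw1 t ht) (hsw1 t ht).symm A1 A2 h2 h1.symm
      (hft1 t ht) (hyw1 t ht) (T1e1 t ht) (hwa1 t ht) ne_s1b (fun he => hza he.symm)
      (f1b t ht).symm hzy
  have X2adjs2 : ∀ t (ht : t ∈ TS₁), ¬ G.Adj (f1 t ht) s₂ := by
    intro t ht h
    exact cw9 hg (hyf1 t ht).symm (hty1 t ht).symm (htw1 t ht) (hsw1 t ht).symm A1 A2 A3 A4
      h.symm (hft1 t ht) (hyw1 t ht) (T1e1 t ht) (hwa1 t ht) ne_s1b ne_ac ne_bs2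
      (f1c t ht).symm (y1s2 t ht).symm
  have X2s2 : ∀ t (ht : t ∈ TS₁), ∀ z, ¬(G.Adj (f1 t ht) z ∧ G.Adj s₂ z) := by
    rintro t ht z ⟨h1, h2⟩
    by_cases hzc : z = c
    · rw [hzc] at h1
      exact cw8 hg (hyf1 t ht).symm (hty1 t ht).symm (htw1 t ht) (hsw1 t ht).symm A1 A2 A3
        h1.symm (hft1 t ht) (hyw1 t ht) (T1e1 t ht) (hwa1 t ht) ne_s1b ne_ac
        (f1b t ht).symm (y1c t ht).symm
    by_cases hzy : z = y1 t ht
    · rw [hzy] at h2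
      exact cw8 hg (hty1 t ht).symm (htw1 t ht) (hsw1 t ht).symm A1 A2 A3 A4 h2
        (hyw1 t ht) (T1e1 t ht) (hwa1 t ht) ne_s1b ne_ac ne_bs2 (y1c t ht).symm
        (t1s2 t ht).symm
    exact cw10 hg (hyf1 t ht).symm (hty1 t ht).symm (htw1 t ht) (hsw1 t ht).symm A1 A2 A3 A4
      h2 h1.symm (hft1 t ht) (hyw1 t ht) (T1e1 t ht) (hwa1 t ht) ne_s1b ne_ac ne_bs2
      (fun he => hzc he.symm) (f1s2 t ht).symm hzy
  have Xl1f1 : ∀ t (ht : t ∈ TS₁), ∀ z, ¬(G.Adj (f1 t ht) z ∧ G.Adj l₁ z) := by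
    rintro t ht z ⟨h1, h2⟩
    rw [eq_of_nbr hl₁ h2] at h1
    exact X1adj t ht h1
  have Xl2f1 : ∀ t (ht : t ∈ TS₁), ∀ z, ¬(G.Adj (f1 t ht) z ∧ G.Adj l₂ z) := by
    rintro t ht z ⟨h1, h2⟩
    rw [eq_of_nbr hl₂ h2] at h1
    exact X2adjs2 t ht h1
  -- family 2 derived facts
  have t2a : ∀ t (ht : t ∈ TS₂), t ≠ a := fun t ht => T2ea t ht
  have t2c : ∀ t (ht : t ∈ TS₂), t ≠ c := by
    intro t ht h
    obtain ⟨w, htw, hsw⟩ := ht.2.2.2.2.1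
    rw [h] at htw
    exact cw3 hg htw hsw.symm A4.symm ne_cs2 htw.ne' hsw.ne
  have t2s1 : ∀ t (ht : t ∈ TS₂), t ≠ s₁ := by
    intro t ht h
    obtain ⟨w, htw, hsw⟩ := ht.2.2.2.2.1
    rw [h] at htw
    exact ncom12 w ⟨htw, hsw⟩
  have t2l1 : ∀ t (ht : t ∈ TS₂), t ≠ l₁ := by
    intro t ht h
    obtain ⟨w, htw, hsw⟩ := ht.2.2.2.2.1
    rw [h] at htw
    rw [eq_of_nbr hl₁ htw] at hsw
    exact nadj12 hsw.symm
  have w2b : ∀ t (ht : t ∈ TS₂), w2 t ht ≠ b := fun t ht h => nadj_bs2 (h ▸ hsw2 t ht).symm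
  have w2a : ∀ t (ht : t ∈ TS₂), w2 t ht ≠ a := fun t ht h => nadj_as2 (h ▸ hsw2 t ht).symm
  have w2s1 : ∀ t (ht : t ∈ TS₂), w2 t ht ≠ s₁ := fun t ht h => nadj12 (h ▸ hsw2 t ht).symm
  have w2l2 : ∀ t (ht : t ∈ TS₂), w2 t ht ≠ l₂ := fun t ht h =>
    T2e2 t ht (eq_of_nbr hl₂ (h ▸ htw2 t ht).symm)
  have w2l1 : ∀ t (ht : t ∈ TS₂), w2 t ht ≠ l₁ := fun t ht h =>
    ne_s1s2 (eq_of_nbr hl₁ (h ▸ hsw2 t ht).symm).symm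
  have y2s2v : ∀ t (ht : t ∈ TS₂), y2 t ht ≠ s₂ := by
    intro t ht h
    exact cw3 hg (htw2 t ht) (hsw2 t ht).symm (h ▸ hty2 t ht).symm (T2e2 t ht)
      (htw2 t ht).ne' (hsw2 t ht).ne
  have y2c : ∀ t (ht : t ∈ TS₂), y2 t ht ≠ c := fun t ht h =>
    T2ncb t ht c ⟨h ▸ hty2 t ht, A3⟩
  have y2b : ∀ t (ht : t ∈ TS₂), y2 t ht ≠ b := fun t ht h =>
    T2nca t ht b ⟨h ▸ hty2 t ht, A2⟩
  have y2a : ∀ t (ht : t ∈ TS₂), y2 t ht ≠ a := fun t ht h =>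
    T2ncb t ht a ⟨h ▸ hty2 t ht, A2.symm⟩
  have y2s1 : ∀ t (ht : t ∈ TS₂), y2 t ht ≠ s₁ := by
    intro t ht h
    exact cw7 hg (h ▸ hty2 t ht) A1 A2 A3 A4 (hsw2 t ht) (htw2 t ht).symm
      (t2a t ht) ne_s1b ne_ac ne_bs2 (hwc2 t ht).symm (T2e2 t ht).symm (w2s1 t ht)
  have y2l2 : ∀ t (ht : t ∈ TS₂), y2 t ht ≠ l₂ := fun t ht h =>
    T2e2 t ht (eq_of_nbr hl₂ (h ▸ hty2 t ht).symm)
  have y2l1 : ∀ t (ht : t ∈ TS₂), y2 t ht ≠ l₁ := fun t ht h =>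
    t2s1 t ht (eq_of_nbr hl₁ (h ▸ hty2 t ht).symm)
  have f2w : ∀ t (ht : t ∈ TS₂), f2 t ht ≠ w2 t ht := by
    intro t ht h
    have h5 : G.Adj (y2 t ht) (w2 t ht) := by rw [← h]; exact hyf2 t ht
    exact cw3 hg (hty2 t ht) h5 (htw2 t ht).symm (htw2 t ht).ne
      (hty2 t ht).ne' (hyw2 t ht).symm
  have f2s2 : ∀ t (ht : t ∈ TS₂), f2 t ht ≠ s₂ := by
    intro t ht h
    have h5 : G.Adj (y2 t ht) s₂ := by rw [← h]; exact hyf2 t ht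
    exact cw4 hg h5.symm (hty2 t ht).symm (htw2 t ht) (hsw2 t ht).symm
      (T2e2 t ht).symm (hyw2 t ht) (T2e2 t ht) (hyw2 t ht).symm
  have f2c : ∀ t (ht : t ∈ TS₂), f2 t ht ≠ c := by
    intro t ht h
    have h5 : G.Adj (y2 t ht) c := by rw [← h]; exact hyf2 t ht
    exact cw5 hg h5.symm (hty2 t ht).symm (htw2 t ht) (hsw2 t ht).symm A4.symm
      (t2c t ht).symm (hyw2 t ht) (T2e2 t ht) (hwc2 t ht) (y2s2v t ht).symm
  have f2b : ∀ t (ht : t ∈ TS₂), f2 t ht ≠ b := by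
    intro t ht h
    have h5 : G.Adj b (y2 t ht) := by rw [← h]; exact (hyf2 t ht).symm
    exact T2ncb t ht (y2 t ht) ⟨hty2 t ht, h5⟩
  have f2a : ∀ t (ht : t ∈ TS₂), f2 t ht ≠ a := by
    intro t ht h
    have h5 : G.Adj (y2 t ht) a := by rw [← h]; exact hyf2 t ht
    exact cw7 hg h5.symm (hty2 t ht).symm (htw2 t ht) (hsw2 t ht).symm A4.symm
      A3.symm A2.symm (t2a t ht).symm (hyw2 t ht) (T2e2 t ht) (hwc2 t ht) ne_bs2.symm
      ne_ac.symm (y2b t ht).symm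
  have f2s1 : ∀ t (ht : t ∈ TS₂), f2 t ht ≠ s₁ := by
    intro t ht h
    have h5 : G.Adj (y2 t ht) s₁ := by rw [← h]; exact hyf2 t ht
    exact cw8 hg h5.symm (hty2 t ht).symm (htw2 t ht) (hsw2 t ht).symm A4.symm
      A3.symm A2.symm A1.symm (t2s1 t ht).symm (hyw2 t ht) (T2e2 t ht) (hwc2 t ht)
      ne_bs2.symm ne_ac.symm ne_s1b.symm (y2a t ht).symm
  have f2l1 : ∀ t (ht : t ∈ TS₂), f2 t ht ≠ l₁ := fun t ht h =>
    y2s1 t ht (eq_of_nbr hl₁ (h ▸ hyf2 t ht).symm)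
  have f2l2 : ∀ t (ht : t ∈ TS₂), f2 t ht ≠ l₂ := fun t ht h =>
    y2s2v t ht (eq_of_nbr hl₂ (h ▸ hyf2 t ht).symm)
  -- family 2 exclusions
  have Y1adj : ∀ t (ht : t ∈ TS₂), ¬ G.Adj (f2 t ht) s₂ := by
    intro t ht h
    exact cw5 hg (hyf2 t ht).symm (hty2 t ht).symm (htw2 t ht) (hsw2 t ht).symm h.symm
      (hft2 t ht) (hyw2 t ht) (T2e2 t ht) (f2w t ht).symm (y2s2v t ht).symm
  have Y1c : ∀ t (ht : t ∈ TS₂), ∀ z, ¬(G.Adj (f2 t ht) z ∧ G.Adj s₂ z) := by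
    rintro t ht z ⟨h1, h2⟩
    by_cases hzw : z = w2 t ht
    · rw [hzw] at h1
      exact cw4 hg (hyf2 t ht).symm (hty2 t ht).symm (htw2 t ht) h1.symm
        (hft2 t ht) (hyw2 t ht) (hft2 t ht).symm (hyw2 t ht).symm
    by_cases hzy : z = y2 t ht
    · rw [hzy] at h2
      exact cw4 hg (hty2 t ht).symm (htw2 t ht) (hsw2 t ht).symm h2
        (hyw2 t ht) (T2e2 t ht) (hyw2 t ht).symm (T2e2 t ht).symm
    exact cw6 hg (hyf2 t ht).symm (hty2 t ht).symm (htw2 t ht) (hsw2 t ht).symm h2 h1.symm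
      (hft2 t ht) (hyw2 t ht) (T2e2 t ht) (fun he => hzw he.symm) (f2s2 t ht).symm hzy
  have Y2b : ∀ t (ht : t ∈ TS₂), ∀ z, ¬(G.Adj (f2 t ht) z ∧ G.Adj b z) := by
    rintro t ht z ⟨h1, h2⟩
    by_cases hzc : z = c
    · rw [hzc] at h1
      exact cw6 hg (hyf2 t ht).symm (hty2 t ht).symm (htw2 t ht) (hsw2 t ht).symm A4.symm
        h1.symm (hft2 t ht) (hyw2 t ht) (T2e2 t ht) (hwc2 t ht) (f2s2 t ht).symm
        (y2c t ht).symm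
    by_cases hzy : z = y2 t ht
    · rw [hzy] at h2
      exact T2ncb t ht (y2 t ht) ⟨hty2 t ht, h2⟩
    exact cw8 hg (hyf2 t ht).symm (hty2 t ht).symm (htw2 t ht) (hsw2 t ht).symm A4.symm
      A3.symm h2 h1.symm (hft2 t ht) (hyw2 t ht) (T2e2 t ht) (hwc2 t ht) ne_bs2.symm
      (fun he => hzc he.symm) (f2b t ht).symm hzy
  have Y2a : ∀ t (ht : t ∈ TS₂), ∀ z, ¬(G.Adj (f2 t ht) z ∧ G.Adj a z) := by
    rintro t ht z ⟨h1, h2⟩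
    by_cases hzb : z = b
    · rw [hzb] at h1
      exact cw7 hg (hyf2 t ht).symm (hty2 t ht).symm (htw2 t ht) (hsw2 t ht).symm A4.symm
        A3.symm h1.symm (hft2 t ht) (hyw2 t ht) (T2e2 t ht) (hwc2 t ht) ne_bs2.symm
        (f2c t ht).symm (y2b t ht).symm
    by_cases hzy : z = y2 t ht
    · rw [hzy] at h2
      exact T2nca t ht (y2 t ht) ⟨hty2 t ht, h2⟩
    exact cw9 hg (hyf2 t ht).symm (hty2 t ht).symm (htw2 t ht) (hsw2 t ht).symm A4.symm
      A3.symm A2.symm h2 h1.symm (hft2 t ht) (hyw2 t ht) (T2e2 t ht) (hwc2 t ht)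
      ne_bs2.symm ne_ac.symm (fun he => hzb he.symm) (f2a t ht).symm hzy
  have Y2adjs1 : ∀ t (ht : t ∈ TS₂), ¬ G.Adj (f2 t ht) s₁ := by
    intro t ht h
    exact cw9 hg (hyf2 t ht).symm (hty2 t ht).symm (htw2 t ht) (hsw2 t ht).symm A4.symm
      A3.symm A2.symm A1.symm h.symm (hft2 t ht) (hyw2 t ht) (T2e2 t ht) (hwc2 t ht)
      ne_bs2.symm ne_ac.symm ne_s1b.symm (f2a t ht).symm (y2s1 t ht).symm
  have Y2s1 : ∀ t (ht : t ∈ TS₂), ∀ z, ¬(G.Adj (f2 t ht) z ∧ G.Adj s₁ z) := by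
    rintro t ht z ⟨h1, h2⟩
    by_cases hza : z = a
    · rw [hza] at h1
      exact cw8 hg (hyf2 t ht).symm (hty2 t ht).symm (htw2 t ht) (hsw2 t ht).symm A4.symm
        A3.symm A2.symm h1.symm (hft2 t ht) (hyw2 t ht) (T2e2 t ht) (hwc2 t ht)
        ne_bs2.symm ne_ac.symm (f2b t ht).symm (y2a t ht).symm
    by_cases hzy : z = y2 t ht
    · rw [hzy] at h2
      exact cw8 hg (hty2 t ht).symm (htw2 t ht) (hsw2 t ht).symm A4.symm A3.symm A2.symm
        A1.symm h2 (hyw2 t ht) (T2e2 t ht) (hwc2 t ht) ne_bs2.symm ne_ac.symm ne_s1b.symm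
        (y2a t ht).symm (t2s1 t ht).symm
    exact cw10 hg (hyf2 t ht).symm (hty2 t ht).symm (htw2 t ht) (hsw2 t ht).symm A4.symm
      A3.symm A2.symm A1.symm h2 h1.symm (hft2 t ht) (hyw2 t ht) (T2e2 t ht) (hwc2 t ht)
      ne_bs2.symm ne_ac.symm ne_s1b.symm (fun he => hza he.symm) (f2s1 t ht).symm hzy
  have Xl1f2 : ∀ t (ht : t ∈ TS₂), ∀ z, ¬(G.Adj (f2 t ht) z ∧ G.Adj l₁ z) := by
    rintro t ht z ⟨h1, h2⟩
    rw [eq_of_nbr hl₁ h2] at h1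
    exact Y2adjs1 t ht h1
  have Xl2f2 : ∀ t (ht : t ∈ TS₂), ∀ z, ¬(G.Adj (f2 t ht) z ∧ G.Adj l₂ z) := by
    rintro t ht z ⟨h1, h2⟩
    rw [eq_of_nbr hl₂ h2] at h1
    exact Y1adj t ht h1
  -- cross facts
  have hwwx : ∀ t₁ (h₁ : t₁ ∈ TS₁) t₂ (h₂ : t₂ ∈ TS₂), w1 t₁ h₁ ≠ w2 t₂ h₂ := by
    intro t₁ h₁ t₂ h₂ h
    have h5 : G.Adj s₂ (w1 t₁ h₁) := by rw [h]; exact hsw2 t₂ h₂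
    exact ncom12 (w1 t₁ h₁) ⟨hsw1 t₁ h₁, h5⟩
  have crossne : ∀ t₁ (h₁ : t₁ ∈ TS₁) t₂ (h₂ : t₂ ∈ TS₂), t₁ ≠ t₂ := by
    intro t₁ h₁ t₂ h₂ heq
    have h5 : G.Adj t₁ (w2 t₂ h₂) := by rw [heq]; exact htw2 t₂ h₂
    have h6 : s₂ ≠ t₁ := by rw [heq]; exact (T2e2 t₂ h₂).symm
    exact cw8 hg (htw1 t₁ h₁) (hsw1 t₁ h₁).symm A1 A2 A3 A4 (hsw2 t₂ h₂) h5.symm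
      (T1e1 t₁ h₁) (hwa1 t₁ h₁) ne_s1b ne_ac ne_bs2 (hwc2 t₂ h₂).symm h6
      (hwwx t₁ h₁ t₂ h₂).symm
  -- cross pairwise
  have crossPW : ∀ t₁ (h₁ : t₁ ∈ TS₁) t₂ (h₂ : t₂ ∈ TS₂), f1 t₁ h₁ ≠ f2 t₂ h₂ →
      ∀ z, ¬(G.Adj (f1 t₁ h₁) z ∧ G.Adj (f2 t₂ h₂) z) := by
    rintro t₁ h₁ t₂ h₂ hff z ⟨hz1, hz2⟩
    by_cases hzy2 : z = y2 t₂ h₂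
    · rw [hzy2] at hz1
      by_cases hf1t2 : f1 t₁ h₁ = t₂
      · have h5 : G.Adj (y1 t₁ h₁) t₂ := by rw [← hf1t2]; exact hyf1 t₁ h₁
        by_cases hy1w2 : y1 t₁ h₁ = w2 t₂ h₂
        · have h6 : G.Adj s₂ (y1 t₁ h₁) := by rw [hy1w2]; exact hsw2 t₂ h₂
          exact cw8 hg (hty1 t₁ h₁).symm (htw1 t₁ h₁) (hsw1 t₁ h₁).symm A1 A2 A3 A4 h6
            (hyw1 t₁ h₁) (T1e1 t₁ h₁) (hwa1 t₁ h₁) ne_s1b ne_ac ne_bs2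
            (y1c t₁ h₁).symm (t1s2 t₁ h₁).symm
        · exact cw10 hg (hty1 t₁ h₁).symm (htw1 t₁ h₁) (hsw1 t₁ h₁).symm A1 A2 A3 A4
            (hsw2 t₂ h₂) (htw2 t₂ h₂).symm h5.symm
            (hyw1 t₁ h₁) (T1e1 t₁ h₁) (hwa1 t₁ h₁) ne_s1b ne_ac ne_bs2
            (hwc2 t₂ h₂).symm (T2e2 t₂ h₂).symm (fun he => hy1w2 he.symm)
            (crossne t₁ h₁ t₂ h₂).symm
      by_cases hyy : y1 t₁ h₁ = y2 t₂ h₂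
      · have h5 : G.Adj t₂ (y1 t₁ h₁) := by rw [hyy]; exact hty2 t₂ h₂
        have h7 : y1 t₁ h₁ ≠ w2 t₂ h₂ := by rw [hyy]; exact hyw2 t₂ h₂
        exact cw10 hg (hty1 t₁ h₁).symm (htw1 t₁ h₁) (hsw1 t₁ h₁).symm A1 A2 A3 A4
          (hsw2 t₂ h₂) (htw2 t₂ h₂).symm h5
          (hyw1 t₁ h₁) (T1e1 t₁ h₁) (hwa1 t₁ h₁) ne_s1b ne_ac ne_bs2
          (hwc2 t₂ h₂).symm (T2e2 t₂ h₂).symm (fun he => h7 he.symm)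
          (crossne t₁ h₁ t₂ h₂).symm
      · exact cw12 hg (hyf1 t₁ h₁).symm (hty1 t₁ h₁).symm (htw1 t₁ h₁) (hsw1 t₁ h₁).symm
          A1 A2 A3 A4 (hsw2 t₂ h₂) (htw2 t₂ h₂).symm (hty2 t₂ h₂) hz1.symm
          (hft1 t₁ h₁) (hyw1 t₁ h₁) (T1e1 t₁ h₁) (hwa1 t₁ h₁) ne_s1b ne_ac ne_bs2
          (hwc2 t₂ h₂).symm (T2e2 t₂ h₂).symm (hyw2 t₂ h₂).symm
          (fun he => hf1t2 he.symm) (fun he => hyy he.symm)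
    by_cases hzy1 : z = y1 t₁ h₁
    · rw [hzy1] at hz2
      by_cases hf2t1 : f2 t₂ h₂ = t₁
      · have h5 : G.Adj (y2 t₂ h₂) t₁ := by rw [← hf2t1]; exact hyf2 t₂ h₂
        by_cases hy2w1 : y2 t₂ h₂ = w1 t₁ h₁
        · have h6 : G.Adj s₁ (y2 t₂ h₂) := by rw [hy2w1]; exact hsw1 t₁ h₁
          exact cw8 hg (hty2 t₂ h₂).symm (htw2 t₂ h₂) (hsw2 t₂ h₂).symm A4.symm A3.symm
            A2.symm A1.symm h6
            (hyw2 t₂ h₂) (T2e2 t₂ h₂) (hwc2 t₂ h₂) ne_bs2.symm ne_ac.symm ne_s1b.symm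
            (y2a t₂ h₂).symm (t2s1 t₂ h₂).symm
        · exact cw10 hg (hty2 t₂ h₂).symm (htw2 t₂ h₂) (hsw2 t₂ h₂).symm A4.symm A3.symm
            A2.symm A1.symm (hsw1 t₁ h₁) (htw1 t₁ h₁).symm h5.symm
            (hyw2 t₂ h₂) (T2e2 t₂ h₂) (hwc2 t₂ h₂) ne_bs2.symm ne_ac.symm ne_s1b.symm
            (hwa1 t₁ h₁).symm (T1e1 t₁ h₁).symm (fun he => hy2w1 he.symm)
            (crossne t₁ h₁ t₂ h₂)
      by_cases hyy : y1 t₁ h₁ = y2 t₂ h₂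
      · have h5 : G.Adj t₁ (y2 t₂ h₂) := by rw [← hyy]; exact hty1 t₁ h₁
        have h7 : y2 t₂ h₂ ≠ w1 t₁ h₁ := by rw [← hyy]; exact hyw1 t₁ h₁
        exact cw10 hg (hty2 t₂ h₂).symm (htw2 t₂ h₂) (hsw2 t₂ h₂).symm A4.symm A3.symm
          A2.symm A1.symm (hsw1 t₁ h₁) (htw1 t₁ h₁).symm h5
          (hyw2 t₂ h₂) (T2e2 t₂ h₂) (hwc2 t₂ h₂) ne_bs2.symm ne_ac.symm ne_s1b.symm
          (hwa1 t₁ h₁).symm (T1e1 t₁ h₁).symm (fun he => h7 he.symm)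
          (crossne t₁ h₁ t₂ h₂)
      · exact cw12 hg (hyf2 t₂ h₂).symm (hty2 t₂ h₂).symm (htw2 t₂ h₂) (hsw2 t₂ h₂).symm
          A4.symm A3.symm A2.symm A1.symm (hsw1 t₁ h₁) (htw1 t₁ h₁).symm (hty1 t₁ h₁)
          hz2.symm
          (hft2 t₂ h₂) (hyw2 t₂ h₂) (T2e2 t₂ h₂) (hwc2 t₂ h₂) ne_bs2.symm ne_ac.symm
          ne_s1b.symm (hwa1 t₁ h₁).symm (T1e1 t₁ h₁).symm (hyw1 t₁ h₁).symm
          (fun he => hf2t1 he.symm) hyy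
    · exact cw14 hg (hyf1 t₁ h₁).symm (hty1 t₁ h₁).symm (htw1 t₁ h₁) (hsw1 t₁ h₁).symm
        A1 A2 A3 A4 (hsw2 t₂ h₂) (htw2 t₂ h₂).symm (hty2 t₂ h₂) (hyf2 t₂ h₂) hz2 hz1.symm
        (hft1 t₁ h₁) (hyw1 t₁ h₁) (T1e1 t₁ h₁) (hwa1 t₁ h₁) ne_s1b ne_ac ne_bs2
        (hwc2 t₂ h₂).symm (T2e2 t₂ h₂).symm (hyw2 t₂ h₂).symm (hft2 t₂ h₂).symm
        (fun he => hzy2 he.symm) hff.symm hzy1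
  -- the two sets
  set F : Set V := {v | (∃ t, ∃ ht : t ∈ TS₁, f1 t ht = v) ∨ (∃ t, ∃ ht : t ∈ TS₂, f2 t ht = v)}
    with hFdef
  set SS : Set V := insert l₁ (insert s₁ (insert l₂ (insert s₂ F))) with hSdef
  set TT : Set V := insert a (insert b (insert l₂ F)) with hTdef
  have memS : ∀ u, u ∈ SS ↔ u = l₁ ∨ u = s₁ ∨ u = l₂ ∨ u = s₂ ∨ u ∈ F := by
    intro u; simp [hSdef, Set.mem_insert_iff]
  have memT : ∀ u, u ∈ TT ↔ u = a ∨ u = b ∨ u = l₂ ∨ u ∈ F := by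
    intro u; simp [hTdef, Set.mem_insert_iff]
  -- packing helpers against F
  have FX1 : ∀ u, u ∈ F → ∀ z, ¬(G.Adj u z ∧ G.Adj l₁ z) := by
    rintro u (⟨t, ht, rfl⟩ | ⟨t, ht, rfl⟩) z hz
    · exact Xl1f1 t ht z hz
    · exact Xl1f2 t ht z hz
  have FX2 : ∀ u, u ∈ F → ∀ z, ¬(G.Adj u z ∧ G.Adj s₁ z) := by
    rintro u (⟨t, ht, rfl⟩ | ⟨t, ht, rfl⟩) z hz
    · exact X1c t ht z hz
    · exact Y2s1 t ht z hz
  have FX3 : ∀ u, u ∈ F → ∀ z, ¬(G.Adj u z ∧ G.Adj l₂ z) := by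
    rintro u (⟨t, ht, rfl⟩ | ⟨t, ht, rfl⟩) z hz
    · exact Xl2f1 t ht z hz
    · exact Xl2f2 t ht z hz
  have FX4 : ∀ u, u ∈ F → ∀ z, ¬(G.Adj u z ∧ G.Adj s₂ z) := by
    rintro u (⟨t, ht, rfl⟩ | ⟨t, ht, rfl⟩) z hz
    · exact X2s2 t ht z hz
    · exact Y1c t ht z hz
  have FXa : ∀ u, u ∈ F → ∀ z, ¬(G.Adj u z ∧ G.Adj a z) := by
    rintro u (⟨t, ht, rfl⟩ | ⟨t, ht, rfl⟩) z hz
    · exact X2a t ht z hz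
    · exact Y2a t ht z hz
  have FXb : ∀ u, u ∈ F → ∀ z, ¬(G.Adj u z ∧ G.Adj b z) := by
    rintro u (⟨t, ht, rfl⟩ | ⟨t, ht, rfl⟩) z hz
    · exact X2b t ht z hz
    · exact Y2b t ht z hz
  have FPW : ∀ u, u ∈ F → ∀ v, v ∈ F → u ≠ v → ∀ z, ¬(G.Adj u z ∧ G.Adj v z) := by
    rintro u hu v hv huv z hz
    rcases hu with ⟨t, ht, rfl⟩ | ⟨t, ht, rfl⟩ <;> rcases hv with ⟨t', ht', rfl⟩ | ⟨t', ht', rfl⟩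
    · have hne_t : t ≠ t' := by rintro rfl; exact huv rfl
      exact pw_same hg (htw1 t ht) (hsw1 t ht) (hty1 t ht) (hyw1 t ht) (hyf1 t ht)
        (hft1 t ht) (T1e1 t ht) (htw1 t' ht') (hsw1 t' ht') (hty1 t' ht') (hyw1 t' ht')
        (hyf1 t' ht') (hft1 t' ht') (T1e1 t' ht') hne_t huv z hz.1 hz.2
    · exact crossPW t ht t' ht' huv z hz
    · exact crossPW t' ht' t ht huv.symm z ⟨hz.2, hz.1⟩
    · have hne_t : t ≠ t' := by rintro rfl; exact huv rfl
      exact pw_same hg (htw2 t ht) (hsw2 t ht) (hty2 t ht) (hyw2 t ht) (hyf2 t ht)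
        (hft2 t ht) (T2e2 t ht) (htw2 t' ht') (hsw2 t' ht') (hty2 t' ht') (hyw2 t' ht')
        (hyf2 t' ht') (hft2 t' ht') (T2e2 t' ht') hne_t huv z hz.1 hz.2
  have hSpack : IsOpenPacking G SS := by
    intro u hu v hv huv z hz
    rw [memS] at hu hv
    rcases hu with rfl | rfl | rfl | rfl | hu <;> rcases hv with rfl | rfl | rfl | rfl | hv
    · exact huv rfl
    · exact ncl1s1 z hz
    · exact ncl1l2 z hz
    · exact ncl1s2 z hz
    · exact FX1 _ hv z ⟨hz.2, hz.1⟩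
    · exact ncl1s1 z ⟨hz.2, hz.1⟩
    · exact huv rfl
    · exact ncs1l2 z hz
    · exact ncom12 z hz
    · exact FX2 _ hv z ⟨hz.2, hz.1⟩
    · exact ncl1l2 z ⟨hz.2, hz.1⟩
    · exact ncs1l2 z ⟨hz.2, hz.1⟩
    · exact huv rfl
    · exact ncl2s2 z hz
    · exact FX3 _ hv z ⟨hz.2, hz.1⟩
    · exact ncl1s2 z ⟨hz.2, hz.1⟩
    · exact ncom12 z ⟨hz.2, hz.1⟩
    · exact ncl2s2 z ⟨hz.2, hz.1⟩
    · exact huv rfl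
    · exact FX4 _ hv z ⟨hz.2, hz.1⟩
    · exact FX1 _ hu z hz
    · exact FX2 _ hu z hz
    · exact FX3 _ hu z hz
    · exact FX4 _ hu z hz
    · exact FPW _ hu _ hv huv z hz
  have hTpack : IsOpenPacking G TT := by
    intro u hu v hv huv z hz
    rw [memT] at hu hv
    rcases hu with rfl | rfl | rfl | hu <;> rcases hv with rfl | rfl | rfl | hv
    · exact huv rfl
    · exact ncab z hz
    · exact ncal2 z hz
    · exact FXa _ hv z ⟨hz.2, hz.1⟩
    · exact ncab z ⟨hz.2, hz.1⟩
    · exact huv rfl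
    · exact ncbl2 z hz
    · exact FXb _ hv z ⟨hz.2, hz.1⟩
    · exact ncal2 z ⟨hz.2, hz.1⟩
    · exact ncbl2 z ⟨hz.2, hz.1⟩
    · exact huv rfl
    · exact FX3 _ hv z ⟨hz.2, hz.1⟩
    · exact FXa _ hu z hz
    · exact FXb _ hu z hz
    · exact FX3 _ hu z hz
    · exact FPW _ hu _ hv huv z hz
  have haT : a ∈ TT := by rw [memT]; exact Or.inl rfl
  have hbT : b ∈ TT := by rw [memT]; exact Or.inr (Or.inl rfl)
  have hl₂T : l₂ ∈ TT := by rw [memT]; exact Or.inr (Or.inr (Or.inl rfl))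
  have hFT : ∀ u ∈ F, u ∈ TT := by intro u hu; rw [memT]; exact Or.inr (Or.inr (Or.inr hu))
  have hcov : ∀ v, (v ∈ SS ∨ ∃ s ∈ SS, v ≠ s ∧ ∃ z, G.Adj v z ∧ G.Adj s z) →
      (v ∈ TT ∨ ∃ t ∈ TT, v ≠ t ∧ ∃ z, G.Adj v z ∧ G.Adj t z) := by
    intro v hv
    rcases hv with hv | ⟨s, hs, hvs, z, u1, u2⟩
    · rw [memS] at hv
      rcases hv with h | h | h | h | hv
      · rw [h]
        exact Or.inr ⟨a, haT, ne_l1a, s₁, hL1, A1.symm⟩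
      · rw [h]
        exact Or.inr ⟨b, hbT, ne_s1b, a, A1, A2.symm⟩
      · rw [h]; exact Or.inl hl₂T
      · rw [h]
        exact Or.inr ⟨b, hbT, ne_bs2.symm, c, A4.symm, A3⟩
      · exact Or.inl (hFT _ hv)
    · rw [memS] at hs
      rcases hs with h | h | h | h | hs
      · rw [h] at u2
        have hz1 : z = s₁ := eq_of_nbr hl₁ u2
        rw [hz1] at u1
        by_cases hva : v = a
        · exact Or.inl (by rw [hva]; exact haT)
        · exact Or.inr ⟨a, haT, hva, s₁, u1, A1.symm⟩
      · rw [h] at u2 hvs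
        by_contra hcon
        have hvT : v ∉ TT := fun hx => hcon (Or.inl hx)
        have hcon2 : ∀ t, t ∈ TT → v ≠ t → ∀ z', ¬(G.Adj v z' ∧ G.Adj t z') :=
          fun t ht hvt z' hz' => hcon (Or.inr ⟨t, ht, hvt, z', hz'⟩)
        have hvTS : v ∈ TS₁ := by
          rw [hTS1def]
          refine ⟨hvs, ?_, ?_, ?_, ⟨z, u1, u2⟩, ?_, ?_, ?_⟩
          · intro h'; exact hvT (by rw [h']; exact haT)
          · intro h'; exact hvT (by rw [h']; exact hbT)
          · intro h'; exact hvT (by rw [h']; exact hl₂T)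
          · intro z' hz'
            by_cases hv1 : v = a
            · exact hvT (by rw [hv1]; exact haT)
            · exact hcon2 a haT hv1 z' hz'
          · intro z' hz'
            by_cases hv1 : v = b
            · exact hvT (by rw [hv1]; exact hbT)
            · exact hcon2 b hbT hv1 z' hz'
          · intro z' hz'
            by_cases hv1 : v = l₂
            · exact hvT (by rw [hv1]; exact hl₂T)
            · exact hcon2 l₂ hl₂T hv1 z' hz'
        exact hcon2 (f1 v hvTS) (hFT _ (Or.inl ⟨v, hvTS, rfl⟩)) (hft1 v hvTS).symm
          (y1 v hvTS) ⟨hty1 v hvTS, (hyf1 v hvTS).symm⟩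
      · rw [h] at u2 hvs
        exact Or.inr ⟨l₂, hl₂T, hvs, z, u1, u2⟩
      · rw [h] at u2 hvs
        by_contra hcon
        have hvT : v ∉ TT := fun hx => hcon (Or.inl hx)
        have hcon2 : ∀ t, t ∈ TT → v ≠ t → ∀ z', ¬(G.Adj v z' ∧ G.Adj t z') :=
          fun t ht hvt z' hz' => hcon (Or.inr ⟨t, ht, hvt, z', hz'⟩)
        have hvTS : v ∈ TS₂ := by
          rw [hTS2def]
          refine ⟨hvs, ?_, ?_, ?_, ⟨z, u1, u2⟩, ?_, ?_, ?_⟩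
          · intro h'; exact hvT (by rw [h']; exact haT)
          · intro h'; exact hvT (by rw [h']; exact hbT)
          · intro h'; exact hvT (by rw [h']; exact hl₂T)
          · intro z' hz'
            by_cases hv1 : v = a
            · exact hvT (by rw [hv1]; exact haT)
            · exact hcon2 a haT hv1 z' hz'
          · intro z' hz'
            by_cases hv1 : v = b
            · exact hvT (by rw [hv1]; exact hbT)
            · exact hcon2 b hbT hv1 z' hz'
          · intro z' hz'
            by_cases hv1 : v = l₂
            · exact hvT (by rw [hv1]; exact hl₂T)
            · exact hcon2 l₂ hl₂T hv1 z' hz'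
        exact hcon2 (f2 v hvTS) (hFT _ (Or.inr ⟨v, hvTS, rfl⟩)) (hft2 v hvTS).symm
          (y2 v hvTS) ⟨hty2 v hvTS, (hyf2 v hvTS).symm⟩
      · exact Or.inr ⟨s, hFT _ hs, hvs, z, u1, u2⟩
  -- cardinalities
  have hs₂F : s₂ ∉ F := by
    rintro (⟨t, ht, h⟩ | ⟨t, ht, h⟩)
    · exact f1s2 t ht h
    · exact f2s2 t ht h
  have hl₂F : l₂ ∉ F := by
    rintro (⟨t, ht, h⟩ | ⟨t, ht, h⟩)
    · exact f1l2 t ht h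
    · exact f2l2 t ht h
  have hs₁F : s₁ ∉ F := by
    rintro (⟨t, ht, h⟩ | ⟨t, ht, h⟩)
    · exact f1s1 t ht h
    · exact f2s1 t ht h
  have hl₁F : l₁ ∉ F := by
    rintro (⟨t, ht, h⟩ | ⟨t, ht, h⟩)
    · exact f1l1 t ht h
    · exact f2l1 t ht h
  have haF : a ∉ F := by
    rintro (⟨t, ht, h⟩ | ⟨t, ht, h⟩)
    · exact f1a t ht h
    · exact f2a t ht h
  have hbF : b ∉ F := by
    rintro (⟨t, ht, h⟩ | ⟨t, ht, h⟩)
    · exact f1b t ht h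
    · exact f2b t ht h
  have c1 : (insert s₂ F).ncard = F.ncard + 1 := Set.ncard_insert_of_notMem hs₂F
  have c2 : (insert l₂ (insert s₂ F)).ncard = F.ncard + 2 := by
    rw [Set.ncard_insert_of_notMem (by simp [ne_l2s2, hl₂F]), c1]
  have c3 : (insert s₁ (insert l₂ (insert s₂ F))).ncard = F.ncard + 3 := by
    rw [Set.ncard_insert_of_notMem (by simp [ne_s1s2, hs₁F, ne_s1l2]), c2]
  have c4 : SS.ncard = F.ncard + 4 := by
    rw [hSdef, Set.ncard_insert_of_notMem (by simp [ne_l1s1, ne_l1l2, ne_l1s2, hl₁F]), c3]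
  have c5 : (insert l₂ F).ncard = F.ncard + 1 := Set.ncard_insert_of_notMem hl₂F
  have c6 : (insert b (insert l₂ F)).ncard = F.ncard + 2 := by
    rw [Set.ncard_insert_of_notMem (by simp [ne_bl2, hbF]), c5]
  have c7 : TT.ncard = F.ncard + 3 := by
    rw [hTdef, Set.ncard_insert_of_notMem (by simp [ne_ab, ne_al2, haF]), c6]
  exact lemA hU SS TT hSpack hTpack hcov (by omega)

end OP

theorem stmt16 {V : Type*} [Fintype V] [Nonempty V] (G : SimpleGraph V)
    [DecidableRel G.Adj] (hc : G.Connected) (hδ : G.minDegree = 1)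
    (hg : 15 ≤ G.egirth) (hU : InU G) :
    ∀ s₁ s₂, IsSingleStarSupport G s₁ → IsSingleStarSupport G s₂ →
      G.dist s₁ s₂ ≠ 3 ∧ G.dist s₁ s₂ ≠ 4 := by
  intro s₁ s₂ h₁ h₂
  obtain ⟨⟨l₁, hl₁⟩, hns₁⟩ := h₁
  obtain ⟨⟨l₂, hl₂⟩, hns₂⟩ := h₂
  constructor
  · intro hd
    obtain ⟨p, -, hlen⟩ := hc.exists_path_of_dist s₁ s₂
    rw [hd] at hlen
    cases p with
    | nil => simp at hlen
    | cons hA1 q =>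
      cases q with
      | nil => simp at hlen
      | cons hA2 r =>
        cases r with
        | nil => simp at hlen
        | cons hA3 rr =>
          cases rr with
          | cons h4 rrr => simp at hlen
          | nil => exact OP.dist3 hU hg hl₁ hl₂ hns₂ hA1 hA2 hA3 hd
  · intro hd
    obtain ⟨p, -, hlen⟩ := hc.exists_path_of_dist s₁ s₂
    rw [hd] at hlen
    cases p with
    | nil => simp at hlen
    | cons hA1 q =>
      cases q with
      | nil => simp at hlen
      | cons hA2 r =>
        cases r with
        | nil => simp at hlen
        | cons hA3 rr =>
          cases rr with
          | nil => simp at hlen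
          | cons hA4 rrr =>
            cases rrr with
            | cons h5 r4 => simp at hlen
            | nil => exact OP.dist4 hU hg hl₁ hl₂ hns₁ hns₂ hA1 hA2 hA3 hA4 hd
end

section
/- For each integer k ≥ 2, let G_k be the graph obtained from k disjoint paths a_j b_j c_j d_j e_j f_j (j = 1,...,k) of order 6 together with two new vertices x and y, by adding the edges x a_j and y f_j for all j. Then G_k has girth 14 (for k ≥ 2), minimum degree 2, and all maximal open packings of G_k have the same cardinality, namely 2(k+1). -/
open SimpleGraph

/-- The graph `G_k`: `k` disjoint paths `a_j b_j c_j d_j e_j f_j` of order 6 (the vertex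
`Sum.inl (j, i)` is the `i`-th vertex of the `j`-th path), together with a vertex
`x = Sum.inr 0` adjacent to every `a_j` and a vertex `y = Sum.inr 1` adjacent to every
`f_j`. -/
def Gk (k : ℕ) : SimpleGraph (Fin k × Fin 6 ⊕ Fin 2) :=
  SimpleGraph.fromRel (fun a b =>
    (∃ (j : Fin k) (i : Fin 5), a = Sum.inl (j, i.castSucc) ∧ b = Sum.inl (j, i.succ)) ∨
    (∃ j : Fin k, a = Sum.inr 0 ∧ b = Sum.inl (j, 0)) ∨
    (∃ j : Fin k, a = Sum.inr 1 ∧ b = Sum.inl (j, 5)))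

noncomputable instance (k : ℕ) : DecidableRel (Gk k).Adj := Classical.decRel _

lemma adj_inl_iff {k : ℕ} (j : Fin k) (i : Fin 6) (w : Fin k × Fin 6 ⊕ Fin 2) :
    (Gk k).Adj (Sum.inl (j, i)) w ↔
      (∃ i' : Fin 6, (i'.val = i.val + 1 ∨ i.val = i'.val + 1) ∧ w = Sum.inl (j, i')) ∨
      (i = 0 ∧ w = Sum.inr 0) ∨ (i = 5 ∧ w = Sum.inr 1) := by
  simp only [Gk, fromRel_adj]
  constructor
  · rintro ⟨hne, (⟨j', i', h1, h2⟩ | ⟨j', h1, h2⟩ | ⟨j', h1, h2⟩) |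
      (⟨j', i', h1, h2⟩ | ⟨j', h1, h2⟩ | ⟨j', h1, h2⟩)⟩
    · obtain ⟨rfl, rfl⟩ : j = j' ∧ i = i'.castSucc := by simpa [Prod.ext_iff] using h1
      exact Or.inl ⟨i'.succ, Or.inl rfl, by simpa using h2⟩
    · exact absurd h1 (by simp)
    · exact absurd h1 (by simp)
    · obtain ⟨rfl, rfl⟩ : j = j' ∧ i = i'.succ := by simpa [Prod.ext_iff] using h2
      exact Or.inl ⟨i'.castSucc, Or.inr rfl, by simpa using h1⟩
    · obtain ⟨rfl, rfl⟩ : j = j' ∧ i = 0 := by simpa [Prod.ext_iff] using h2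
      exact Or.inr (Or.inl ⟨rfl, h1⟩)
    · obtain ⟨rfl, rfl⟩ : j = j' ∧ i = 5 := by simpa [Prod.ext_iff] using h2
      exact Or.inr (Or.inr ⟨rfl, h1⟩)
  · rintro (⟨i', hi', rfl⟩ | ⟨rfl, rfl⟩ | ⟨rfl, rfl⟩)
    · refine ⟨by simp [Fin.ext_iff]; omega, ?_⟩
      rcases hi' with h | h
      · exact Or.inl (Or.inl ⟨j, ⟨i.val, by omega⟩, by simp [Fin.ext_iff], by simp [Fin.ext_iff]; omega⟩)
      · exact Or.inr (Or.inl ⟨j, ⟨i'.val, by omega⟩, by simp [Fin.ext_iff], by simp [Fin.ext_iff]; omega⟩)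
    · exact ⟨by simp, Or.inr (Or.inr (Or.inl ⟨j, rfl, rfl⟩))⟩
    · exact ⟨by simp, Or.inr (Or.inr (Or.inr ⟨j, rfl, rfl⟩))⟩

lemma adj_inr_iff {k : ℕ} (t : Fin 2) (w : Fin k × Fin 6 ⊕ Fin 2) :
    (Gk k).Adj (Sum.inr t) w ↔
      ∃ j : Fin k, w = Sum.inl (j, if t = 0 then 0 else 5) := by
  simp only [Gk, fromRel_adj]
  constructor
  · rintro ⟨hne, (⟨j', i', h1, h2⟩ | ⟨j', h1, h2⟩ | ⟨j', h1, h2⟩) |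
      (⟨j', i', h1, h2⟩ | ⟨j', h1, h2⟩ | ⟨j', h1, h2⟩)⟩
    · exact absurd h1 (by simp)
    · obtain rfl : t = 0 := by simpa using h1
      exact ⟨j', by simp [h2]⟩
    · obtain rfl : t = 1 := by simpa using h1
      exact ⟨j', by simp [h2]⟩
    · exact absurd h2 (by simp)
    · exact absurd h2 (by simp)
    · exact absurd h2 (by simp)
  · rintro ⟨j, rfl⟩
    rcases Fin.exists_fin_two.mp ⟨t, rfl⟩ with rfl | rfl
    · exact ⟨by simp, Or.inl (Or.inr (Or.inl ⟨j, rfl, by simp⟩))⟩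
    · exact ⟨by simp, Or.inl (Or.inr (Or.inr ⟨j, rfl, by simp⟩))⟩

lemma cn_iff {k : ℕ} {u v : Fin k × Fin 6 ⊕ Fin 2} (hne : u ≠ v) :
    (∃ w, (Gk k).Adj u w ∧ (Gk k).Adj v w) ↔
    (∃ (j : Fin k) (i i' : Fin 6), u = Sum.inl (j,i) ∧ v = Sum.inl (j,i') ∧
        (i.val = i'.val + 2 ∨ i'.val = i.val + 2)) ∨
    (∃ (j j' : Fin k) (i : Fin 6), u = Sum.inl (j,i) ∧ v = Sum.inl (j',i) ∧
        (i.val = 0 ∨ i.val = 5)) ∨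
    (∃ j : Fin k, (u = Sum.inr 0 ∧ v = Sum.inl (j,1)) ∨ (v = Sum.inr 0 ∧ u = Sum.inl (j,1)) ∨
      (u = Sum.inr 1 ∧ v = Sum.inl (j,4)) ∨ (v = Sum.inr 1 ∧ u = Sum.inl (j,4))) := by
  constructor
  · rintro ⟨w, h1, h2⟩
    rcases u with ⟨ju, iu⟩ | tu <;> rcases v with ⟨jv, iv⟩ | tv
    · rw [adj_inl_iff] at h1 h2
      rcases h1 with ⟨i1, hi1, rfl⟩ | ⟨rfl, rfl⟩ | ⟨rfl, rfl⟩
      · rcases h2 with ⟨i2, hi2, h⟩ | ⟨rfl, h⟩ | ⟨rfl, h⟩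
        · obtain ⟨rfl, rfl⟩ : ju = jv ∧ i1 = i2 := by simpa [Prod.ext_iff] using h
          have hne' : iu.val ≠ iv.val := fun hh => hne (by simp [Prod.ext_iff, Fin.ext_iff, hh])
          exact Or.inl ⟨ju, iu, iv, rfl, rfl, by omega⟩
        · exact absurd h (by simp)
        · exact absurd h (by simp)
      · rcases h2 with ⟨i2, hi2, h⟩ | ⟨rfl, h⟩ | ⟨rfl, h⟩
        · exact absurd h (by simp)
        · exact Or.inr (Or.inl ⟨ju, jv, 0, rfl, rfl, Or.inl rfl⟩)
        · have hh : (0:Fin 2) = 1 := by simpa using h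
          exact absurd hh (by decide)
      · rcases h2 with ⟨i2, hi2, h⟩ | ⟨rfl, h⟩ | ⟨rfl, h⟩
        · exact absurd h (by simp)
        · have hh : (1:Fin 2) = 0 := by simpa using h
          exact absurd hh (by decide)
        · exact Or.inr (Or.inl ⟨ju, jv, 5, rfl, rfl, Or.inr rfl⟩)
    · rw [adj_inl_iff] at h1
      rw [adj_inr_iff] at h2
      obtain ⟨j2, rfl⟩ := h2
      rcases Fin.exists_fin_two.mp ⟨tv, rfl⟩ with rfl | rfl
      · simp only [if_pos rfl] at h1
        rcases h1 with ⟨i1, hi1, h⟩ | ⟨rfl, h⟩ | ⟨rfl, h⟩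
        · obtain ⟨rfl, rfl⟩ : j2 = ju ∧ (0 : Fin 6) = i1 := by simpa [Prod.ext_iff] using h
          obtain rfl : iu = 1 := by
            have h0 : ((0:Fin 6)).val = 0 := rfl
            exact Fin.ext (by omega)
          exact Or.inr (Or.inr ⟨j2, Or.inr (Or.inl ⟨rfl, rfl⟩)⟩)
        · exact absurd h (by simp)
        · exact absurd h (by simp)
      · simp only [show ((1:Fin 2) = 0) = False by simp, if_false] at h1
        rcases h1 with ⟨i1, hi1, h⟩ | ⟨rfl, h⟩ | ⟨rfl, h⟩
        · obtain ⟨rfl, rfl⟩ : j2 = ju ∧ (5 : Fin 6) = i1 := by simpa [Prod.ext_iff] using h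
          obtain rfl : iu = 4 := by
            have h0 : ((5:Fin 6)).val = 5 := rfl
            have h4 : ((4:Fin 6)).val = 4 := rfl
            exact Fin.ext (by omega)
          exact Or.inr (Or.inr ⟨j2, Or.inr (Or.inr (Or.inr ⟨rfl, rfl⟩))⟩)
        · exact absurd h (by simp)
        · exact absurd h (by simp)
    · rw [adj_inl_iff] at h2
      rw [adj_inr_iff] at h1
      obtain ⟨j2, rfl⟩ := h1
      rcases Fin.exists_fin_two.mp ⟨tu, rfl⟩ with rfl | rfl
      · simp only [if_pos rfl] at h2
        rcases h2 with ⟨i1, hi1, h⟩ | ⟨rfl, h⟩ | ⟨rfl, h⟩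
        · obtain ⟨rfl, rfl⟩ : j2 = jv ∧ (0 : Fin 6) = i1 := by simpa [Prod.ext_iff] using h
          obtain rfl : iv = 1 := by
            have h0 : ((0:Fin 6)).val = 0 := rfl
            exact Fin.ext (by omega)
          exact Or.inr (Or.inr ⟨j2, Or.inl ⟨rfl, rfl⟩⟩)
        · exact absurd h (by simp)
        · exact absurd h (by simp)
      · simp only [show ((1:Fin 2) = 0) = False by simp, if_false] at h2
        rcases h2 with ⟨i1, hi1, h⟩ | ⟨rfl, h⟩ | ⟨rfl, h⟩
        · obtain ⟨rfl, rfl⟩ : j2 = jv ∧ (5 : Fin 6) = i1 := by simpa [Prod.ext_iff] using h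
          obtain rfl : iv = 4 := by
            have h0 : ((5:Fin 6)).val = 5 := rfl
            have h4 : ((4:Fin 6)).val = 4 := rfl
            exact Fin.ext (by omega)
          exact Or.inr (Or.inr ⟨j2, Or.inr (Or.inr (Or.inl ⟨rfl, rfl⟩))⟩)
        · exact absurd h (by simp)
        · exact absurd h (by simp)
    · rw [adj_inr_iff] at h1 h2
      obtain ⟨j1, rfl⟩ := h1
      obtain ⟨j2, h⟩ := h2
      rcases Fin.exists_fin_two.mp ⟨tu, rfl⟩ with rfl | rfl <;>
        rcases Fin.exists_fin_two.mp ⟨tv, rfl⟩ with rfl | rfl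
      · exact absurd rfl hne
      · have hh : j1 = j2 ∧ (0:Fin 6) = 5 := by simpa [Prod.ext_iff] using h
        exact absurd hh.2 (by decide)
      · have hh : j1 = j2 ∧ (5:Fin 6) = 0 := by simpa [Prod.ext_iff] using h
        exact absurd hh.2 (by decide)
      · exact absurd rfl hne
  · rintro (⟨j, i, i', rfl, rfl, hd⟩ | ⟨j, j', i, rfl, rfl, hd⟩ |
      ⟨j, (⟨rfl, rfl⟩ | ⟨rfl, rfl⟩ | ⟨rfl, rfl⟩ | ⟨rfl, rfl⟩)⟩)
    · rcases hd with hd | hd <;>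
      · refine ⟨Sum.inl (j, ⟨min i.val i'.val + 1, by omega⟩), ?_, ?_⟩
        · rw [adj_inl_iff]
          exact Or.inl ⟨⟨min i.val i'.val + 1, by omega⟩, by simp only; omega, rfl⟩
        · rw [adj_inl_iff]
          exact Or.inl ⟨⟨min i.val i'.val + 1, by omega⟩, by simp only; omega, rfl⟩
    · rcases hd with hd | hd
      · obtain rfl : i = 0 := Fin.ext (by simpa using hd)
        refine ⟨Sum.inr 0, ?_, ?_⟩ <;> · rw [adj_inl_iff]; exact Or.inr (Or.inl ⟨rfl, rfl⟩)
      · obtain rfl : i = 5 := Fin.ext (by simpa using hd)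
        refine ⟨Sum.inr 1, ?_, ?_⟩ <;> · rw [adj_inl_iff]; exact Or.inr (Or.inr ⟨rfl, rfl⟩)
    · refine ⟨Sum.inl (j, 0), ?_, ?_⟩
      · rw [adj_inr_iff]; exact ⟨j, by simp⟩
      · rw [adj_inl_iff]; exact Or.inl ⟨0, by decide, rfl⟩
    · refine ⟨Sum.inl (j, 0), ?_, ?_⟩
      · rw [adj_inl_iff]; exact Or.inl ⟨0, by decide, rfl⟩
      · rw [adj_inr_iff]; exact ⟨j, by simp⟩
    · refine ⟨Sum.inl (j, 5), ?_, ?_⟩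
      · rw [adj_inr_iff]; exact ⟨j, by simp⟩
      · rw [adj_inl_iff]; exact Or.inl ⟨5, by decide, rfl⟩
    · refine ⟨Sum.inl (j, 5), ?_, ?_⟩
      · rw [adj_inl_iff]; exact Or.inl ⟨5, by decide, rfl⟩
      · rw [adj_inr_iff]; exact ⟨j, by simp⟩

lemma comp_count {V : Type*} {k : ℕ} (P : Set V) (X : V) (B D F : Fin k → V)
    (hBinj : Function.Injective B) (hDinj : Function.Injective D)
    (hFinj : Function.Injective F)
    (hXB : ∀ j, X ≠ B j) (hXD : ∀ j, X ≠ D j) (hXF : ∀ j, X ≠ F j)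
    (hBD : ∀ j j', B j ≠ D j') (hBF : ∀ j j', B j ≠ F j') (hDF : ∀ j j', D j ≠ F j')
    (h1 : ∀ j, ¬(X ∈ P ∧ B j ∈ P))
    (h2 : ∀ j, ¬(B j ∈ P ∧ D j ∈ P))
    (h3 : ∀ j, ¬(D j ∈ P ∧ F j ∈ P))
    (h4 : ∀ j j', j ≠ j' → ¬(F j ∈ P ∧ F j' ∈ P))
    (m1 : X ∉ P → ∃ j, B j ∈ P)
    (m2 : ∀ j, B j ∉ P → X ∈ P ∨ D j ∈ P)
    (m3 : ∀ j, D j ∉ P → B j ∈ P ∨ F j ∈ P)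
    (m4 : ∀ j, F j ∉ P → D j ∈ P ∨ ∃ j', j' ≠ j ∧ F j' ∈ P) :
    (P ∩ ({X} ∪ Set.range B ∪ Set.range D ∪ Set.range F)).ncard = k + 1 := by
  classical
  by_cases hX : X ∈ P
  · set g : Fin k → V := fun j => if D j ∈ P then D j else F j with hg
    have hdi : ∀ j, D j ∈ P ∨ F j ∈ P := by
      intro j
      by_cases h : D j ∈ P
      · exact Or.inl h
      · rcases m3 j h with hb | hf
        · exact absurd ⟨hX, hb⟩ (h1 j)
        · exact Or.inr hf
    have hginj : Function.Injective g := by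
      intro j j' h
      simp only [hg] at h
      split_ifs at h with p q q
      · exact hDinj h
      · exact absurd h (hDF j j')
      · exact absurd h.symm (hDF j' j)
      · exact hFinj h
    have hgnX : X ∉ Set.range g := by
      rintro ⟨j, hj⟩
      simp only [hg] at hj
      split_ifs at hj
      · exact hXD j hj.symm
      · exact hXF j hj.symm
    have hset : P ∩ ({X} ∪ Set.range B ∪ Set.range D ∪ Set.range F) =
        insert X (Set.range g) := by
      ext u
      simp only [Set.mem_inter_iff, Set.mem_union, Set.mem_singleton_iff, Set.mem_range,
        Set.mem_insert_iff]
      constructor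
      · rintro ⟨hu, ((rfl | ⟨j, rfl⟩) | ⟨j, rfl⟩) | ⟨j, rfl⟩⟩
        · exact Or.inl rfl
        · exact absurd ⟨hX, hu⟩ (h1 j)
        · exact Or.inr ⟨j, by simp [hg, if_pos hu]⟩
        · have hd : D j ∉ P := fun hd => (h3 j) ⟨hd, hu⟩
          exact Or.inr ⟨j, by simp [hg, if_neg hd]⟩
      · rintro (rfl | ⟨j, rfl⟩)
        · exact ⟨hX, Or.inl (Or.inl (Or.inl rfl))⟩
        · by_cases h : D j ∈ P
          · exact ⟨by simpa [hg, if_pos h] using h, by simp [hg, if_pos h]⟩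
          · have hf : F j ∈ P := (hdi j).resolve_left h
            exact ⟨by simpa [hg, if_neg h] using hf, by simp [hg, if_neg h]⟩
    rw [hset, Set.ncard_insert_of_notMem hgnX (Set.toFinite _), ← Set.image_univ,
      Set.ncard_image_of_injective _ hginj, Set.ncard_univ, Nat.card_eq_fintype_card,
      Fintype.card_fin]
  · obtain ⟨j0, hj0⟩ := m1 hX
    have hbd : ∀ j, B j ∈ P ∨ D j ∈ P := by
      intro j
      by_cases h : B j ∈ P
      · exact Or.inl h
      · rcases m2 j h with hx | hd
        · exact absurd hx hX
        · exact Or.inr hd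
    have hFex : ∃ j1, F j1 ∈ P := by
      by_contra h
      push_neg at h
      rcases m4 j0 (h j0) with hd | ⟨j', _, hf⟩
      · exact (h2 j0) ⟨hj0, hd⟩
      · exact h j' hf
    obtain ⟨j1, hj1⟩ := hFex
    set g : Fin k → V := fun j => if B j ∈ P then B j else D j with hg
    have hginj : Function.Injective g := by
      intro j j' h
      simp only [hg] at h
      split_ifs at h with p q q
      · exact hBinj h
      · exact absurd h (hBD j j')
      · exact absurd h.symm (hBD j' j)
      · exact hDinj h
    have hgnF : F j1 ∉ Set.range g := by
      rintro ⟨j, hj⟩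
      simp only [hg] at hj
      split_ifs at hj
      · exact hBF j j1 hj
      · exact hDF j j1 hj
    have hset : P ∩ ({X} ∪ Set.range B ∪ Set.range D ∪ Set.range F) =
        insert (F j1) (Set.range g) := by
      ext u
      simp only [Set.mem_inter_iff, Set.mem_union, Set.mem_singleton_iff, Set.mem_range,
        Set.mem_insert_iff]
      constructor
      · rintro ⟨hu, ((rfl | ⟨j, rfl⟩) | ⟨j, rfl⟩) | ⟨j, rfl⟩⟩
        · exact absurd hu hX
        · exact Or.inr ⟨j, by simp [hg, if_pos hu]⟩
        · have hb : B j ∉ P := fun hb => (h2 j) ⟨hb, hu⟩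
          exact Or.inr ⟨j, by simp [hg, if_neg hb]⟩
        · rcases eq_or_ne j j1 with rfl | hne
          · exact Or.inl rfl
          · exact absurd ⟨hu, hj1⟩ (h4 j j1 hne)
      · rintro (rfl | ⟨j, rfl⟩)
        · exact ⟨hj1, Or.inr ⟨j1, rfl⟩⟩
        · by_cases h : B j ∈ P
          · exact ⟨by simpa [hg, if_pos h] using h, by simp [hg, if_pos h]⟩
          · have hd : D j ∈ P := (hbd j).resolve_left h
            exact ⟨by simpa [hg, if_neg h] using hd, by simp [hg, if_neg h]⟩
    rw [hset, Set.ncard_insert_of_notMem hgnF (Set.toFinite _), ← Set.image_univ,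
      Set.ncard_image_of_injective _ hginj, Set.ncard_univ, Nat.card_eq_fintype_card,
      Fintype.card_fin]

lemma max_mem {V : Type*} {G : SimpleGraph V} {P : Set V}
    (hP : Maximal (IsOpenPacking G) P) {v : V} (hv : v ∉ P) :
    ∃ u ∈ P, u ≠ v ∧ ∃ w, G.Adj u w ∧ G.Adj v w := by
  by_contra h
  have h' : ∀ u ∈ P, u ≠ v → ∀ w, ¬(G.Adj u w ∧ G.Adj v w) := by
    intro u hu hne w hw
    exact h ⟨u, hu, hne, w, hw⟩
  have hpack : IsOpenPacking G (insert v P) := by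
    rintro a ha b hb hab w ⟨h1, h2⟩
    rcases Set.mem_insert_iff.mp ha with ha2 | ha2
    · rcases Set.mem_insert_iff.mp hb with hb2 | hb2
      · exact hab (ha2.trans hb2.symm)
      · subst ha2
        exact h' b hb2 (fun hh => hab hh.symm) w ⟨h2, h1⟩
    · rcases Set.mem_insert_iff.mp hb with hb2 | hb2
      · subst hb2
        exact h' a ha2 hab w ⟨h1, h2⟩
      · exact hP.1 ha2 hb2 hab w ⟨h1, h2⟩
  exact hv (hP.2 hpack (Set.subset_insert v P) (Set.mem_insert v P))

lemma inl_ne {k : ℕ} {j j' : Fin k} {i i' : Fin 6} (h : i ≠ i') :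
    (Sum.inl (j, i) : Fin k × Fin 6 ⊕ Fin 2) ≠ Sum.inl (j', i') := by
  intro hh
  obtain ⟨-, hh2⟩ : j = j' ∧ i = i' := by simpa [Prod.ext_iff] using hh
  exact h hh2

lemma inl_inj {k : ℕ} (i : Fin 6) :
    Function.Injective (fun j : Fin k => (Sum.inl (j, i) : Fin k × Fin 6 ⊕ Fin 2)) := by
  intro a b h
  exact ((by simpa [Prod.ext_iff] using h : a = b ∧ i = i)).1

lemma packing_card {k : ℕ} (P : Set (Fin k × Fin 6 ⊕ Fin 2))
    (hP : Maximal (IsOpenPacking (Gk k)) P) : P.ncard = 2 * (k + 1) := by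
  have pair : ∀ {u v : Fin k × Fin 6 ⊕ Fin 2}, u ∈ P → v ∈ P → u ≠ v →
      ¬(∃ w, (Gk k).Adj u w ∧ (Gk k).Adj v w) := by
    rintro u v hu hv hne ⟨w, h1, h2⟩
    exact hP.1 hu hv hne w ⟨h1, h2⟩
  have adjP : ∀ (j : Fin k) (i i' : Fin 6), (i'.val = i.val + 1 ∨ i.val = i'.val + 1) →
      (Gk k).Adj (Sum.inl (j, i)) (Sum.inl (j, i')) := fun j i i' h =>
    (adj_inl_iff j i _).mpr (Or.inl ⟨i', h, rfl⟩)
  have adjX : ∀ j : Fin k, (Gk k).Adj (Sum.inr 0) (Sum.inl (j, 0)) := fun j =>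
    (adj_inr_iff 0 _).mpr ⟨j, by rw [if_pos rfl]⟩
  have adjY : ∀ j : Fin k, (Gk k).Adj (Sum.inr 1) (Sum.inl (j, 5)) := fun j =>
    (adj_inr_iff 1 _).mpr ⟨j, by rw [if_neg (by decide)]⟩
  -- component 1 : X = inr 0, B j = (j,1), D j = (j,3), F j = (j,5)
  have count1 : (P ∩ ({Sum.inr 0} ∪ Set.range (fun j : Fin k => Sum.inl (j, (1:Fin 6)))
      ∪ Set.range (fun j : Fin k => Sum.inl (j, (3:Fin 6)))
      ∪ Set.range (fun j : Fin k => Sum.inl (j, (5:Fin 6))))).ncard = k + 1 := by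
    apply comp_count P _ _ _ _ (inl_inj 1) (inl_inj 3) (inl_inj 5)
      (fun j => by simp) (fun j => by simp) (fun j => by simp)
      (fun j j' => inl_ne (by decide)) (fun j j' => inl_ne (by decide))
      (fun j j' => inl_ne (by decide))
    · rintro j ⟨hx, hb⟩
      exact pair hx hb (by simp) ⟨Sum.inl (j, 0), adjX j, adjP j 1 0 (by decide)⟩
    · rintro j ⟨hb, hd⟩
      exact pair hb hd (inl_ne (by decide)) ⟨Sum.inl (j, 2), adjP j 1 2 (by decide),
        adjP j 3 2 (by decide)⟩
    · rintro j ⟨hd, hf⟩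
      exact pair hd hf (inl_ne (by decide)) ⟨Sum.inl (j, 4), adjP j 3 4 (by decide),
        adjP j 5 4 (by decide)⟩
    · rintro j j' hjj ⟨hf, hf'⟩
      refine pair hf hf' (fun hh => hjj ?_) ⟨Sum.inr 1, (adjY j).symm, (adjY j').symm⟩
      exact ((by simpa [Prod.ext_iff] using hh : j = j' ∧ True)).1
    · intro hx
      obtain ⟨u, huP, hune, hw⟩ := max_mem hP hx
      rw [cn_iff hune] at hw
      rcases hw with ⟨j', i, i', hu, hv', -⟩ | ⟨j', j'', i, hu, hv', -⟩ |
        ⟨j', (⟨hu, hv'⟩ | ⟨hv', hu⟩ | ⟨hu, hv'⟩ | ⟨hv', hu⟩)⟩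
      · exact absurd hv' (by simp)
      · exact absurd hv' (by simp)
      · exact absurd hv' (by simp)
      · exact ⟨j', hu ▸ huP⟩
      · exact absurd hv' (by simp)
      · exact absurd (by simpa using hv' : (0:Fin 2) = 1) (by decide)
    · intro j hv
      obtain ⟨u, huP, hune, hw⟩ := max_mem hP hv
      rw [cn_iff hune] at hw
      rcases hw with ⟨j', i, i', hu, hv', hd⟩ | ⟨j', j'', i, hu, hv', hd⟩ |
        ⟨j', (⟨hu, hv'⟩ | ⟨hv', hu⟩ | ⟨hu, hv'⟩ | ⟨hv', hu⟩)⟩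
      · obtain ⟨rfl, rfl⟩ : j' = j ∧ i' = 1 := by simpa [Prod.ext_iff, eq_comm] using hv'
        right
        obtain rfl : i = 3 := by
          have e1 : ((1:Fin 6)).val = 1 := rfl
          exact Fin.ext (by simp only [show ((3:Fin 6)).val = 3 from rfl]; omega)
        exact hu ▸ huP
      · obtain ⟨-, rfl⟩ : j'' = j ∧ i = 1 := by simpa [Prod.ext_iff, eq_comm] using hv'
        exact absurd hd (by decide)
      · left; exact hu ▸ huP
      · exact absurd hv' (by simp)
      · exact (inl_ne (by decide) hv').elim
      · exact absurd hv' (by simp)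
    · intro j hv
      obtain ⟨u, huP, hune, hw⟩ := max_mem hP hv
      rw [cn_iff hune] at hw
      rcases hw with ⟨j', i, i', hu, hv', hd⟩ | ⟨j', j'', i, hu, hv', hd⟩ |
        ⟨j', (⟨hu, hv'⟩ | ⟨hv', hu⟩ | ⟨hu, hv'⟩ | ⟨hv', hu⟩)⟩
      · obtain ⟨rfl, rfl⟩ : j' = j ∧ i' = 3 := by simpa [Prod.ext_iff, eq_comm] using hv'
        have e1 : ((3:Fin 6)).val = 3 := rfl
        rcases hd with hd | hd
        · right
          obtain rfl : i = 5 := Fin.ext (by simp only [show ((5:Fin 6)).val = 5 from rfl]; omega)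
          exact hu ▸ huP
        · left
          obtain rfl : i = 1 := Fin.ext (by simp only [show ((1:Fin 6)).val = 1 from rfl]; omega)
          exact hu ▸ huP
      · obtain ⟨-, rfl⟩ : j'' = j ∧ i = 3 := by simpa [Prod.ext_iff, eq_comm] using hv'
        exact absurd hd (by decide)
      · exact (inl_ne (by decide) hv').elim
      · exact absurd hv' (by simp)
      · exact (inl_ne (by decide) hv').elim
      · exact absurd hv' (by simp)
    · intro j hv
      obtain ⟨u, huP, hune, hw⟩ := max_mem hP hv
      rw [cn_iff hune] at hw
      rcases hw with ⟨j', i, i', hu, hv', hd⟩ | ⟨j', j'', i, hu, hv', hd⟩ |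
        ⟨j', (⟨hu, hv'⟩ | ⟨hv', hu⟩ | ⟨hu, hv'⟩ | ⟨hv', hu⟩)⟩
      · obtain ⟨rfl, rfl⟩ : j' = j ∧ i' = 5 := by simpa [Prod.ext_iff, eq_comm] using hv'
        left
        have e1 : ((5:Fin 6)).val = 5 := rfl
        obtain rfl : i = 3 := by
          rcases hd with hd | hd
          · exact absurd hd (by omega)
          · exact Fin.ext (by simp only [show ((3:Fin 6)).val = 3 from rfl]; omega)
        exact hu ▸ huP
      · obtain ⟨rfl, rfl⟩ : j'' = j ∧ i = 5 := by simpa [Prod.ext_iff, eq_comm] using hv'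
        right
        obtain rfl : u = Sum.inl (j', 5) := hu
        refine ⟨j', fun hh => hune ?_, huP⟩
        · exact congrArg (fun t => Sum.inl (t, (5:Fin 6))) hh
      · exact (inl_ne (by decide) hv').elim
      · exact absurd hv' (by simp)
      · exact (inl_ne (by decide) hv').elim
      · exact absurd hv' (by simp)
  -- component 2 : X = inr 1, B j = (j,4), D j = (j,2), F j = (j,0)
  have count2 : (P ∩ ({Sum.inr 1} ∪ Set.range (fun j : Fin k => Sum.inl (j, (4:Fin 6)))
      ∪ Set.range (fun j : Fin k => Sum.inl (j, (2:Fin 6)))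
      ∪ Set.range (fun j : Fin k => Sum.inl (j, (0:Fin 6))))).ncard = k + 1 := by
    apply comp_count P _ _ _ _ (inl_inj 4) (inl_inj 2) (inl_inj 0)
      (fun j => by simp) (fun j => by simp) (fun j => by simp)
      (fun j j' => inl_ne (by decide)) (fun j j' => inl_ne (by decide))
      (fun j j' => inl_ne (by decide))
    · rintro j ⟨hx, hb⟩
      exact pair hx hb (by simp) ⟨Sum.inl (j, 5), adjY j, adjP j 4 5 (by decide)⟩
    · rintro j ⟨hb, hd⟩
      exact pair hb hd (inl_ne (by decide)) ⟨Sum.inl (j, 3), adjP j 4 3 (by decide),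
        adjP j 2 3 (by decide)⟩
    · rintro j ⟨hd, hf⟩
      exact pair hd hf (inl_ne (by decide)) ⟨Sum.inl (j, 1), adjP j 2 1 (by decide),
        adjP j 0 1 (by decide)⟩
    · rintro j j' hjj ⟨hf, hf'⟩
      refine pair hf hf' (fun hh => hjj ?_) ⟨Sum.inr 0, (adjX j).symm, (adjX j').symm⟩
      exact ((by simpa [Prod.ext_iff] using hh : j = j' ∧ True)).1
    · intro hx
      obtain ⟨u, huP, hune, hw⟩ := max_mem hP hx
      rw [cn_iff hune] at hw
      rcases hw with ⟨j', i, i', hu, hv', -⟩ | ⟨j', j'', i, hu, hv', -⟩ |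
        ⟨j', (⟨hu, hv'⟩ | ⟨hv', hu⟩ | ⟨hu, hv'⟩ | ⟨hv', hu⟩)⟩
      · exact absurd hv' (by simp)
      · exact absurd hv' (by simp)
      · exact absurd hv' (by simp)
      · exact absurd (by simpa using hv' : (1:Fin 2) = 0) (by decide)
      · exact absurd hv' (by simp)
      · exact ⟨j', hu ▸ huP⟩
    · intro j hv
      obtain ⟨u, huP, hune, hw⟩ := max_mem hP hv
      rw [cn_iff hune] at hw
      rcases hw with ⟨j', i, i', hu, hv', hd⟩ | ⟨j', j'', i, hu, hv', hd⟩ |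
        ⟨j', (⟨hu, hv'⟩ | ⟨hv', hu⟩ | ⟨hu, hv'⟩ | ⟨hv', hu⟩)⟩
      · obtain ⟨rfl, rfl⟩ : j' = j ∧ i' = 4 := by simpa [Prod.ext_iff, eq_comm] using hv'
        right
        have e1 : ((4:Fin 6)).val = 4 := rfl
        obtain rfl : i = 2 := by
          rcases hd with hd | hd
          · exact absurd hd (by omega)
          · exact Fin.ext (by simp only [show ((2:Fin 6)).val = 2 from rfl]; omega)
        exact hu ▸ huP
      · obtain ⟨-, rfl⟩ : j'' = j ∧ i = 4 := by simpa [Prod.ext_iff, eq_comm] using hv'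
        exact absurd hd (by decide)
      · exact (inl_ne (by decide) hv').elim
      · exact absurd hv' (by simp)
      · left; exact hu ▸ huP
      · exact absurd hv' (by simp)
    · intro j hv
      obtain ⟨u, huP, hune, hw⟩ := max_mem hP hv
      rw [cn_iff hune] at hw
      rcases hw with ⟨j', i, i', hu, hv', hd⟩ | ⟨j', j'', i, hu, hv', hd⟩ |
        ⟨j', (⟨hu, hv'⟩ | ⟨hv', hu⟩ | ⟨hu, hv'⟩ | ⟨hv', hu⟩)⟩
      · obtain ⟨rfl, rfl⟩ : j' = j ∧ i' = 2 := by simpa [Prod.ext_iff, eq_comm] using hv'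
        have e1 : ((2:Fin 6)).val = 2 := rfl
        rcases hd with hd | hd
        · left
          obtain rfl : i = 4 := Fin.ext (by simp only [show ((4:Fin 6)).val = 4 from rfl]; omega)
          exact hu ▸ huP
        · right
          obtain rfl : i = 0 := Fin.ext (by simp only [show ((0:Fin 6)).val = 0 from rfl]; omega)
          exact hu ▸ huP
      · obtain ⟨-, rfl⟩ : j'' = j ∧ i = 2 := by simpa [Prod.ext_iff, eq_comm] using hv'
        exact absurd hd (by decide)
      · exact (inl_ne (by decide) hv').elim
      · exact absurd hv' (by simp)
      · exact (inl_ne (by decide) hv').elim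
      · exact absurd hv' (by simp)
    · intro j hv
      obtain ⟨u, huP, hune, hw⟩ := max_mem hP hv
      rw [cn_iff hune] at hw
      rcases hw with ⟨j', i, i', hu, hv', hd⟩ | ⟨j', j'', i, hu, hv', hd⟩ |
        ⟨j', (⟨hu, hv'⟩ | ⟨hv', hu⟩ | ⟨hu, hv'⟩ | ⟨hv', hu⟩)⟩
      · obtain ⟨rfl, rfl⟩ : j' = j ∧ i' = 0 := by simpa [Prod.ext_iff, eq_comm] using hv'
        left
        have e1 : ((0:Fin 6)).val = 0 := rfl
        obtain rfl : i = 2 := by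
          rcases hd with hd | hd
          · exact Fin.ext (by simp only [show ((2:Fin 6)).val = 2 from rfl]; omega)
          · exact absurd hd (by omega)
        exact hu ▸ huP
      · obtain ⟨rfl, rfl⟩ : j'' = j ∧ i = 0 := by simpa [Prod.ext_iff, eq_comm] using hv'
        right
        obtain rfl : u = Sum.inl (j', 0) := hu
        refine ⟨j', fun hh => hune ?_, huP⟩
        · exact congrArg (fun t => Sum.inl (t, (0:Fin 6))) hh
      · exact (inl_ne (by decide) hv').elim
      · exact absurd hv' (by simp)
      · exact (inl_ne (by decide) hv').elim
      · exact absurd hv' (by simp)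
  set C1 : Set (Fin k × Fin 6 ⊕ Fin 2) :=
    {Sum.inr 0} ∪ Set.range (fun j : Fin k => Sum.inl (j, (1:Fin 6)))
      ∪ Set.range (fun j : Fin k => Sum.inl (j, (3:Fin 6)))
      ∪ Set.range (fun j : Fin k => Sum.inl (j, (5:Fin 6))) with hC1
  set C2 : Set (Fin k × Fin 6 ⊕ Fin 2) :=
    {Sum.inr 1} ∪ Set.range (fun j : Fin k => Sum.inl (j, (4:Fin 6)))
      ∪ Set.range (fun j : Fin k => Sum.inl (j, (2:Fin 6)))
      ∪ Set.range (fun j : Fin k => Sum.inl (j, (0:Fin 6))) with hC2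
  have hcover : C1 ∪ C2 = Set.univ := by
    ext u
    simp only [hC1, hC2, Set.mem_union, Set.mem_singleton_iff, Set.mem_range, Set.mem_univ,
      iff_true]
    rcases u with ⟨j, i⟩ | t
    · fin_cases i
      · exact Or.inr (Or.inr ⟨j, rfl⟩)
      · exact Or.inl (Or.inl (Or.inl (Or.inr ⟨j, rfl⟩)))
      · exact Or.inr (Or.inl (Or.inr ⟨j, rfl⟩))
      · exact Or.inl (Or.inl (Or.inr ⟨j, rfl⟩))
      · exact Or.inr (Or.inl (Or.inl (Or.inr ⟨j, rfl⟩)))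
      · exact Or.inl (Or.inr ⟨j, rfl⟩)
    · fin_cases t
      · exact Or.inl (Or.inl (Or.inl (Or.inl rfl)))
      · exact Or.inr (Or.inl (Or.inl (Or.inl rfl)))
  have hdisj : Disjoint C1 C2 := by
    rw [Set.disjoint_left]
    rintro a ha hb
    simp only [hC1, hC2, Set.mem_union, Set.mem_singleton_iff, Set.mem_range] at ha hb
    rcases ha with ((rfl | ⟨j, rfl⟩) | ⟨j, rfl⟩) | ⟨j, rfl⟩ <;>
      rcases hb with ((h | ⟨j2, h⟩) | ⟨j2, h⟩) | ⟨j2, h⟩ <;>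
        first
        | exact absurd h (by decide)
        | simp at h
        | exact (inl_ne (by decide) h).elim
  have : P = (P ∩ C1) ∪ (P ∩ C2) := by
    rw [← Set.inter_union_distrib_left, hcover, Set.inter_univ]
  rw [this, Set.ncard_union_eq (hdisj.mono Set.inter_subset_right Set.inter_subset_right)
    (Set.toFinite _) (Set.toFinite _), count1, count2]
  ring

lemma cycle_two_nbrs_start {V : Type*} {G : SimpleGraph V} {v : V} {c : G.Walk v v}
    (hc : c.IsCycle) : ∃ u₁ u₂, u₁ ≠ u₂ ∧ G.Adj v u₁ ∧ G.Adj v u₂ ∧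
      u₁ ∈ c.support ∧ u₂ ∈ c.support := by
  cases c with
  | nil => exact absurd hc (Walk.IsCycle.not_of_nil)
  | @cons _ b _ h p =>
    obtain ⟨x, q, h2, heq⟩ := Walk.exists_cons_eq_concat h p
    have hxmem : x ∈ (Walk.cons h p).support := by
      rw [heq, Walk.support_concat]
      exact List.mem_append.mpr (Or.inl q.end_mem_support)
    refine ⟨b, x, ?_, h, h2.symm, ?_, hxmem⟩
    · intro hbx
      subst hbx
      have hE : s(v, b) :: p.edges = q.edges ++ [s(b, v)] := by
        have := congrArg Walk.edges heq
        rwa [Walk.edges_cons, Walk.edges_concat, List.concat_eq_append] at this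
      have hnd : (s(v, b) :: p.edges).Nodup := by
        have := hc.isCircuit.isTrail.edges_nodup
        rwa [Walk.edges_cons] at this
      have hlen : 3 ≤ (Walk.cons h p).length := hc.three_le_length
      cases hqe : q.edges with
      | nil =>
        rw [hqe, List.nil_append] at hE
        have : (Walk.cons h p).edges.length = 1 := by
          rw [Walk.edges_cons, hE]
          rfl
        rw [Walk.length_edges] at this
        omega
      | cons e es =>
        rw [hqe, List.cons_append] at hE
        obtain ⟨he, hpe⟩ := List.cons.injEq _ _ _ _ ▸ hE
        have : s(b, v) ∈ p.edges := by
          rw [hpe]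
          exact List.mem_append.mpr (Or.inr (List.mem_singleton_self _))
        rw [List.nodup_cons] at hnd
        exact hnd.1 (by rwa [Sym2.eq_swap])
    · rw [Walk.support_cons]
      exact List.mem_cons_of_mem _ p.start_mem_support

lemma cycle_two_nbrs {V : Type*} [DecidableEq V] {G : SimpleGraph V} {a : V} {c : G.Walk a a}
    (hc : c.IsCycle) {v : V} (hv : v ∈ c.support) : ∃ u₁ u₂, u₁ ≠ u₂ ∧ G.Adj v u₁ ∧
      G.Adj v u₂ ∧ u₁ ∈ c.support ∧ u₂ ∈ c.support := by
  obtain ⟨u₁, u₂, hne, h1, h2, hm1, hm2⟩ := cycle_two_nbrs_start (hc.rotate hv)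
  have hmem : ∀ u, u ∈ (c.rotate v hv).support → u ∈ c.support := by
    intro u hu
    rw [(c.rotate v hv).support_eq_cons] at hu
    rcases List.mem_cons.mp hu with rfl | hu
    · exact hv
    · have := (Walk.support_rotate c v hv).mem_iff.mp hu
      rw [c.support_eq_cons]
      exact List.mem_cons_of_mem _ this
  exact ⟨u₁, u₂, hne, h1, h2, hmem _ hm1, hmem _ hm2⟩

lemma cycle_ncard_support {V : Type*} [DecidableEq V] {G : SimpleGraph V} {a : V}
    {c : G.Walk a a} (hc : c.IsCycle) : {u | u ∈ c.support}.ncard = c.length := by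
  cases c with
  | nil => exact absurd hc (Walk.IsCycle.not_of_nil)
  | @cons _ b _ h p =>
    have hnd : p.support.Nodup := by
      have := hc.support_nodup
      rwa [Walk.support_cons, List.tail_cons] at this
    have hset : {u | u ∈ (Walk.cons h p).support} = ↑p.support.toFinset := by
      ext u
      simp only [Set.mem_setOf_eq, Walk.support_cons, List.mem_cons, Finset.coe_sort_coe,
        List.coe_toFinset, Set.mem_setOf_eq]
      constructor
      · rintro (rfl | hu)
        · exact p.end_mem_support
        · exact hu
      · exact fun hu => Or.inr hu
    rw [hset, Set.ncard_coe_finset, List.toFinset_card_of_nodup hnd,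
      Walk.length_support, Walk.length_cons]

lemma big_support {k : ℕ} (S : Set (Fin k × Fin 6 ⊕ Fin 2))
    (hS : ∀ v ∈ S, ∃ u₁ u₂, u₁ ≠ u₂ ∧ (Gk k).Adj v u₁ ∧ (Gk k).Adj v u₂ ∧ u₁ ∈ S ∧ u₂ ∈ S)
    (hne : S.Nonempty) : 14 ≤ S.ncard := by
  have step_mid : ∀ (j : Fin k) (i a b : Fin 6), a.val + 1 = i.val → i.val + 1 = b.val →
      Sum.inl (j, i) ∈ S → Sum.inl (j, a) ∈ S ∧ Sum.inl (j, b) ∈ S := by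
    intro j i a b ha hb hmem
    obtain ⟨u₁, u₂, hneu, h1, h2, hs1, hs2⟩ := hS _ hmem
    have claim : ∀ u, (Gk k).Adj (Sum.inl (j, i)) u → u = Sum.inl (j, a) ∨ u = Sum.inl (j, b) := by
      intro u hu
      rw [adj_inl_iff] at hu
      rcases hu with ⟨i', hi', rfl⟩ | ⟨rfl, rfl⟩ | ⟨rfl, rfl⟩
      · rcases hi' with hi' | hi'
        · right; exact congrArg _ (congrArg _ (Fin.ext (by omega)))
        · left; exact congrArg _ (congrArg _ (Fin.ext (by omega)))
      · have h0 : ((0:Fin 6)).val = 0 := rfl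
        omega
      · have h5 : ((5:Fin 6)).val = 5 := rfl
        have : b.val < 6 := b.isLt
        omega
    rcases claim u₁ h1 with rfl | rfl <;> rcases claim u₂ h2 with rfl | rfl
    · exact absurd rfl hneu
    · exact ⟨hs1, hs2⟩
    · exact ⟨hs2, hs1⟩
    · exact absurd rfl hneu
  have step0 : ∀ j : Fin k, Sum.inl (j, (0:Fin 6)) ∈ S →
      Sum.inr 0 ∈ S ∧ Sum.inl (j, (1:Fin 6)) ∈ S := by
    intro j hmem
    obtain ⟨u₁, u₂, hneu, h1, h2, hs1, hs2⟩ := hS _ hmem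
    have claim : ∀ u, (Gk k).Adj (Sum.inl (j, (0:Fin 6))) u →
        u = Sum.inr 0 ∨ u = Sum.inl (j, (1:Fin 6)) := by
      intro u hu
      rw [adj_inl_iff] at hu
      rcases hu with ⟨i', hi', rfl⟩ | ⟨-, rfl⟩ | ⟨h5, rfl⟩
      · right
        refine congrArg _ (congrArg _ (Fin.ext ?_))
        have h0 : ((0:Fin 6)).val = 0 := rfl
        have h1' : ((1:Fin 6)).val = 1 := rfl
        omega
      · exact Or.inl rfl
      · exact absurd h5 (by decide)
    rcases claim u₁ h1 with rfl | rfl <;> rcases claim u₂ h2 with rfl | rfl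
    · exact absurd rfl hneu
    · exact ⟨hs1, hs2⟩
    · exact ⟨hs2, hs1⟩
    · exact absurd rfl hneu
  have step5 : ∀ j : Fin k, Sum.inl (j, (5:Fin 6)) ∈ S →
      Sum.inl (j, (4:Fin 6)) ∈ S ∧ Sum.inr 1 ∈ S := by
    intro j hmem
    obtain ⟨u₁, u₂, hneu, h1, h2, hs1, hs2⟩ := hS _ hmem
    have claim : ∀ u, (Gk k).Adj (Sum.inl (j, (5:Fin 6))) u →
        u = Sum.inl (j, (4:Fin 6)) ∨ u = Sum.inr 1 := by
      intro u hu
      rw [adj_inl_iff] at hu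
      rcases hu with ⟨i', hi', rfl⟩ | ⟨h0, rfl⟩ | ⟨-, rfl⟩
      · left
        refine congrArg _ (congrArg _ (Fin.ext ?_))
        have h5 : ((5:Fin 6)).val = 5 := rfl
        have h4 : ((4:Fin 6)).val = 4 := rfl
        have := i'.isLt
        omega
      · exact absurd h0 (by decide)
      · exact Or.inr rfl
    rcases claim u₁ h1 with rfl | rfl <;> rcases claim u₂ h2 with rfl | rfl
    · exact absurd rfl hneu
    · exact ⟨hs1, hs2⟩
    · exact ⟨hs2, hs1⟩
    · exact absurd rfl hneu
  have stepX : Sum.inr 0 ∈ S → ∃ j j' : Fin k, j ≠ j' ∧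
      Sum.inl (j, (0:Fin 6)) ∈ S ∧ Sum.inl (j', (0:Fin 6)) ∈ S := by
    intro hmem
    obtain ⟨u₁, u₂, hneu, h1, h2, hs1, hs2⟩ := hS _ hmem
    rw [adj_inr_iff] at h1 h2
    obtain ⟨j1, rfl⟩ := h1
    obtain ⟨j2, rfl⟩ := h2
    rw [if_pos rfl] at hneu hs1 hs2
    refine ⟨j1, j2, fun hh => hneu (by rw [hh]), hs1, hs2⟩
  -- every path vertex in S implies its whole path is in S
  have down : ∀ (j : Fin k) (i : Fin 6), Sum.inl (j, i) ∈ S → Sum.inl (j, (0:Fin 6)) ∈ S := by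
    intro j i hmem
    fin_cases i
    · exact hmem
    · exact (step_mid j 1 0 2 rfl rfl hmem).1
    · have := (step_mid j 2 1 3 rfl rfl hmem).1
      exact (step_mid j 1 0 2 rfl rfl this).1
    · have h3 := (step_mid j 3 2 4 rfl rfl hmem).1
      have h2 := (step_mid j 2 1 3 rfl rfl h3).1
      exact (step_mid j 1 0 2 rfl rfl h2).1
    · have h4 := (step_mid j 4 3 5 rfl rfl hmem).1
      have h3 := (step_mid j 3 2 4 rfl rfl h4).1
      have h2 := (step_mid j 2 1 3 rfl rfl h3).1
      exact (step_mid j 1 0 2 rfl rfl h2).1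
    · have h5 := (step5 j hmem).1
      have h4 := (step_mid j 4 3 5 rfl rfl h5).1
      have h3 := (step_mid j 3 2 4 rfl rfl h4).1
      have h2 := (step_mid j 2 1 3 rfl rfl h3).1
      exact (step_mid j 1 0 2 rfl rfl h2).1
  have up : ∀ j : Fin k, Sum.inl (j, (0:Fin 6)) ∈ S → ∀ i : Fin 6, Sum.inl (j, i) ∈ S := by
    intro j h0 i
    have h1 := (step0 j h0).2
    have h2 := (step_mid j 1 0 2 rfl rfl h1).2
    have h3 := (step_mid j 2 1 3 rfl rfl h2).2
    have h4 := (step_mid j 3 2 4 rfl rfl h3).2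
    have h5 := (step_mid j 4 3 5 rfl rfl h4).2
    fin_cases i <;> assumption
  have hX : Sum.inr 0 ∈ S := by
    obtain ⟨v, hv⟩ := hne
    rcases v with ⟨j, i⟩ | t
    · exact (step0 j (down j i hv)).1
    · rcases Fin.exists_fin_two.mp ⟨t, rfl⟩ with rfl | rfl
      · exact hv
      · -- y ∈ S : get a neighbor f_j ∈ S
        obtain ⟨u₁, u₂, hneu, h1, h2, hs1, hs2⟩ := hS _ hv
        rw [adj_inr_iff] at h1
        obtain ⟨j1, rfl⟩ := h1
        rw [if_neg (by decide)] at hs1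
        exact (step0 j1 (down j1 5 hs1)).1
  obtain ⟨j, j', hjj, hj0, hj'0⟩ := stepX hX
  have hall : ∀ i : Fin 6, Sum.inl (j, i) ∈ S := up j hj0
  have hall' : ∀ i : Fin 6, Sum.inl (j', i) ∈ S := up j' hj'0
  have hY : Sum.inr 1 ∈ S := (step5 j (hall 5)).2
  set φ : Fin 14 → Fin k × Fin 6 ⊕ Fin 2 := fun n =>
    if h : n.val < 6 then Sum.inl (j, ⟨n.val, h⟩)
    else if h2 : n.val < 12 then Sum.inl (j', ⟨n.val - 6, by omega⟩)
    else if n.val = 12 then Sum.inr 0 else Sum.inr 1 with hφ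
  have hφinj : Function.Injective φ := by
    intro a b h
    simp only [hφ] at h
    split_ifs at h <;>
      simp only [Sum.inl.injEq, Sum.inr.injEq, Prod.mk.injEq, Fin.mk.injEq, reduceCtorEq] at h <;>
      first
      | exact absurd h.1 hjj
      | exact absurd h.1 hjj.symm
      | exact absurd h (by decide)
      | exact Fin.ext (by omega)
  have hφsub : Set.range φ ⊆ S := by
    rintro u ⟨n, rfl⟩
    simp only [hφ]
    split_ifs
    · exact hall _
    · exact hall' _
    · exact hX
    · exact hY
  calc (14:ℕ) = (Set.range φ).ncard := by
        rw [← Set.image_univ, Set.ncard_image_of_injective _ hφinj, Set.ncard_univ,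
          Nat.card_eq_fintype_card, Fintype.card_fin]
    _ ≤ S.ncard := Set.ncard_le_ncard hφsub (Set.toFinite _)

lemma GkP {k : ℕ} (j : Fin k) (i i' : Fin 6) (h : i'.val = i.val + 1 ∨ i.val = i'.val + 1) :
    (Gk k).Adj (Sum.inl (j, i)) (Sum.inl (j, i')) :=
  (adj_inl_iff j i _).mpr (Or.inl ⟨i', h, rfl⟩)

lemma GkX {k : ℕ} (j : Fin k) : (Gk k).Adj (Sum.inr 0) (Sum.inl (j, 0)) :=
  (adj_inr_iff 0 _).mpr ⟨j, by rw [if_pos rfl]⟩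

lemma GkY {k : ℕ} (j : Fin k) : (Gk k).Adj (Sum.inr 1) (Sum.inl (j, 5)) :=
  (adj_inr_iff 1 _).mpr ⟨j, by rw [if_neg (by decide)]⟩

theorem stmt19' (k : ℕ) (hk : 2 ≤ k) :
    (Gk k).egirth = 14 ∧ (Gk k).minDegree = 2 := by
  set j0 : Fin k := ⟨0, by omega⟩ with hj0
  set j1 : Fin k := ⟨1, by omega⟩ with hj1
  have hj : j0 ≠ j1 := by simp [hj0, hj1, Fin.ext_iff]
  set w14 : (Gk k).Walk (Sum.inr 0) (Sum.inr 0) :=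
    Walk.cons (GkX j0) (Walk.cons (GkP j0 0 1 (by decide)) (Walk.cons (GkP j0 1 2 (by decide))
    (Walk.cons (GkP j0 2 3 (by decide)) (Walk.cons (GkP j0 3 4 (by decide))
    (Walk.cons (GkP j0 4 5 (by decide)) (Walk.cons (GkY j0).symm (Walk.cons (GkY j1)
    (Walk.cons (GkP j1 5 4 (by decide)) (Walk.cons (GkP j1 4 3 (by decide))
    (Walk.cons (GkP j1 3 2 (by decide)) (Walk.cons (GkP j1 2 1 (by decide))
    (Walk.cons (GkP j1 1 0 (by decide)) (Walk.cons (GkX j1).symm Walk.nil))))))))))))) with hw14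
  have hlen : w14.length = 14 := rfl
  have hcyc : w14.IsCycle := by
    rw [Walk.isCycle_def]
    refine ⟨⟨?_⟩, by simp [hw14], ?_⟩
    · simp only [hw14, Walk.edges_cons, Walk.edges_nil]
      simp [List.nodup_cons, Prod.ext_iff, Fin.ext_iff, hj, Sym2.eq_iff]
    · simp only [hw14, Walk.support_cons, Walk.support_nil, List.tail_cons]
      simp [List.nodup_cons, Prod.ext_iff, Fin.ext_iff, hj]
  constructor
  · apply le_antisymm
    · have h1 : (Gk k).egirth ≤ (w14.length : ℕ∞) := by
        rw [SimpleGraph.egirth]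
        exact iInf_le_of_le _ (iInf_le_of_le w14 (iInf_le _ hcyc))
      rw [hlen] at h1
      exact_mod_cast h1
    · rw [le_egirth]
      intro a w hw
      have h14 : 14 ≤ ({u | u ∈ w.support} : Set _).ncard := by
        apply big_support _ _ ⟨a, w.start_mem_support⟩
        intro v hv
        obtain ⟨u₁, u₂, hne, h1, h2, hm1, hm2⟩ := cycle_two_nbrs hw hv
        exact ⟨u₁, u₂, hne, h1, h2, hm1, hm2⟩
      rw [cycle_ncard_support hw] at h14
      exact_mod_cast Nat.cast_le.mpr h14
  · have hdeg : (Gk k).degree (Sum.inl (j0, 1)) = 2 := by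
      have hnb : (Gk k).neighborFinset (Sum.inl (j0, 1)) =
          {Sum.inl (j0, 0), Sum.inl (j0, 2)} := by
        ext u
        simp only [mem_neighborFinset, Finset.mem_insert, Finset.mem_singleton]
        rw [adj_inl_iff]
        constructor
        · rintro (⟨i', hi', rfl⟩ | ⟨h, -⟩ | ⟨h, -⟩)
          · have e1 : ((1:Fin 6)).val = 1 := rfl
            rcases hi' with hi' | hi'
            · right
              exact congrArg _ (congrArg _ (Fin.ext
                (by simp only [show ((2:Fin 6)).val = 2 from rfl]; omega)))
            · left
              exact congrArg _ (congrArg _ (Fin.ext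
                (by simp only [show ((0:Fin 6)).val = 0 from rfl]; omega)))
          · exact absurd h (by decide)
          · exact absurd h (by decide)
        · rintro (rfl | rfl)
          · exact Or.inl ⟨0, by decide, rfl⟩
          · exact Or.inl ⟨2, by decide, rfl⟩
      rw [← card_neighborFinset_eq_degree, hnb]
      rw [Finset.card_pair (inl_ne (by decide))]
    apply le_antisymm
    · exact le_trans (minDegree_le_degree _ _) (le_of_eq hdeg)
    · apply le_minDegree_of_forall_le_degree
      intro v
      rw [← card_neighborFinset_eq_degree]
      have two_le : ∀ (a b : Fin k × Fin 6 ⊕ Fin 2), a ≠ b →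
          (Gk k).Adj v a → (Gk k).Adj v b → 2 ≤ ((Gk k).neighborFinset v).card := by
        intro a b hne ha hb
        have h1 : 1 < ((Gk k).neighborFinset v).card :=
          Finset.one_lt_card.mpr ⟨a, (mem_neighborFinset _ _ _).mpr ha, b,
            (mem_neighborFinset _ _ _).mpr hb, hne⟩
        omega
      rcases v with ⟨j, i⟩ | t
      · fin_cases i
        · exact two_le _ _ (by simp) (GkX j).symm (GkP j 0 1 (by decide))
        · exact two_le _ _ (inl_ne (by decide)) (GkP j 1 0 (by decide)) (GkP j 1 2 (by decide))
        · exact two_le _ _ (inl_ne (by decide)) (GkP j 2 1 (by decide)) (GkP j 2 3 (by decide))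
        · exact two_le _ _ (inl_ne (by decide)) (GkP j 3 2 (by decide)) (GkP j 3 4 (by decide))
        · exact two_le _ _ (inl_ne (by decide)) (GkP j 4 3 (by decide)) (GkP j 4 5 (by decide))
        · exact two_le _ _ (by simp) (GkP j 5 4 (by decide)) (GkY j).symm
      · fin_cases t
        · refine two_le _ _ (fun hh => hj ?_) (GkX j0) (GkX j1)
          obtain ⟨h1, -⟩ : j0 = j1 ∧ (0:Fin 6) = (0:Fin 6) := by simpa [Prod.ext_iff] using hh
          exact h1
        · refine two_le _ _ (fun hh => hj ?_) (GkY j0) (GkY j1)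
          obtain ⟨h1, -⟩ : j0 = j1 ∧ (5:Fin 6) = (5:Fin 6) := by simpa [Prod.ext_iff] using hh
          exact h1

theorem stmt19 (k : ℕ) (hk : 2 ≤ k) :
    (Gk k).egirth = 14 ∧ (Gk k).minDegree = 2 ∧
    ∀ P, Maximal (IsOpenPacking (Gk k)) P → P.ncard = 2 * (k + 1) := by
  obtain ⟨h1, h2⟩ := stmt19' k hk
  exact ⟨h1, h2, fun P hP => packing_card P hP⟩
end
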